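/- arXiv:1910.06891 — 4 statements merged into one kernel-verified Lean document; each statement's English description precedes it below -/
import Mathlib

section
/- Let 0 < p ≤ 1 and let μ : ℕ → [0,∞) be a nonincreasing sequence with ∑_{j≥0} μ_j^p/(1+j)^p < ∞. Then the infinite diagonal matrix M with diagonal entries μ_j belongs to ℓ∞⊗_pℓ∞ and ‖M‖_{ℓ∞⊗_pℓ∞}^p ≤ 2 ∑_{j≥0} μ_j^p/(1+j)^p. -/
open scoped BigOperators

/-- The sup norm of a vector/sequence of complex numbers. -/
noncomputable def supNorm {ι : Type*} (x : ι → ℂ) : ℝ := ⨆ i, ‖x i‖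

/-- The set of values `(∑ₙ ‖xₙ‖_∞^p ‖yₙ‖_∞^p)^(1/p)` over all representations
`M j k = ∑ₙ xₙ(j) yₙ(k)` of the matrix `M` as a sum of rank-one matrices with
bounded rows/columns.  `M` lies in `ℓ∞ ⊗_p ℓ∞` iff this set is nonempty, and
`‖M‖_{ℓ∞⊗_pℓ∞}` is its infimum. -/
noncomputable def tensorReprVals {ι : Type*} (p : ℝ) (M : ι → ι → ℂ) : Set ℝ :=
  {c | ∃ x y : ℕ → ι → ℂ,
    (∀ n, BddAbove (Set.range fun i => ‖x n i‖)) ∧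
    (∀ n, BddAbove (Set.range fun i => ‖y n i‖)) ∧
    Summable (fun n => supNorm (x n) ^ p * supNorm (y n) ^ p) ∧
    (∀ i j, HasSum (fun n => x n i * y n j) (M i j)) ∧
    c = (∑' n, supNorm (x n) ^ p * supNorm (y n) ^ p) ^ (1 / p)}

namespace Stmt2Aux

open Finset Filter

/-- root of unity `exp(2πi j/N)` -/
noncomputable def w (N j : ℕ) : ℂ :=
  Complex.exp ((2 * Real.pi * (j / N) : ℝ) * Complex.I)

lemma abs_w (N j : ℕ) : ‖w N j‖ = 1 :=
  Complex.norm_exp_ofReal_mul_I _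

lemma w_ne_zero (N j : ℕ) : w N j ≠ 0 := Complex.exp_ne_zero _

lemma w_mul_inv (N i j : ℕ) :
    w N i * (w N j)⁻¹ =
      Complex.exp ((2 * Real.pi * (((i : ℝ) - j) / N) : ℝ) * Complex.I) := by
  rw [w, w, ← Complex.exp_neg, ← Complex.exp_add]
  congr 1
  push_cast
  ring

lemma w_pow_eq_one (N i j : ℕ) (hN : N ≠ 0) :
    (w N i * (w N j)⁻¹) ^ N = 1 := by
  rw [w_mul_inv, ← Complex.exp_nat_mul]
  have h1 : (N : ℂ) ≠ 0 := Nat.cast_ne_zero.mpr hN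
  have h1' : (N : ℝ) ≠ 0 := Nat.cast_ne_zero.mpr hN
  have h2 : ((N : ℕ) : ℂ) * (((2 * Real.pi * (((i : ℝ) - j) / (N : ℝ))) : ℝ) * Complex.I)
      = (((i : ℤ) - (j : ℤ) : ℤ) : ℂ) * (2 * Real.pi * Complex.I) := by
    push_cast
    field_simp
  rw [h2, Complex.exp_int_mul_two_pi_mul_I]

lemma w_ne_one (N i j : ℕ) (hij : i ≠ j) (hi : i < j + N) (hj : j < i + N) :
    w N i * (w N j)⁻¹ ≠ 1 := by
  have hN : 0 < N := by omega
  have hN' : (0:ℝ) < N := by exact_mod_cast hN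
  rw [w_mul_inv]
  intro h
  rw [Complex.exp_eq_one_iff] at h
  obtain ⟨n, hn⟩ := h
  have hI : (Complex.I : ℂ) ≠ 0 := Complex.I_ne_zero
  have h2π : (0:ℝ) < 2 * Real.pi := by positivity
  have h' : ((2 * Real.pi * (((i : ℝ) - j) / (N : ℝ)) : ℝ) : ℂ) * Complex.I
      = (((n : ℝ) * (2 * Real.pi) : ℝ) : ℂ) * Complex.I := by
    rw [hn]; push_cast; ring
  have hre : (2 * Real.pi * (((i : ℝ) - j) / (N : ℝ)) : ℝ)
      = (n : ℝ) * (2 * Real.pi) := by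
    exact_mod_cast mul_right_cancel₀ hI h'
  have hx : ((i : ℝ) - j) / (N : ℝ) = (n : ℝ) := by
    have hre' : (2 * Real.pi) * (((i : ℝ) - j) / (N : ℝ))
        = (2 * Real.pi) * (n : ℝ) := by linarith [hre]
    exact mul_left_cancel₀ h2π.ne' hre'
  have key : ((i : ℝ) - j) = n * (N : ℝ) := by
    field_simp at hx
    linarith
  rcases eq_or_ne n 0 with rfl | hn0
  · simp at key
    exact hij (by exact_mod_cast sub_eq_zero.mp key)
  · have hi' : (i : ℝ) < (j : ℝ) + N := by exact_mod_cast hi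
    have hj' : (j : ℝ) < (i : ℝ) + N := by exact_mod_cast hj
    have habs : |((i : ℝ) - j)| < (N : ℝ) := by
      rw [abs_sub_lt_iff]; constructor <;> linarith
    have hn1 : (1 : ℝ) ≤ |(n : ℝ)| := by
      exact_mod_cast Int.one_le_abs hn0
    have : (N : ℝ) ≤ |((i : ℝ) - j)| := by
      rw [key, abs_mul, abs_of_pos hN']
      nlinarith
    linarith

lemma geom_zero {z : ℂ} (hz1 : z ≠ 1) {N : ℕ} (hzN : z ^ N = 1) :
    ∑ t ∈ range N, z ^ t = 0 := by
  rw [geom_sum_eq hz1, hzN, sub_self, zero_div]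

lemma ciSup_eq_of_le_of_attained {f : ℕ → ℝ} {v : ℝ} (h : ∀ j, f j ≤ v) (j₀ : ℕ)
    (hj : f j₀ = v) : (⨆ j, f j) = v := by
  apply le_antisymm (ciSup_le h)
  have hb : BddAbove (Set.range f) := ⟨v, by rintro x ⟨j, rfl⟩; exact h j⟩
  exact hj ▸ le_ciSup hb j₀

lemma indicator_fiber_sum (g : ℝ) (N : ℕ) :
    ∑' t : ℕ, (if t < N then g else 0) = (N : ℝ) * g := by
  rw [tsum_eq_sum (s := range N) (by
    intro t ht
    rw [if_neg]
    simpa using ht)]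
  rw [Finset.sum_congr rfl (fun t ht => if_pos (Finset.mem_range.mp ht))]
  simp [Finset.sum_const, nsmul_eq_mul]

lemma indicator_fiber_summable (g : ℝ) (N : ℕ) :
    Summable (fun t : ℕ => if t < N then g else 0) := by
  apply summable_of_ne_finset_zero (s := range N)
  intro t ht
  rw [if_neg]
  simpa using ht

lemma indicator_summable (g : ℕ → ℝ) (N : ℕ → ℕ) (hg : ∀ m, 0 ≤ g m)
    (hsg : Summable (fun m : ℕ => (N m : ℝ) * g m)) :
    Summable (fun mt : ℕ × ℕ => if mt.2 < N mt.1 then g mt.1 else 0) := by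
  rw [summable_prod_of_nonneg (by
    intro mt
    dsimp only
    split
    · exact hg _
    · exact le_rfl)]
  refine ⟨fun m => indicator_fiber_summable (g m) (N m), ?_⟩
  apply hsg.congr
  intro m
  exact (indicator_fiber_sum (g m) (N m)).symm

lemma indicator_tsum (g : ℕ → ℝ) (N : ℕ → ℕ) (hg : ∀ m, 0 ≤ g m)
    (hsg : Summable (fun m : ℕ => (N m : ℝ) * g m)) :
    ∑' mt : ℕ × ℕ, (if mt.2 < N mt.1 then g mt.1 else 0)
      = ∑' m : ℕ, (N m : ℝ) * g m := by
  rw [Summable.tsum_prod' (indicator_summable g N hg hsg)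
    (fun m => indicator_fiber_summable (g m) (N m))]
  exact tsum_congr fun m => indicator_fiber_sum (g m) (N m)

/-! ### The dyadic-block rank-one decomposition of the diagonal matrix -/

/-- `j` belongs to the `k`-th dyadic block `[2^k - 1, 2^(k+1) - 1)`. -/
def inBlock (k j : ℕ) : Prop := Nat.log 2 (j + 1) = k

instance (k j : ℕ) : Decidable (inBlock k j) := by unfold inBlock; infer_instance

lemma inBlock_iff {k j : ℕ} : inBlock k j ↔ 2 ^ k ≤ j + 1 ∧ j + 1 < 2 ^ (k + 1) := by
  unfold inBlock
  exact Nat.log_eq_iff (Or.inr ⟨one_lt_two, Nat.succ_ne_zero j⟩)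

lemma inBlock_self (k : ℕ) : inBlock k (2 ^ k - 1) := by
  rw [inBlock_iff]
  have h1 : 1 ≤ 2 ^ k := Nat.one_le_two_pow
  have h2 : (2:ℕ) ^ (k+1) = 2 ^ k + 2 ^ k := by ring
  omega

noncomputable def Xv (μ : ℕ → ℝ) (kt : ℕ × ℕ) (j : ℕ) : ℂ :=
  if kt.2 < 2 ^ kt.1 ∧ inBlock kt.1 j then
    ((μ j / ((2 ^ kt.1 : ℕ) : ℝ) : ℝ) : ℂ) * (w (2 ^ kt.1) j) ^ kt.2 else 0

noncomputable def Yv (kt : ℕ × ℕ) (j : ℕ) : ℂ :=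
  if kt.2 < 2 ^ kt.1 ∧ inBlock kt.1 j then ((w (2 ^ kt.1) j) ^ kt.2)⁻¹ else 0

lemma abs_Xv (μ : ℕ → ℝ) (hnn : ∀ j, 0 ≤ μ j) (k t j : ℕ) :
    ‖Xv μ (k, t) j‖
      = if t < 2 ^ k ∧ inBlock k j then μ j / ((2 ^ k : ℕ) : ℝ) else 0 := by
  unfold Xv
  split
  · rw [norm_mul, norm_pow, abs_w, one_pow, mul_one, Complex.norm_real, Real.norm_eq_abs,
      abs_of_nonneg (div_nonneg (hnn j) (by positivity))]
  · simp

lemma abs_Yv (k t j : ℕ) :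
    ‖Yv (k, t) j‖ = if t < 2 ^ k ∧ inBlock k j then 1 else 0 := by
  unfold Yv
  split
  · rw [norm_inv, norm_pow, abs_w, one_pow, inv_one]
  · simp


/-- the leading value of block `k` -/
noncomputable def vmax (μ : ℕ → ℝ) (k : ℕ) : ℝ := μ (2 ^ k - 1) / ((2 ^ k : ℕ) : ℝ)

lemma vmax_nonneg (μ : ℕ → ℝ) (hnn : ∀ j, 0 ≤ μ j) (k : ℕ) : 0 ≤ vmax μ k :=
  div_nonneg (hnn _) (by positivity)

lemma abs_Xv_le (μ : ℕ → ℝ) (hnn : ∀ j, 0 ≤ μ j) (hmono : Antitone μ) (k t j : ℕ) :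
    ‖Xv μ (k, t) j‖ ≤ vmax μ k := by
  rw [abs_Xv μ hnn]
  split
  · next h =>
    have hj : 2 ^ k - 1 ≤ j := by
      have := (inBlock_iff.mp h.2).1
      omega
    unfold vmax
    exact (div_le_div_iff_of_pos_right (by positivity)).mpr (hmono hj)
  · exact vmax_nonneg μ hnn k

lemma supNorm_Xv (μ : ℕ → ℝ) (hnn : ∀ j, 0 ≤ μ j) (hmono : Antitone μ) (k t : ℕ)
    (ht : t < 2 ^ k) : supNorm (Xv μ (k, t)) = vmax μ k := by
  apply ciSup_eq_of_le_of_attained (abs_Xv_le μ hnn hmono k t) (2 ^ k - 1)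
  rw [abs_Xv μ hnn, if_pos ⟨ht, inBlock_self k⟩]
  rfl

lemma supNorm_Xv_zero (μ : ℕ → ℝ) (k t : ℕ) (ht : ¬ t < 2 ^ k) :
    supNorm (Xv μ (k, t)) = 0 := by
  unfold supNorm
  have : ∀ j, ‖Xv μ (k, t) j‖ = 0 := by
    intro j
    rw [Xv, if_neg (fun h => ht h.1), norm_zero]
  simp only [this]
  exact ciSup_const

lemma abs_Yv_le (k t j : ℕ) : ‖Yv (k, t) j‖ ≤ 1 := by
  rw [abs_Yv]
  split <;> norm_num

lemma supNorm_Yv (k t : ℕ) (ht : t < 2 ^ k) : supNorm (Yv (k, t)) = 1 := by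
  apply ciSup_eq_of_le_of_attained (abs_Yv_le k t) (2 ^ k - 1)
  rw [abs_Yv, if_pos ⟨ht, inBlock_self k⟩]

lemma supNorm_Yv_zero (k t : ℕ) (ht : ¬ t < 2 ^ k) : supNorm (Yv (k, t)) = 0 := by
  unfold supNorm
  have : ∀ j, ‖Yv (k, t) j‖ = 0 := by
    intro j
    rw [Yv, if_neg (fun h => ht h.1), norm_zero]
  simp only [this]
  exact ciSup_const

lemma cost_eq (p : ℝ) (hp0 : 0 < p) (μ : ℕ → ℝ) (hnn : ∀ j, 0 ≤ μ j)
    (hmono : Antitone μ) (kt : ℕ × ℕ) :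
    supNorm (Xv μ kt) ^ p * supNorm (Yv kt) ^ p
      = if kt.2 < 2 ^ kt.1 then (vmax μ kt.1) ^ p else 0 := by
  obtain ⟨k, t⟩ := kt
  by_cases ht : t < 2 ^ k
  · rw [supNorm_Xv μ hnn hmono k t ht, supNorm_Yv k t ht, Real.one_rpow, mul_one, if_pos ht]
  · rw [supNorm_Xv_zero μ k t ht, supNorm_Yv_zero k t ht,
      Real.zero_rpow hp0.ne', mul_zero, if_neg ht]

/-- entrywise sum of the rank-one pieces -/
lemma entry_hasSum (μ : ℕ → ℝ) (i j : ℕ) :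
    HasSum (fun kt : ℕ × ℕ => Xv μ kt i * Yv kt j)
      (if i = j then (μ i : ℂ) else 0) := by
  set K := Nat.log 2 (i + 1) with hK
  have hiK : inBlock K i := rfl
  have hNpos : (0:ℕ) < 2 ^ K := Nat.pow_pos (by norm_num)
  have hsupp : ∀ kt : ℕ × ℕ, kt ∉ (({K} : Finset ℕ) ×ˢ range (2 ^ K)) →
      Xv μ kt i * Yv kt j = 0 := by
    rintro ⟨k, t⟩ hkt
    simp only [Finset.mem_product, Finset.mem_singleton, Finset.mem_range] at hkt
    by_cases hk : k = K
    · subst hk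
      have ht : ¬ t < 2 ^ K := fun h => hkt ⟨rfl, h⟩
      rw [Xv, if_neg (fun h => ht h.1), zero_mul]
    · rw [Xv, if_neg, zero_mul]
      rintro ⟨-, hblk⟩
      exact hk ((show Nat.log 2 (i+1) = k from hblk).symm.trans hK.symm)
  have hfin := hasSum_sum_of_ne_finset_zero (L := SummationFilter.unconditional _) hsupp
  have hsum_eq : ∑ kt ∈ (({K} : Finset ℕ) ×ˢ range (2 ^ K)),
      Xv μ kt i * Yv kt j = (if i = j then (μ i : ℂ) else 0) := by
    rw [Finset.sum_product, Finset.sum_singleton]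
    by_cases hjK : inBlock K j
    · by_cases hij : i = j
      · subst hij
        rw [if_pos rfl]
        have hterm : ∀ t ∈ range (2 ^ K), Xv μ (K, t) i * Yv (K, t) i
            = ((μ i / ((2 ^ K : ℕ) : ℝ) : ℝ) : ℂ) := by
          intro t ht
          rw [Finset.mem_range] at ht
          rw [Xv, Yv, if_pos ⟨ht, hiK⟩, if_pos ⟨ht, hiK⟩, mul_assoc,
            mul_inv_cancel₀ (pow_ne_zero _ (w_ne_zero _ _)), mul_one]
        rw [Finset.sum_congr rfl hterm, Finset.sum_const, Finset.card_range,
          nsmul_eq_mul]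
        have h2K : ((2 ^ K : ℕ) : ℂ) ≠ 0 := by exact_mod_cast hNpos.ne'
        push_cast
        field_simp
      · rw [if_neg hij]
        set z : ℂ := w (2 ^ K) i * (w (2 ^ K) j)⁻¹ with hz
        have hterm : ∀ t ∈ range (2 ^ K), Xv μ (K, t) i * Yv (K, t) j
            = ((μ i / ((2 ^ K : ℕ) : ℝ) : ℝ) : ℂ) * z ^ t := by
          intro t ht
          rw [Finset.mem_range] at ht
          rw [Xv, Yv, if_pos ⟨ht, hiK⟩, if_pos ⟨ht, hjK⟩, hz, mul_pow, mul_assoc, inv_pow]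
        rw [Finset.sum_congr rfl hterm, ← Finset.mul_sum]
        have hibd := inBlock_iff.mp hiK
        have hjbd := inBlock_iff.mp hjK
        have h2 : (2:ℕ) ^ (K+1) = 2 ^ K + 2 ^ K := by ring
        have hz1 : z ≠ 1 := w_ne_one (2 ^ K) i j hij (by omega) (by omega)
        have hzN : z ^ (2 ^ K) = 1 := w_pow_eq_one (2 ^ K) i j hNpos.ne'
        rw [geom_zero hz1 hzN, mul_zero]
    · have hij : i ≠ j := fun h => hjK (h ▸ hiK)
      rw [if_neg hij]
      apply Finset.sum_eq_zero
      intro t _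
      rw [Yv, if_neg (fun h => hjK h.2), mul_zero]
  rwa [hsum_eq] at hfin


lemma charge (p : ℝ) (hp0 : 0 < p) (μ : ℕ → ℝ) (hnn : ∀ j, 0 ≤ μ j)
    (hmono : Antitone μ) (K : ℕ) :
    ((2 ^ (K+1) : ℕ) : ℝ) * (vmax μ (K+1)) ^ p
      ≤ 2 * ∑ j ∈ Ico (2 ^ K) (2 ^ (K+1)), μ j ^ p / ((1 : ℝ) + j) ^ p := by
  set b : ℝ := μ (2 ^ (K+1) - 1) with hb
  have hb0 : 0 ≤ b := hnn _
  have hpow : (2:ℕ) ^ (K+1) = 2 ^ K + 2 ^ K := by ring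
  have h1K : (1:ℕ) ≤ 2 ^ K := Nat.one_le_two_pow
  set D : ℝ := ((2 ^ (K+1) : ℕ) : ℝ) with hD
  have hD0 : (0:ℝ) < D := by positivity
  set q : ℝ := b ^ p / D ^ p with hq
  have hterm : ∀ j ∈ Ico (2 ^ K) (2 ^ (K+1)), q ≤ μ j ^ p / ((1 : ℝ) + j) ^ p := by
    intro j hj
    rw [Finset.mem_Ico] at hj
    have hμ : b ≤ μ j := hmono (by omega : j ≤ 2 ^ (K+1) - 1)
    have hden : ((1:ℝ) + j) ≤ D := by
      rw [hD]
      have h : (j + 1 : ℕ) ≤ 2 ^ (K+1) := by omega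
      have h' : ((j + 1 : ℕ) : ℝ) ≤ ((2 ^ (K+1) : ℕ) : ℝ) := by exact_mod_cast h
      push_cast at h' ⊢
      linarith
    have hjpos : (0:ℝ) < (1:ℝ) + j := by positivity
    exact div_le_div₀ (Real.rpow_nonneg (hnn j) p)
      (Real.rpow_le_rpow hb0 hμ hp0.le)
      (Real.rpow_pos_of_pos hjpos p)
      (Real.rpow_le_rpow hjpos.le hden hp0.le)
  have hcard : (Ico (2 ^ K) (2 ^ (K+1))).card = 2 ^ K := by
    rw [Nat.card_Ico]; omega
  have hsumge : ((2 ^ K : ℕ) : ℝ) * q ≤ ∑ j ∈ Ico (2 ^ K) (2 ^ (K+1)), μ j ^ p / ((1 : ℝ) + j) ^ p := by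
    calc ((2 ^ K : ℕ) : ℝ) * q = ∑ _j ∈ Ico (2 ^ K) (2 ^ (K+1)), q := by
          rw [Finset.sum_const, hcard, nsmul_eq_mul]
      _ ≤ _ := Finset.sum_le_sum hterm
  have hLHS : ((2 ^ (K+1) : ℕ) : ℝ) * (vmax μ (K+1)) ^ p = 2 * (((2 ^ K : ℕ) : ℝ) * q) := by
    rw [hq]
    unfold vmax
    rw [← hb, ← hD, Real.div_rpow hb0 hD0.le]
    have hD2 : D = 2 * ((2 ^ K : ℕ) : ℝ) := by rw [hD]; push_cast; ring
    rw [hD2]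
    ring
  rw [hLHS]
  linarith

lemma cost_partial_le (p : ℝ) (hp0 : 0 < p) (μ : ℕ → ℝ) (hnn : ∀ j, 0 ≤ μ j)
    (hmono : Antitone μ)
    (hsum : Summable fun j : ℕ => μ j ^ p / ((1 : ℝ) + j) ^ p) (KK : ℕ) :
    ∑ k ∈ range KK, ((2 ^ k : ℕ) : ℝ) * (vmax μ k) ^ p
      ≤ 2 * ∑' j : ℕ, μ j ^ p / ((1 : ℝ) + j) ^ p := by
  set T := ∑' j : ℕ, μ j ^ p / ((1 : ℝ) + j) ^ p with hT
  have tnn : ∀ j : ℕ, 0 ≤ μ j ^ p / ((1 : ℝ) + j) ^ p := fun j =>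
    div_nonneg (Real.rpow_nonneg (hnn j) p) (Real.rpow_nonneg (by positivity) p)
  have hT0 : 0 ≤ T := tsum_nonneg tnn
  have step : ∀ K : ℕ, ∑ k ∈ Ico 1 (K+1), ((2 ^ k : ℕ) : ℝ) * (vmax μ k) ^ p
      ≤ 2 * ∑ j ∈ Ico 1 (2 ^ K), μ j ^ p / ((1 : ℝ) + j) ^ p := by
    intro K
    induction K with
    | zero => simp
    | succ K ih =>
        rw [Finset.sum_Ico_succ_top (by omega : 1 ≤ K + 1)]
        have h1 : (1:ℕ) ≤ 2 ^ K := Nat.one_le_two_pow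
        have h2 : (2:ℕ) ^ K ≤ 2 ^ (K+1) := Nat.pow_le_pow_right (by norm_num) (by omega)
        rw [← Finset.sum_Ico_consecutive _ h1 h2, mul_add]
        exact add_le_add ih (charge p hp0 μ hnn hmono K)
  cases KK with
  | zero =>
      simp only [Finset.range_zero, Finset.sum_empty]
      linarith
  | succ KK =>
      have hsplit : ∑ k ∈ range (KK+1), ((2 ^ k : ℕ) : ℝ) * (vmax μ k) ^ p
          = ((2 ^ 0 : ℕ) : ℝ) * (vmax μ 0) ^ p
            + ∑ k ∈ Ico 1 (KK+1), ((2 ^ k : ℕ) : ℝ) * (vmax μ k) ^ p := by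
        rw [Finset.range_eq_Ico, Finset.sum_eq_sum_Ico_succ_bot (by omega)]
      have hC0 : ((2 ^ 0 : ℕ) : ℝ) * (vmax μ 0) ^ p = μ 0 ^ p / ((1 : ℝ) + (0:ℕ)) ^ p := by
        unfold vmax
        norm_num
      have h1 : (1:ℕ) ≤ 2 ^ KK := Nat.one_le_two_pow
      have hjoin : μ 0 ^ p / ((1 : ℝ) + (0:ℕ)) ^ p
            + ∑ j ∈ Ico 1 (2 ^ KK), μ j ^ p / ((1 : ℝ) + j) ^ p
          = ∑ j ∈ range (2 ^ KK), μ j ^ p / ((1 : ℝ) + j) ^ p := by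
        have h0 : (0:ℕ) < 2 ^ KK := by positivity
        rw [Finset.range_eq_Ico,
          Finset.sum_eq_sum_Ico_succ_bot h0 (fun j : ℕ => μ j ^ p / ((1 : ℝ) + j) ^ p)]
      have hrange_le : ∑ j ∈ range (2 ^ KK), μ j ^ p / ((1 : ℝ) + j) ^ p ≤ T :=
        Summable.sum_le_tsum _ (fun j _ => tnn j) hsum
      have ht0 : 0 ≤ μ 0 ^ p / ((1 : ℝ) + (0:ℕ)) ^ p := tnn 0
      calc ∑ k ∈ range (KK+1), ((2 ^ k : ℕ) : ℝ) * (vmax μ k) ^ p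
          = μ 0 ^ p / ((1 : ℝ) + (0:ℕ)) ^ p
            + ∑ k ∈ Ico 1 (KK+1), ((2 ^ k : ℕ) : ℝ) * (vmax μ k) ^ p := by
            rw [hsplit, hC0]
        _ ≤ μ 0 ^ p / ((1 : ℝ) + (0:ℕ)) ^ p
            + 2 * ∑ j ∈ Ico 1 (2 ^ KK), μ j ^ p / ((1 : ℝ) + j) ^ p := by
            have := step KK
            linarith
        _ ≤ 2 * (μ 0 ^ p / ((1 : ℝ) + (0:ℕ)) ^ p
            + ∑ j ∈ Ico 1 (2 ^ KK), μ j ^ p / ((1 : ℝ) + j) ^ p) := by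
            linarith [Finset.sum_nonneg (fun j (_ : j ∈ Ico 1 (2 ^ KK)) => tnn j)]
        _ = 2 * ∑ j ∈ range (2 ^ KK), μ j ^ p / ((1 : ℝ) + j) ^ p := by rw [hjoin]
        _ ≤ 2 * T := by linarith

end Stmt2Aux


open Stmt2Aux in
/-- If `0 < p ≤ 1` and `μ` is a nonincreasing nonnegative sequence with
`∑_j μ_j^p/(1+j)^p < ∞`, then the diagonal matrix with diagonal `μ` belongs to
`ℓ∞ ⊗_p ℓ∞` and `‖M‖_{ℓ∞⊗_pℓ∞}^p ≤ 2 ∑_j μ_j^p/(1+j)^p`. -/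
theorem stmt2 (p : ℝ) (hp0 : 0 < p) (hp1 : p ≤ 1)
    (μ : ℕ → ℝ) (hnn : ∀ j, 0 ≤ μ j) (hmono : Antitone μ)
    (hsum : Summable fun j : ℕ => μ j ^ p / ((1 : ℝ) + j) ^ p) :
    (tensorReprVals p fun j k : ℕ => if j = k then (μ j : ℂ) else 0).Nonempty ∧
      sInf (tensorReprVals p fun j k : ℕ => if j = k then (μ j : ℂ) else 0) ^ p ≤
        2 * ∑' j : ℕ, μ j ^ p / ((1 : ℝ) + j) ^ p := by
  classical
  set T := ∑' j : ℕ, μ j ^ p / ((1 : ℝ) + j) ^ p with hT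
  have tnn : ∀ j : ℕ, 0 ≤ μ j ^ p / ((1 : ℝ) + j) ^ p := fun j =>
    div_nonneg (Real.rpow_nonneg (hnn j) p) (Real.rpow_nonneg (by positivity) p)
  have hT0 : 0 ≤ T := tsum_nonneg tnn
  set e : ℕ ≃ ℕ × ℕ := Nat.pairEquiv.symm with he
  set x : ℕ → ℕ → ℂ := fun n => Xv μ (e n) with hx
  set y : ℕ → ℕ → ℂ := fun n => Yv (e n) with hy
  -- cost analysis
  have hgnn : ∀ k : ℕ, 0 ≤ (vmax μ k) ^ p := fun k =>
    Real.rpow_nonneg (vmax_nonneg μ hnn k) p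
  have hBnn : ∀ k : ℕ, 0 ≤ ((2 ^ k : ℕ) : ℝ) * (vmax μ k) ^ p := fun k =>
    mul_nonneg (by positivity) (hgnn k)
  have hBsummable : Summable (fun k : ℕ => ((2 ^ k : ℕ) : ℝ) * (vmax μ k) ^ p) :=
    summable_of_sum_range_le hBnn (cost_partial_le p hp0 μ hnn hmono hsum)
  have hBle : ∑' k : ℕ, ((2 ^ k : ℕ) : ℝ) * (vmax μ k) ^ p ≤ 2 * T :=
    Summable.tsum_le_of_sum_range_le hBsummable (cost_partial_le p hp0 μ hnn hmono hsum)
  have hCostProd : Summable (fun kt : ℕ × ℕ =>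
      if kt.2 < 2 ^ kt.1 then (vmax μ kt.1) ^ p else 0) :=
    indicator_summable (fun k => (vmax μ k) ^ p) (fun k => 2 ^ k) hgnn hBsummable
  have hceq : (fun n : ℕ => supNorm (x n) ^ p * supNorm (y n) ^ p)
      = fun n : ℕ => (if (e n).2 < 2 ^ (e n).1 then (vmax μ (e n).1) ^ p else 0) :=
    funext fun n => cost_eq p hp0 μ hnn hmono (e n)
  have hsummable : Summable (fun n : ℕ => supNorm (x n) ^ p * supNorm (y n) ^ p) := by
    rw [hceq]
    exact (Equiv.summable_iff
      (f := fun kt : ℕ × ℕ => if kt.2 < 2 ^ kt.1 then (vmax μ kt.1) ^ p else 0) e).mpr hCostProd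
  set S := ∑' n : ℕ, supNorm (x n) ^ p * supNorm (y n) ^ p with hS
  have hS_eq : S = ∑' k : ℕ, ((2 ^ k : ℕ) : ℝ) * (vmax μ k) ^ p := by
    rw [hS, hceq]
    have h1 : (∑' n : ℕ, if (e n).2 < 2 ^ (e n).1 then (vmax μ (e n).1) ^ p else 0)
        = ∑' kt : ℕ × ℕ, (if kt.2 < 2 ^ kt.1 then (vmax μ kt.1) ^ p else 0) :=
      Equiv.tsum_eq e (fun kt : ℕ × ℕ => if kt.2 < 2 ^ kt.1 then (vmax μ kt.1) ^ p else 0)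
    rw [h1]
    exact indicator_tsum (fun k => (vmax μ k) ^ p) (fun k => 2 ^ k) hgnn hBsummable
  have hS_le : S ≤ 2 * T := hS_eq ▸ hBle
  have hS0 : 0 ≤ S := tsum_nonneg (fun n => by
    rw [congrFun hceq n]
    split
    · exact hgnn _
    · exact le_rfl)
  -- entry sums
  have hentry : ∀ i j : ℕ, HasSum (fun n => x n i * y n j)
      ((fun j k : ℕ => if j = k then (μ j : ℂ) else 0) i j) := by
    intro i j
    have h := entry_hasSum μ i j
    exact (Equiv.hasSum_iff (f := fun kt : ℕ × ℕ => Xv μ kt i * Yv kt j) e).mpr h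
  -- bddAbove
  have hbx : ∀ n, BddAbove (Set.range fun i => ‖x n i‖) := by
    intro n
    refine ⟨vmax μ (e n).1, ?_⟩
    rintro r ⟨i, rfl⟩
    exact abs_Xv_le μ hnn hmono (e n).1 (e n).2 i
  have hby : ∀ n, BddAbove (Set.range fun i => ‖y n i‖) := by
    intro n
    refine ⟨1, ?_⟩
    rintro r ⟨i, rfl⟩
    exact abs_Yv_le (e n).1 (e n).2 i
  have hmem : S ^ (1 / p) ∈ tensorReprVals p (fun j k : ℕ => if j = k then (μ j : ℂ) else 0) :=
    ⟨x, y, hbx, hby, hsummable, hentry, rfl⟩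
  have hel_nonneg : ∀ r ∈ tensorReprVals p (fun j k : ℕ => if j = k then (μ j : ℂ) else 0),
      0 ≤ r := by
    rintro r ⟨x', y', -, -, -, -, rfl⟩
    apply Real.rpow_nonneg
    apply tsum_nonneg
    intro n
    have h1 : 0 ≤ supNorm (x' n) := Real.iSup_nonneg fun i => norm_nonneg _
    have h2 : 0 ≤ supNorm (y' n) := Real.iSup_nonneg fun i => norm_nonneg _
    exact mul_nonneg (Real.rpow_nonneg h1 p) (Real.rpow_nonneg h2 p)
  refine ⟨⟨S ^ (1 / p), hmem⟩, ?_⟩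
  have hbdd : BddBelow (tensorReprVals p (fun j k : ℕ => if j = k then (μ j : ℂ) else 0)) :=
    ⟨0, fun r hr => hel_nonneg r hr⟩
  have hinf_le : sInf (tensorReprVals p (fun j k : ℕ => if j = k then (μ j : ℂ) else 0))
      ≤ S ^ (1 / p) := csInf_le hbdd hmem
  have hinf0 : 0 ≤ sInf (tensorReprVals p (fun j k : ℕ => if j = k then (μ j : ℂ) else 0)) :=
    Real.sInf_nonneg hel_nonneg
  calc sInf (tensorReprVals p fun j k : ℕ => if j = k then (μ j : ℂ) else 0) ^ p
      ≤ (S ^ (1 / p)) ^ p := Real.rpow_le_rpow hinf0 hinf_le hp0.le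
    _ = S := by
        rw [← Real.rpow_mul hS0, one_div_mul_cancel hp0.ne', Real.rpow_one]
    _ ≤ 2 * T := hS_le
end

section
/- Let 0 < p ≤ 1 and let n be a positive integer. Let J_n be the n×n identity matrix. Then ‖J_n‖_{ℓ∞⊗_pℓ∞} = n^{(1−p)/p}. -/
open scoped BigOperators

namespace Stmt3Aux

open Complex Finset

lemma supNorm_const {ι : Type*} [Nonempty ι] (x : ι → ℂ) (r : ℝ)
    (h : ∀ i, ‖x i‖ = r) : supNorm x = r := by
  unfold supNorm
  have : (fun i => ‖x i‖) = fun _ => r := funext h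
  rw [this, ciSup_const]

lemma key_sum (n : ℕ) (hn : 0 < n) (i j : Fin n) (ζ : ℂ) (hprim : IsPrimitiveRoot ζ n)
    (habs : ‖ζ‖ = 1) :
    ∑ k ∈ range n, ((n:ℂ)⁻¹ * ζ ^ ((i:ℕ) * k)) * (starRingEnd ℂ) (ζ ^ ((j:ℕ) * k))
      = if i = j then 1 else 0 := by
  have hnC : (n:ℂ) ≠ 0 := Nat.cast_ne_zero.mpr hn.ne'
  have hζ0 : ζ ≠ 0 := fun h => by simp [h] at habs
  set w : ℂ := ζ ^ (i:ℕ) * (starRingEnd ℂ) (ζ ^ (j:ℕ)) with hw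
  have hterm : ∀ k, ((n:ℂ)⁻¹ * ζ ^ ((i:ℕ) * k)) * (starRingEnd ℂ) (ζ ^ ((j:ℕ) * k))
      = (n:ℂ)⁻¹ * w ^ k := by
    intro k
    rw [hw, mul_pow, pow_mul, pow_mul, ← map_pow]
    ring
  rw [Finset.sum_congr rfl fun k _ => hterm k, ← Finset.mul_sum]
  have hwz : w = ζ ^ ((i:ℤ) - (j:ℤ)) := by
    rw [hw, ← Complex.inv_eq_conj (by rw [norm_pow, habs, one_pow]),
      zpow_sub₀ hζ0, zpow_natCast, zpow_natCast, div_eq_mul_inv]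
  by_cases hij : i = j
  · subst hij
    have : w = 1 := by rw [hwz, sub_self, zpow_zero]
    simp [this, mul_comm]
    rw [mul_inv_cancel₀ hnC]
  · have hw1 : w ≠ 1 := by
      rw [hwz]
      intro h
      have hdvd : (n:ℤ) ∣ ((i:ℤ) - (j:ℤ)) := (hprim.zpow_eq_one_iff_dvd _).mp h
      have hlt : |(i:ℤ) - (j:ℤ)| < n := by
        rw [abs_sub_lt_iff]
        constructor <;> omega
      have := Int.eq_zero_of_abs_lt_dvd hdvd hlt
      have : (i:ℤ) = (j:ℤ) := by omega
      exact hij (Fin.ext (by exact_mod_cast this))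
    have hwn : w ^ n = 1 := by
      rw [hwz, ← zpow_natCast, ← zpow_mul, mul_comm, zpow_mul, zpow_natCast,
        hprim.pow_eq_one, one_zpow]
    rw [geom_sum_eq hw1, hwn, sub_self, zero_div, mul_zero, if_neg hij]

lemma mem_val (p : ℝ) (hp0 : 0 < p) (n : ℕ) (hn : 0 < n) :
    ((n : ℝ) ^ ((1 - p) / p)) ∈
      tensorReprVals p (fun i j : Fin n => if i = j then (1 : ℂ) else 0) := by
  classical
  have hnR : (0:ℝ) < n := Nat.cast_pos.mpr hn
  haveI : Nonempty (Fin n) := Fin.pos_iff_nonempty.mp hn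
  set ζ : ℂ := Complex.exp (2 * Real.pi * I / n) with hζ
  have hprim : IsPrimitiveRoot ζ n := Complex.isPrimitiveRoot_exp n hn.ne'
  have habs : ‖ζ‖ = 1 := by
    rw [hζ, Complex.norm_exp]
    norm_num [Complex.div_re, Complex.mul_re, Complex.mul_im]
  set x : ℕ → Fin n → ℂ :=
    fun k => if k < n then (fun i => (n:ℂ)⁻¹ * ζ ^ ((i:ℕ) * k)) else 0 with hxdef
  set y : ℕ → Fin n → ℂ :=
    fun k => if k < n then (fun j => (starRingEnd ℂ) (ζ ^ ((j:ℕ) * k))) else 0 with hydef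
  have hfx : ∀ k, supNorm (x k) = if k < n then (n:ℝ)⁻¹ else 0 := by
    intro k
    by_cases hk : k < n
    · rw [hxdef]
      simp only [if_pos hk]
      apply supNorm_const
      intro i
      rw [norm_mul, norm_inv, norm_pow, habs, one_pow, Complex.norm_natCast, mul_one]
    · rw [hxdef]
      simp only [if_neg hk]
      exact supNorm_const _ 0 (by simp)
  have hfy : ∀ k, supNorm (y k) = if k < n then 1 else 0 := by
    intro k
    by_cases hk : k < n
    · rw [hydef]
      simp only [if_pos hk]
      apply supNorm_const
      intro i
      rw [Complex.norm_conj, norm_pow, habs, one_pow]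
    · rw [hydef]
      simp only [if_neg hk]
      exact supNorm_const _ 0 (by simp)
  have hterm : (fun k => supNorm (x k) ^ p * supNorm (y k) ^ p)
      = fun k => if k < n then ((n:ℝ)⁻¹) ^ p else 0 := by
    funext k
    by_cases hk : k < n
    · simp [hfx, hfy, hk, Real.one_rpow]
    · simp [hfx, hfy, hk, Real.zero_rpow hp0.ne']
  refine ⟨x, y, fun k => (Set.finite_range _).bddAbove,
    fun k => (Set.finite_range _).bddAbove, ?_, ?_, ?_⟩
  · rw [hterm]
    apply summable_of_ne_finset_zero (s := range n)
    intro k hk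
    rw [Finset.mem_range] at hk
    simp [hk]
  · intro i j
    have h0 : ∀ k ∉ range n, x k i * y k j = 0 := by
      intro k hk
      rw [Finset.mem_range] at hk
      simp [hxdef, hydef, hk]
    have hs : HasSum (fun k => x k i * y k j) (∑ k ∈ range n, x k i * y k j) :=
      hasSum_sum_of_ne_finset_zero h0
    have heq : ∑ k ∈ range n, x k i * y k j = if i = j then 1 else 0 := by
      rw [← key_sum n hn i j ζ hprim habs]
      apply Finset.sum_congr rfl
      intro k hk
      rw [Finset.mem_range] at hk
      simp [hxdef, hydef, hk]
    rwa [heq] at hs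
  · rw [hterm, tsum_eq_sum (s := range n) (by intro k hk; rw [Finset.mem_range] at hk; simp [hk])]
    have hsum : ∑ k ∈ range n, (if k < n then ((n:ℝ)⁻¹) ^ p else 0) = n * ((n:ℝ)⁻¹) ^ p := by
      rw [Finset.sum_congr rfl (fun k hk => if_pos (Finset.mem_range.mp hk)),
        Finset.sum_const, Finset.card_range, nsmul_eq_mul]
    rw [hsum]
    have h2 : (n:ℝ) * ((n:ℝ)⁻¹) ^ p = (n:ℝ) ^ (1 - p) := by
      rw [Real.inv_rpow hnR.le, Real.rpow_sub hnR, Real.rpow_one, div_eq_mul_inv]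
    rw [h2, ← Real.rpow_mul hnR.le, mul_one_div]

lemma lower_bound (p : ℝ) (hp0 : 0 < p) (hp1 : p ≤ 1) (n : ℕ) (hn : 0 < n) :
    ∀ c ∈ tensorReprVals p (fun i j : Fin n => if i = j then (1 : ℂ) else 0),
      (n:ℝ) ^ ((1 - p) / p) ≤ c := by
  classical
  rintro c ⟨x, y, hbx, hby, hsum, hrep, rfl⟩
  have hnR : (0:ℝ) < n := Nat.cast_pos.mpr hn
  set a : ℕ → ℝ := fun k => supNorm (x k) with ha'
  set b : ℕ → ℝ := fun k => supNorm (y k) with hb'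
  have ha0 : ∀ k, 0 ≤ a k := fun k => Real.iSup_nonneg fun i => (norm_nonneg _)
  have hb0 : ∀ k, 0 ≤ b k := fun k => Real.iSup_nonneg fun i => (norm_nonneg _)
  have hxa : ∀ k i, ‖x k i‖ ≤ a k := fun k i => le_ciSup (hbx k) i
  have hyb : ∀ k i, ‖y k i‖ ≤ b k := fun k i => le_ciSup (hby k) i
  have hsum' : Summable (fun k => a k ^ p * b k ^ p) := hsum
  have ht0 : ∀ k, 0 ≤ a k ^ p * b k ^ p := fun k =>
    mul_nonneg (Real.rpow_nonneg (ha0 k) p) (Real.rpow_nonneg (hb0 k) p)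
  show (n:ℝ) ^ ((1 - p) / p) ≤ (∑' k, a k ^ p * b k ^ p) ^ (1/p)
  suffices hS : (n:ℝ) ^ (1 - p) ≤ ∑' k, a k ^ p * b k ^ p by
    calc (n:ℝ) ^ ((1-p)/p) = ((n:ℝ) ^ (1-p)) ^ (1/p) := by
          rw [← Real.rpow_mul hnR.le, mul_one_div]
    _ ≤ (∑' k, a k ^ p * b k ^ p) ^ (1/p) :=
          Real.rpow_le_rpow (Real.rpow_nonneg hnR.le _) hS (one_div_nonneg.mpr hp0.le)
  -- Step A : eventually small
  obtain ⟨N, hN⟩ : ∃ N, ∀ k ≥ N, a k ^ p * b k ^ p < ((n:ℝ)⁻¹) ^ p := by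
    have hε : (0:ℝ) < ((n:ℝ)⁻¹) ^ p := Real.rpow_pos_of_pos (inv_pos.mpr hnR) p
    exact Filter.eventually_atTop.mp (hsum'.tendsto_atTop_zero.eventually_lt_const hε)
  -- Step B : the big set
  set B : Finset ℕ := (Finset.range N).filter (fun k => 1 ≤ (n:ℝ) * (a k * b k)) with hBdef
  have hBmem : ∀ k, k ∉ B → (n:ℝ) * (a k * b k) < 1 := by
    intro k hk
    by_contra hcon
    push_neg at hcon
    apply hk
    rw [hBdef, Finset.mem_filter, Finset.mem_range]
    refine ⟨?_, hcon⟩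
    by_contra hkN
    push_neg at hkN
    have h1 : (n:ℝ)⁻¹ ≤ a k * b k := by
      rw [← one_div, div_le_iff₀ hnR]
      nlinarith
    have h2 : ((n:ℝ)⁻¹) ^ p ≤ (a k * b k) ^ p :=
      Real.rpow_le_rpow (inv_nonneg.mpr hnR.le) h1 hp0.le
    have h3 : (a k * b k) ^ p = a k ^ p * b k ^ p := Real.mul_rpow (ha0 k) (hb0 k)
    have h4 := hN k hkN
    linarith
  have hBbig : ∀ k ∈ B, (1:ℝ) ≤ (n:ℝ) ^ p * (a k ^ p * b k ^ p) := by
    intro k hk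
    rw [hBdef, Finset.mem_filter] at hk
    calc (1:ℝ) = 1 ^ p := (Real.one_rpow p).symm
    _ ≤ ((n:ℝ) * (a k * b k)) ^ p := Real.rpow_le_rpow zero_le_one hk.2 hp0.le
    _ = (n:ℝ) ^ p * (a k ^ p * b k ^ p) := by
        rw [Real.mul_rpow hnR.le (mul_nonneg (ha0 k) (hb0 k)), Real.mul_rpow (ha0 k) (hb0 k)]
  -- Step C : Euclidean space setup
  set X : ℕ → EuclideanSpace ℂ (Fin n) :=
    fun k => (WithLp.equiv 2 (Fin n → ℂ)).symm (x k) with hXdef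
  set Y : ℕ → EuclideanSpace ℂ (Fin n) :=
    fun k => (WithLp.equiv 2 (Fin n → ℂ)).symm (fun i => (starRingEnd ℂ) (y k i)) with hYdef
  have hXn : ∀ k, ‖X k‖ ≤ Real.sqrt n * a k := by
    intro k
    rw [EuclideanSpace.norm_eq]
    have h1 : ∑ i, ‖X k i‖ ^ 2 ≤ (n:ℝ) * a k ^ 2 := by
      calc ∑ i, ‖X k i‖ ^ 2 ≤ ∑ _i : Fin n, a k ^ 2 := by
            apply Finset.sum_le_sum
            intro i _
            have h2 : ‖X k i‖ = ‖x k i‖ := rfl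
            rw [h2]
            exact pow_le_pow_left₀ (norm_nonneg _) (hxa k i) 2
      _ = (n:ℝ) * a k ^ 2 := by
            rw [Finset.sum_const, Finset.card_univ, Fintype.card_fin, nsmul_eq_mul]
    calc Real.sqrt (∑ i, ‖X k i‖ ^ 2) ≤ Real.sqrt ((n:ℝ) * a k ^ 2) := Real.sqrt_le_sqrt h1
    _ = Real.sqrt n * a k := by
        rw [Real.sqrt_mul hnR.le, Real.sqrt_sq (ha0 k)]
  have hYn : ∀ k, ‖Y k‖ ≤ Real.sqrt n * b k := by
    intro k
    rw [EuclideanSpace.norm_eq]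
    have h1 : ∑ i, ‖Y k i‖ ^ 2 ≤ (n:ℝ) * b k ^ 2 := by
      calc ∑ i, ‖Y k i‖ ^ 2 ≤ ∑ _i : Fin n, b k ^ 2 := by
            apply Finset.sum_le_sum
            intro i _
            have h2 : ‖Y k i‖ = ‖(starRingEnd ℂ) (y k i)‖ := rfl
            rw [h2, Complex.norm_conj]
            exact pow_le_pow_left₀ (norm_nonneg _) (hyb k i) 2
      _ = (n:ℝ) * b k ^ 2 := by
            rw [Finset.sum_const, Finset.card_univ, Fintype.card_fin, nsmul_eq_mul]
    calc Real.sqrt (∑ i, ‖Y k i‖ ^ 2) ≤ Real.sqrt ((n:ℝ) * b k ^ 2) := Real.sqrt_le_sqrt h1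
    _ = Real.sqrt n * b k := by
        rw [Real.sqrt_mul hnR.le, Real.sqrt_sq (hb0 k)]
  have hσ : ∀ k, ‖X k‖ * ‖Y k‖ ≤ (n:ℝ) * (a k * b k) := by
    intro k
    calc ‖X k‖ * ‖Y k‖ ≤ (Real.sqrt n * a k) * (Real.sqrt n * b k) :=
          mul_le_mul (hXn k) (hYn k) (norm_nonneg _) (mul_nonneg (Real.sqrt_nonneg _) (ha0 k))
    _ = (Real.sqrt n * Real.sqrt n) * (a k * b k) := by ring
    _ = (n:ℝ) * (a k * b k) := by rw [Real.mul_self_sqrt hnR.le]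
  -- Step D : subspace and orthonormal family
  set K : Submodule ℂ (EuclideanSpace ℂ (Fin n)) :=
    Submodule.span ℂ ((B.image Y : Finset _) : Set _) with hKdef
  set m : ℕ := Module.finrank ℂ Kᗮ with hmdef
  have hrank : n ≤ m + B.card := by
    have h1 := K.finrank_add_finrank_orthogonal
    rw [finrank_euclideanSpace_fin] at h1
    have h2 : Module.finrank ℂ K ≤ B.card :=
      le_trans (finrank_span_finset_le_card (B.image Y)) Finset.card_image_le
    omega
  set e : Fin m → EuclideanSpace ℂ (Fin n) :=
    fun j => ((stdOrthonormalBasis ℂ Kᗮ) j : EuclideanSpace ℂ (Fin n)) with hedef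
  have he : Orthonormal ℂ e :=
    (stdOrthonormalBasis ℂ Kᗮ).orthonormal.comp_linearIsometry Kᗮ.subtypeₗᵢ
  -- Step E : the key HasSum
  set g : ℕ → ℂ := fun k => ∑ j : Fin m, (inner ℂ (e j) (X k) : ℂ) * (inner ℂ (Y k) (e j) : ℂ)
    with hgdef
  have hj : ∀ j : Fin m, HasSum (fun k => (inner ℂ (e j) (X k) : ℂ) * (inner ℂ (Y k) (e j) : ℂ)) 1 := by
    intro j
    have h2 : HasSum
        (fun k => ∑ i : Fin n, ∑ i' : Fin n,
          ((starRingEnd ℂ) (e j i) * e j i') * (x k i * y k i'))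
        (∑ i : Fin n, ∑ i' : Fin n,
          ((starRingEnd ℂ) (e j i) * e j i') * (if i = i' then (1:ℂ) else 0)) := by
      apply hasSum_sum
      intro i _
      apply hasSum_sum
      intro i' _
      exact (hrep i i').mul_left _
    have hval : (∑ i : Fin n, ∑ i' : Fin n,
        ((starRingEnd ℂ) (e j i) * e j i') * (if i = i' then (1:ℂ) else 0)) = 1 := by
      have h3 : ∀ i : Fin n, (∑ i' : Fin n,
          ((starRingEnd ℂ) (e j i) * e j i') * (if i = i' then (1:ℂ) else 0))
          = (starRingEnd ℂ) (e j i) * e j i := by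
        intro i
        rw [Finset.sum_eq_single i]
        · simp
        · intro i' _ hne
          simp [Ne.symm hne]
        · simp
      rw [Finset.sum_congr rfl fun i _ => h3 i]
      have h4 : (inner ℂ (e j) (e j) : ℂ) = 1 := by
        rw [inner_self_eq_norm_sq_to_K, he.1 j]
        norm_num
      rw [← h4, PiLp.inner_apply]
      simp [RCLike.inner_apply, Complex.conj_mul']
    rw [hval] at h2
    convert h2 using 2 with k
    rw [PiLp.inner_apply, PiLp.inner_apply]
    simp only [RCLike.inner_apply]
    rw [Finset.sum_mul_sum]
    apply Finset.sum_congr rfl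
    intro i _
    apply Finset.sum_congr rfl
    intro i' _
    have hXki : X k i = x k i := rfl
    have hYki : Y k i' = (starRingEnd ℂ) (y k i') := rfl
    rw [hXki, hYki, Complex.conj_conj]
    ring
  have hgsum : HasSum g ((m:ℕ) : ℂ) := by
    have h5 := hasSum_sum (s := (Finset.univ : Finset (Fin m)))
      (f := fun j k => (inner ℂ (e j) (X k) : ℂ) * (inner ℂ (Y k) (e j) : ℂ))
      (a := fun _ => (1:ℂ)) (fun j _ => hj j)
    simpa using h5
  -- Step F : vanishing on B
  have hgB : ∀ k ∈ B, g k = 0 := by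
    intro k hk
    apply Finset.sum_eq_zero
    intro j _
    have hejV : e j ∈ Kᗮ := ((stdOrthonormalBasis ℂ Kᗮ) j).2
    have hYK : Y k ∈ K :=
      Submodule.subset_span (Finset.mem_coe.mpr (Finset.mem_image_of_mem Y hk))
    have hY0 : (inner ℂ (Y k) (e j) : ℂ) = 0 :=
      (Submodule.mem_orthogonal K (e j)).mp hejV (Y k) hYK
    rw [hY0, mul_zero]
  -- Step G : Cauchy-Schwarz + Bessel bound
  have hgnorm : ∀ k, ‖g k‖ ≤ ‖X k‖ * ‖Y k‖ := by
    intro k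
    have hb1 : ∑ j : Fin m, ‖(inner ℂ (e j) (X k) : ℂ)‖ ^ 2 ≤ ‖X k‖ ^ 2 :=
      he.sum_inner_products_le (X k)
    have hb2 : ∑ j : Fin m, ‖(inner ℂ (Y k) (e j) : ℂ)‖ ^ 2 ≤ ‖Y k‖ ^ 2 := by
      have hsymm : ∀ j : Fin m, ‖(inner ℂ (Y k) (e j) : ℂ)‖ = ‖(inner ℂ (e j) (Y k) : ℂ)‖ :=
        fun j => norm_inner_symm _ _
      rw [Finset.sum_congr rfl fun j _ => by rw [hsymm j]]
      exact he.sum_inner_products_le (Y k)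
    have hCS := Finset.sum_mul_sq_le_sq_mul_sq Finset.univ
      (fun j => ‖(inner ℂ (e j) (X k) : ℂ)‖) (fun j => ‖(inner ℂ (Y k) (e j) : ℂ)‖)
    calc ‖g k‖ ≤ ∑ j : Fin m, ‖(inner ℂ (e j) (X k) : ℂ) * (inner ℂ (Y k) (e j) : ℂ)‖ :=
          norm_sum_le _ _
    _ = ∑ j : Fin m, ‖(inner ℂ (e j) (X k) : ℂ)‖ * ‖(inner ℂ (Y k) (e j) : ℂ)‖ := by
          simp [norm_mul]
    _ ≤ Real.sqrt ((∑ j : Fin m, ‖(inner ℂ (e j) (X k) : ℂ)‖ ^ 2) *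
          (∑ j : Fin m, ‖(inner ℂ (Y k) (e j) : ℂ)‖ ^ 2)) := by
          rw [Real.le_sqrt (Finset.sum_nonneg fun j _ =>
            mul_nonneg (norm_nonneg _) (norm_nonneg _)) (by positivity)]
          exact hCS
    _ ≤ Real.sqrt (‖X k‖ ^ 2 * ‖Y k‖ ^ 2) := by
          apply Real.sqrt_le_sqrt
          apply mul_le_mul hb1 hb2 (Finset.sum_nonneg fun j _ => by positivity)
            (by positivity)
    _ = ‖X k‖ * ‖Y k‖ := by
          rw [← mul_pow, Real.sqrt_sq (mul_nonneg (norm_nonneg _) (norm_nonneg _))]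
  -- Step H : the per-term bound
  have hgle : ∀ k, ‖g k‖ ≤ (n:ℝ) ^ p * (a k ^ p * b k ^ p) := by
    intro k
    by_cases hk : k ∈ B
    · rw [hgB k hk, norm_zero]
      exact mul_nonneg (Real.rpow_nonneg hnR.le p) (ht0 k)
    · have h1 : ‖g k‖ ≤ (n:ℝ) * (a k * b k) := (hgnorm k).trans (hσ k)
      have hs1 : (n:ℝ) * (a k * b k) < 1 := hBmem k hk
      have hs0 : 0 ≤ (n:ℝ) * (a k * b k) :=
        mul_nonneg hnR.le (mul_nonneg (ha0 k) (hb0 k))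
      have h3 : ((n:ℝ) * (a k * b k)) ^ p = (n:ℝ) ^ p * (a k ^ p * b k ^ p) := by
        rw [Real.mul_rpow hnR.le (mul_nonneg (ha0 k) (hb0 k)),
          Real.mul_rpow (ha0 k) (hb0 k)]
      have h2 : (n:ℝ) * (a k * b k) ≤ ((n:ℝ) * (a k * b k)) ^ p := by
        rcases eq_or_lt_of_le hs0 with h|h
        · rw [← h, Real.zero_rpow hp0.ne']
        · calc (n:ℝ) * (a k * b k) = ((n:ℝ) * (a k * b k)) ^ (1:ℝ) :=
                (Real.rpow_one _).symm
          _ ≤ ((n:ℝ) * (a k * b k)) ^ p :=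
                Real.rpow_le_rpow_of_exponent_ge h hs1.le hp1
      linarith
  have hgsummable : Summable (fun k => ‖g k‖) :=
    Summable.of_nonneg_of_le (fun k => norm_nonneg _) hgle (hsum'.mul_left _)
  -- Step I : combine everything
  have hmle : (m:ℝ) ≤ ∑' (k : {k // k ∉ B}), ‖g (k:ℕ)‖ := by
    have e2 : ∑' k, g k = ((m:ℕ) : ℂ) := hgsum.tsum_eq
    have e3 : ‖∑' k, g k‖ ≤ ∑' k, ‖g k‖ := norm_tsum_le_tsum_norm hgsummable
    have e4 : ∑ k ∈ B, ‖g k‖ + ∑' (k : {k // k ∉ B}), ‖g (k:ℕ)‖ = ∑' k, ‖g k‖ :=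
      Summable.sum_add_tsum_subtype_compl hgsummable B
    have e5 : ∑ k ∈ B, ‖g k‖ = 0 :=
      Finset.sum_eq_zero fun k hk => by rw [hgB k hk, norm_zero]
    have e6 : ‖∑' k, g k‖ = (m:ℝ) := by rw [e2]; simp
    linarith
  have hcompl : ∑' (k : {k // k ∉ B}), ‖g (k:ℕ)‖
      ≤ ∑' (k : {k // k ∉ B}), (n:ℝ) ^ p * (a (k:ℕ) ^ p * b (k:ℕ) ^ p) :=
    Summable.tsum_le_tsum (fun k => hgle k) (hgsummable.subtype _) ((hsum'.mul_left _).subtype _)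
  have hsplit : ∑ k ∈ B, ((n:ℝ) ^ p * (a k ^ p * b k ^ p))
      + ∑' (k : {k // k ∉ B}), (n:ℝ) ^ p * (a (k:ℕ) ^ p * b (k:ℕ) ^ p)
      = ∑' k, (n:ℝ) ^ p * (a k ^ p * b k ^ p) :=
    Summable.sum_add_tsum_subtype_compl (hsum'.mul_left _) B
  have hcard : (B.card : ℝ) ≤ ∑ k ∈ B, (n:ℝ) ^ p * (a k ^ p * b k ^ p) := by
    calc (B.card : ℝ) = ∑ _k ∈ B, (1:ℝ) := by simp
    _ ≤ _ := Finset.sum_le_sum fun k hk => hBbig k hk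
  have h6 : ∑' k, (n:ℝ) ^ p * (a k ^ p * b k ^ p)
      = (n:ℝ) ^ p * ∑' k, a k ^ p * b k ^ p := tsum_mul_left
  have h7 : (n:ℝ) ≤ (m:ℝ) + B.card := by exact_mod_cast hrank
  have htot : (n:ℝ) ≤ (n:ℝ) ^ p * ∑' k, a k ^ p * b k ^ p := by linarith
  rw [Real.rpow_sub hnR, Real.rpow_one, div_le_iff₀ (Real.rpow_pos_of_pos hnR p)]
  linarith [htot]


end Stmt3Aux

/-- For `0 < p ≤ 1`, the `n × n` identity matrix `J_n` satisfies
`‖J_n‖_{ℓ∞⊗_pℓ∞} = n^{(1-p)/p}`. -/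
theorem stmt3 (p : ℝ) (hp0 : 0 < p) (hp1 : p ≤ 1) (n : ℕ) (hn : 0 < n) :
    (tensorReprVals p fun i j : Fin n => if i = j then (1 : ℂ) else 0).Nonempty ∧
      sInf (tensorReprVals p fun i j : Fin n => if i = j then (1 : ℂ) else 0) =
        (n : ℝ) ^ ((1 - p) / p) := by
  have hmem := Stmt3Aux.mem_val p hp0 n hn
  have hne : (tensorReprVals p fun i j : Fin n => if i = j then (1 : ℂ) else 0).Nonempty :=
    ⟨_, hmem⟩
  have hbdd : BddBelow (tensorReprVals p fun i j : Fin n => if i = j then (1 : ℂ) else 0) := by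
    refine ⟨0, ?_⟩
    rintro c ⟨x, y, _, _, _, _, rfl⟩
    refine Real.rpow_nonneg (tsum_nonneg fun k => mul_nonneg ?_ ?_) _ <;>
      exact Real.rpow_nonneg (Real.iSup_nonneg fun i => norm_nonneg _) _
  exact ⟨hne, le_antisymm (csInf_le hbdd hmem)
    (le_csInf hne (Stmt3Aux.lower_bound p hp0 hp1 n hn))⟩
end

section
/- Let 0 < p < 1, let m be a positive integer, and let n_1, …, n_m be positive integers such that n_{j+1} ≥ 4(2m)^{1/(1−p)} n_j for 1 ≤ j ≤ m−1. Let D be the block-diagonal square matrix of size N = n_1 + ⋯ + n_m whose j-th diagonal block is n_j^{−(1−p)/p} I_{n_j} (all other entries zero). Then ‖D‖_{ℓ∞⊗_pℓ∞}^p ≥ m/2. -/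
open scoped BigOperators

open Finset Module

/-- Core pairing lemma: trace against a projection annihilating the "big" terms. -/
lemma core_pairing (N : ℕ) (d u : ℝ) (hd : 0 ≤ d)
    (X Y : ℕ → Fin N → ℂ) (a : ℕ → ℝ) (ha : ∀ k, 0 ≤ a k)
    (hXY : ∀ k (i i' : Fin N), ‖X k i‖ * ‖Y k i'‖ ≤ a k)
    (hD : ∀ i i' : Fin N, HasSum (fun k => X k i * Y k i') (if i = i' then (d:ℂ) else 0))
    (hH : {k | u < a k}.Finite)
    (F : ℕ → ℝ) (hF : ∀ k, F k = if a k ≤ u then a k else 0)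
    (hFs : Summable F) :
    d * ((N:ℝ) - hH.toFinset.card) ≤ (N:ℝ) * ∑' k, F k := by
  classical
  set E := EuclideanSpace ℂ (Fin N)
  let w : ℕ → E := fun k => (WithLp.equiv 2 (Fin N → ℂ)).symm (fun i => starRingEnd ℂ (Y k i))
  let xv : ℕ → E := fun k => (WithLp.equiv 2 (Fin N → ℂ)).symm (fun i => X k i)
  have hw_apply : ∀ k i, w k i = starRingEnd ℂ (Y k i) := fun k i => rfl
  have hxv_apply : ∀ k i, xv k i = X k i := fun k i => rfl
  set H : Set ℕ := {k | u < a k}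
  set W : Submodule ℂ E := Submodule.span ℂ (w '' H)
  set L : ℕ := finrank ℂ (Wᗮ) with hL
  set B := stdOrthonormalBasis ℂ (↥Wᗮ)
  set b : Fin L → E := fun l => (B l : E) with hb_def
  have hb : Orthonormal ℂ b := by
    constructor
    · intro l
      have := B.orthonormal.1 l
      rwa [show ‖B l‖ = ‖b l‖ from rfl] at this
    · intro l l' hll
      rw [hb_def]
      rw [← Submodule.coe_inner]
      exact B.orthonormal.2 hll
  -- the pairing functional
  set φ : ℕ → ℂ := fun k => ∑ l : Fin L, (inner ℂ (b l) (xv k) : ℂ) * (inner ℂ (w k) (b l) : ℂ)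
    with hφ_def
  -- expansion of φ as finite sum of matrix entries
  have hφ_expand : ∀ k, φ k = ∑ l : Fin L, ∑ i : Fin N, ∑ i' : Fin N,
      ((starRingEnd ℂ (b l i)) * (b l i')) * (X k i * Y k i') := by
    intro k
    apply Finset.sum_congr rfl
    intro l _
    rw [show (inner ℂ (b l) (xv k) : ℂ) = ∑ i : Fin N, starRingEnd ℂ (b l i) * X k i by
      rw [PiLp.inner_apply]; simp [RCLike.inner_apply', hxv_apply, mul_comm]]
    rw [show (inner ℂ (w k) (b l) : ℂ) = ∑ i' : Fin N, Y k i' * b l i' by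
      rw [PiLp.inner_apply]
      apply Finset.sum_congr rfl
      intro i' _
      simp [hw_apply, RCLike.inner_apply', mul_comm]]
    rw [Finset.sum_mul_sum]
    apply Finset.sum_congr rfl; intro i _
    apply Finset.sum_congr rfl; intro i' _
    ring
  -- HasSum of φ
  have hφ_sum : HasSum φ ((d * L : ℝ) : ℂ) := by
    have h1 : ∀ (l : Fin L) (i i' : Fin N), HasSum
        (fun k => ((starRingEnd ℂ (b l i)) * (b l i')) * (X k i * Y k i'))
        (((starRingEnd ℂ (b l i)) * (b l i')) * (if i = i' then (d:ℂ) else 0)) :=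
      fun l i i' => (hD i i').mul_left _
    have h2 : HasSum (fun k => ∑ l : Fin L, ∑ i : Fin N, ∑ i' : Fin N,
        ((starRingEnd ℂ (b l i)) * (b l i')) * (X k i * Y k i'))
        (∑ l : Fin L, ∑ i : Fin N, ∑ i' : Fin N,
        ((starRingEnd ℂ (b l i)) * (b l i')) * (if i = i' then (d:ℂ) else 0)) := by
      apply hasSum_sum
      intro l _
      apply hasSum_sum
      intro i _
      apply hasSum_sum
      intro i' _
      exact h1 l i i'
    have h3 : (∑ l : Fin L, ∑ i : Fin N, ∑ i' : Fin N,
        ((starRingEnd ℂ (b l i)) * (b l i')) * (if i = i' then (d:ℂ) else 0))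
        = ((d * L : ℝ) : ℂ) := by
      have : ∀ l : Fin L, (∑ i : Fin N, ∑ i' : Fin N,
          ((starRingEnd ℂ (b l i)) * (b l i')) * (if i = i' then (d:ℂ) else 0)) = d := by
        intro l
        have : ∀ i : Fin N, (∑ i' : Fin N,
            ((starRingEnd ℂ (b l i)) * (b l i')) * (if i = i' then (d:ℂ) else 0))
            = (starRingEnd ℂ (b l i)) * (b l i) * d := by
          intro i
          rw [Finset.sum_eq_single i]
          · simp
          · intro i' _ hne
            simp [Ne.symm hne]
          · simp
        rw [Finset.sum_congr rfl (fun i _ => this i), ← Finset.sum_mul]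
        have hbl : (∑ i : Fin N, (starRingEnd ℂ (b l i)) * (b l i)) = 1 := by
          have h4 : (inner ℂ (b l) (b l) : ℂ) = 1 := by
            rw [inner_self_eq_norm_sq_to_K, hb.1 l]; norm_num
          rw [PiLp.inner_apply] at h4
          rw [← h4]; exact Finset.sum_congr rfl fun i _ => (RCLike.inner_apply' _ _).symm
        rw [hbl, one_mul]
      rw [Finset.sum_congr rfl (fun l _ => this l)]
      simp [mul_comm]
    rw [← h3]
    exact h2.congr_fun fun k => (hφ_expand k)
  -- vanishing on H
  have hφ_vanish : ∀ k ∈ H, φ k = 0 := by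
    intro k hk
    apply Finset.sum_eq_zero
    intro l _
    have hwk : w k ∈ W := Submodule.subset_span ⟨k, hk, rfl⟩
    have hbl : b l ∈ Wᗮ := (B l).2
    rw [(Submodule.mem_orthogonal W (b l)).mp hbl (w k) hwk, mul_zero]
  -- bound |φ k| ≤ N * F k
  have hφ_bound : ∀ k, ‖φ k‖ ≤ (N:ℝ) * F k := by
    intro k
    by_cases hk : k ∈ H
    · rw [hφ_vanish k hk, hF k, if_neg (not_le.mpr hk)]
      simp
    · have hku : a k ≤ u := not_lt.mp hk
      rw [hF k, if_pos hku]
      -- Cauchy-Schwarz + Bessel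
      have h1 : ‖φ k‖ ≤ ∑ l : Fin L,
          ‖(inner ℂ (b l) (xv k) : ℂ)‖ * ‖(inner ℂ (w k) (b l) : ℂ)‖ := by
        refine (norm_sum_le _ _).trans ?_
        apply Finset.sum_le_sum
        intro l _
        rw [norm_mul]
      have hcs : (∑ l : Fin L, ‖(inner ℂ (b l) (xv k) : ℂ)‖ * ‖(inner ℂ (w k) (b l) : ℂ)‖)
          ≤ ‖xv k‖ * ‖w k‖ := by
        have h2 := sum_mul_sq_le_sq_mul_sq Finset.univ
          (fun l : Fin L => ‖(inner ℂ (b l) (xv k) : ℂ)‖)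
          (fun l : Fin L => ‖(inner ℂ (w k) (b l) : ℂ)‖)
        have hbx : (∑ l : Fin L, ‖(inner ℂ (b l) (xv k) : ℂ)‖ ^ 2) ≤ ‖xv k‖ ^ 2 :=
          Orthonormal.sum_inner_products_le _ hb
        have hbw : (∑ l : Fin L, ‖(inner ℂ (w k) (b l) : ℂ)‖ ^ 2) ≤ ‖w k‖ ^ 2 := by
          have : ∀ l : Fin L, ‖(inner ℂ (w k) (b l) : ℂ)‖ = ‖(inner ℂ (b l) (w k) : ℂ)‖ :=
            fun l => norm_inner_symm _ _
          rw [Finset.sum_congr rfl (fun l _ => by rw [this l])]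
          exact Orthonormal.sum_inner_products_le _ hb
        have hnn : (0:ℝ) ≤ ∑ l : Fin L, ‖(inner ℂ (b l) (xv k) : ℂ)‖ * ‖(inner ℂ (w k) (b l) : ℂ)‖ :=
          Finset.sum_nonneg fun l _ => mul_nonneg (norm_nonneg _) (norm_nonneg _)
        have hsq : (∑ l : Fin L, ‖(inner ℂ (b l) (xv k) : ℂ)‖ * ‖(inner ℂ (w k) (b l) : ℂ)‖) ^ 2
            ≤ (‖xv k‖ * ‖w k‖) ^ 2 := by
          nlinarith [Finset.sum_nonneg (fun (l : Fin L) (_ : l ∈ Finset.univ) =>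
            sq_nonneg ‖(inner ℂ (b l) (xv k) : ℂ)‖),
            Finset.sum_nonneg (fun (l : Fin L) (_ : l ∈ Finset.univ) =>
            sq_nonneg ‖(inner ℂ (w k) (b l) : ℂ)‖)]
        exact (pow_le_pow_iff_left₀ hnn (mul_nonneg (norm_nonneg _) (norm_nonneg _))
          two_ne_zero).mp hsq
      have hxw : ‖xv k‖ * ‖w k‖ ≤ (N:ℝ) * a k := by
        have hx2 : ‖xv k‖ ^ 2 = ∑ i : Fin N, ‖X k i‖ ^ 2 := by
          rw [EuclideanSpace.norm_eq, Real.sq_sqrt (Finset.sum_nonneg fun i _ => sq_nonneg _)]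
          apply Finset.sum_congr rfl; intro i _
          rw [hxv_apply]
        have hw2 : ‖w k‖ ^ 2 = ∑ i : Fin N, ‖Y k i‖ ^ 2 := by
          rw [EuclideanSpace.norm_eq, Real.sq_sqrt (Finset.sum_nonneg fun i _ => sq_nonneg _)]
          apply Finset.sum_congr rfl; intro i _
          rw [hw_apply]
          simp [Complex.norm_conj]
        have key : (‖xv k‖ * ‖w k‖) ^ 2 ≤ ((N:ℝ) * a k) ^ 2 := by
          rw [mul_pow, hx2, hw2, Finset.sum_mul_sum]
          have : ∀ i ∈ Finset.univ (α := Fin N), ∀ i' ∈ Finset.univ (α := Fin N),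
              ‖X k i‖ ^ 2 * ‖Y k i'‖ ^ 2 ≤ a k ^ 2 := by
            intro i _ i' _
            rw [← mul_pow]
            exact pow_le_pow_left₀ (mul_nonneg (norm_nonneg _) (norm_nonneg _))
              (hXY k i i') 2
          calc (∑ i : Fin N, ∑ i' : Fin N, ‖X k i‖ ^ 2 * ‖Y k i'‖ ^ 2)
              ≤ ∑ _i : Fin N, ∑ _i' : Fin N, a k ^ 2 := by
                apply Finset.sum_le_sum; intro i hi
                apply Finset.sum_le_sum; intro i' hi'
                exact this i hi i' hi'
            _ = ((N:ℝ) * a k) ^ 2 := by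
                simp [Finset.sum_const]
                ring
        have h0 : 0 ≤ ‖xv k‖ * ‖w k‖ := mul_nonneg (norm_nonneg _) (norm_nonneg _)
        have h0' : 0 ≤ (N:ℝ) * a k := mul_nonneg (Nat.cast_nonneg _) (ha k)
        nlinarith
      calc ‖φ k‖ ≤ ‖xv k‖ * ‖w k‖ := h1.trans hcs
        _ ≤ (N:ℝ) * a k := hxw
  -- summability of ‖φ‖
  have hφ_abs_sum : Summable (fun k => ‖φ k‖) := by
    apply Summable.of_nonneg_of_le (fun k => norm_nonneg _) (fun k => hφ_bound k)
    exact hFs.mul_left _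
  -- rank bound
  have hrank : (N:ℝ) - hH.toFinset.card ≤ (L:ℝ) := by
    have h1 : finrank ℂ W + L = N := by
      rw [hL, Submodule.finrank_add_finrank_orthogonal]
      exact finrank_euclideanSpace_fin
    have h2 : finrank ℂ W ≤ hH.toFinset.card := by
      have himg : W = Submodule.span ℂ ((hH.toFinset.image w : Finset E) : Set E) := by
        congr 1
        rw [Finset.coe_image, Set.Finite.coe_toFinset]
      rw [himg]
      refine le_trans ?_ (Finset.card_image_le (f := w))
      have := finrank_span_finset_le_card (R := ℂ) (hH.toFinset.image w)
      rwa [Set.finrank] at this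
    have : (N:ℝ) ≤ (L:ℝ) + hH.toFinset.card := by
      have : (N:ℕ) ≤ L + hH.toFinset.card := by omega
      exact_mod_cast this
    linarith
  -- conclude
  have hmain : d * (L:ℝ) ≤ (N:ℝ) * ∑' k, F k := by
    have h1 : ((d * L : ℝ):ℂ) = ∑' k, φ k := hφ_sum.tsum_eq.symm
    have h2 : d * (L:ℝ) ≤ ‖∑' k, φ k‖ := by
      rw [← h1]
      rw [Complex.norm_real]
      exact le_abs_self _
    have h3 : ‖∑' k, φ k‖ ≤ ∑' k, ‖φ k‖ := norm_tsum_le_tsum_norm hφ_abs_sum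
    have h4 : (∑' k, ‖φ k‖) ≤ ∑' k, (N:ℝ) * F k :=
      Summable.tsum_le_tsum hφ_bound hφ_abs_sum (hFs.mul_left _)
    rw [tsum_mul_left] at h4
    linarith
  have : d * ((N:ℝ) - hH.toFinset.card) ≤ d * (L:ℝ) :=
    mul_le_mul_of_nonneg_left hrank hd
  linarith

private lemma chain_growth {m : ℕ} (Q : ℝ) (hQ1 : 1 ≤ Q) (ν : Fin m → ℝ) (hν : ∀ j, 0 < ν j)
    (hstep : ∀ j j' : Fin m, (j:ℕ) + 1 = (j':ℕ) → Q * ν j ≤ ν j') :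
    ∀ j j' : Fin m, (j:ℕ) < (j':ℕ) → Q * ν j ≤ ν j' := by
  have main : ∀ (cc : ℕ) (j j' : Fin m), (j':ℕ) = cc → (j:ℕ) < (j':ℕ) → Q * ν j ≤ ν j' := by
    intro cc
    induction cc with
    | zero => intro j j' h1 h2; omega
    | succ cc ih =>
      intro j j' h1 h2
      have hcm : cc < m := by omega
      have hv : ((⟨cc, hcm⟩ : Fin m) : ℕ) = cc := rfl
      have hstep' : Q * ν ⟨cc, hcm⟩ ≤ ν j' := hstep ⟨cc, hcm⟩ j' (by omega)
      by_cases hjc : (j:ℕ) = cc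
      · have : j = ⟨cc, hcm⟩ := Fin.ext (by omega)
        rw [this]; exact hstep'
      · have hlt : (j:ℕ) < cc := by omega
        have h3 := ih j ⟨cc, hcm⟩ rfl (by omega)
        have h4 : ν ⟨cc, hcm⟩ ≤ ν j' := by nlinarith [hν (⟨cc, hcm⟩ : Fin m)]
        linarith
  exact fun j j' h => main (j':ℕ) j j' rfl h

private lemma geom_sum_blocks {m : ℕ} (Q : ℝ) (hQ : 2 ≤ Q) (ν : Fin m → ℝ) (hν : ∀ j, 0 < ν j)
    (hQn : ∀ j j' : Fin m, (j:ℕ) < (j':ℕ) → Q * ν j ≤ ν j') :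
    ∀ j : Fin m, (∑ j' ∈ Finset.univ.filter (fun j' : Fin m => (j':ℕ) < (j:ℕ)), ν j')
      ≤ (2/Q) * ν j := by
  have hQ0 : (0:ℝ) < Q := by linarith
  have main : ∀ (cc : ℕ) (j : Fin m), (j:ℕ) = cc →
      (∑ j' ∈ Finset.univ.filter (fun j' : Fin m => (j':ℕ) < (j:ℕ)), ν j') ≤ (2/Q) * ν j := by
    intro cc
    induction cc with
    | zero =>
      intro j hj
      have he : (∑ j' ∈ Finset.univ.filter (fun j' : Fin m => (j':ℕ) < (j:ℕ)), ν j') = 0 := by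
        apply Finset.sum_eq_zero
        intro j' hj'
        rw [Finset.mem_filter] at hj'
        omega
      rw [he]
      have := hν j
      positivity
    | succ cc ih =>
      intro j hj
      have hcm : cc < m := by omega
      have hv : ((⟨cc, hcm⟩ : Fin m) : ℕ) = cc := rfl
      have hsplit : Finset.univ.filter (fun j' : Fin m => (j':ℕ) < (j:ℕ)) =
          insert (⟨cc, hcm⟩ : Fin m)
            (Finset.univ.filter (fun j' : Fin m => (j':ℕ) < cc)) := by
        ext j'
        simp only [Finset.mem_filter, Finset.mem_insert, Finset.mem_univ, true_and]
        constructor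
        · intro h
          by_cases hh : (j':ℕ) = cc
          · exact Or.inl (Fin.ext (by omega))
          · right; omega
        · intro h
          rcases h with h | h
          · have : (j':ℕ) = cc := by rw [h]
            omega
          · omega
      rw [hsplit, Finset.sum_insert (by simp)]
      have hQstep : Q * ν ⟨cc, hcm⟩ ≤ ν j := hQn ⟨cc, hcm⟩ j (by omega)
      have ih' := ih ⟨cc, hcm⟩ rfl
      have hih2 : (∑ j' ∈ Finset.univ.filter (fun j' : Fin m => (j':ℕ) < cc), ν j')
          ≤ (2/Q) * ν ⟨cc, hcm⟩ := by
        have : (Finset.univ.filter (fun j' : Fin m => (j':ℕ) < cc)) =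
            (Finset.univ.filter (fun j' : Fin m => (j':ℕ) < ((⟨cc, hcm⟩ : Fin m):ℕ))) := rfl
        rw [this]; exact ih'
      have h6 : 2 * ν ⟨cc, hcm⟩ ≤ (2/Q) * ν j := by
        have h7 : (2/Q) * (Q * ν ⟨cc, hcm⟩) ≤ (2/Q) * ν j :=
          mul_le_mul_of_nonneg_left hQstep (by positivity)
        have h8 : (2/Q) * (Q * ν ⟨cc, hcm⟩) = 2 * ν ⟨cc, hcm⟩ := by
          field_simp
        linarith
      have h5 : (2/Q) * ν ⟨cc, hcm⟩ ≤ ν ⟨cc, hcm⟩ := by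
        have h7 : (2:ℝ)/Q ≤ 1 := by rw [div_le_one hQ0]; linarith
        nlinarith [hν (⟨cc, hcm⟩ : Fin m)]
      linarith
  exact fun j => main (j:ℕ) j rfl

private lemma finite_ge_of_summable {A : ℕ → ℝ} (hA : Summable A) {ε : ℝ} (hε : 0 < ε) :
    {k | ε ≤ A k}.Finite := by
  have h2 : ∀ᶠ k in Filter.cofinite, A k < ε :=
    hA.tendsto_cofinite_zero.eventually_lt_const hε
  have h3 : {k | ¬ A k < ε}.Finite := Filter.eventually_cofinite.mp h2
  exact h3.subset (fun k hk => not_lt.mpr hk)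

private lemma le_rpow_mul_rpow {p v c : ℝ} (hp0 : 0 < p) (hp1 : p < 1)
    (hv : 0 ≤ v) (hvc : v ≤ c) : v ≤ v ^ p * c ^ (1 - p) := by
  rcases eq_or_lt_of_le hv with h0 | h0
  · rw [← h0, Real.zero_rpow (ne_of_gt hp0), zero_mul]
  · have h1 : v = v ^ p * v ^ (1 - p) := by
      rw [← Real.rpow_add' hv (by norm_num), add_sub_cancel, Real.rpow_one]
    conv_lhs => rw [h1]
    exact mul_le_mul_of_nonneg_left
      (Real.rpow_le_rpow hv hvc (by linarith : (0:ℝ) ≤ 1 - p)) (Real.rpow_nonneg hv _)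

set_option maxHeartbeats 3200000 in
/-- Lemma 5.2: if `0 < p < 1` and `n_{j+1} ≥ 4 (2m)^{1/(1-p)} n_j`, then the
block-diagonal matrix with `j`-th diagonal block `n_j^{-(1-p)/p} I_{n_j}` has
`‖·‖_{ℓ∞⊗_pℓ∞}^p ≥ m/2`. -/
theorem stmt6 (p : ℝ) (hp0 : 0 < p) (hp1 : p < 1) (m : ℕ) (hm : 0 < m)
    (n : Fin m → ℕ) (hn : ∀ j, 0 < n j)
    (hgrow : ∀ j k : Fin m, (j : ℕ) + 1 = (k : ℕ) →
      4 * ((2 * m : ℝ) ^ ((1 : ℝ) / (1 - p))) * n j ≤ n k) :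
    (m : ℝ) / 2 ≤
      sInf (tensorReprVals p fun x y : (j : Fin m) × Fin (n j) =>
        if x = y then ((((n x.1 : ℝ) ^ (-((1 - p) / p)) : ℝ) : ℂ)) else 0) ^ p := by
  classical
  have hp' : (0:ℝ) < 1 - p := by linarith
  have hm1 : (1:ℝ) ≤ m := by exact_mod_cast hm
  have h2m : (1:ℝ) < 2 * m := by linarith
  have h2m0 : (0:ℝ) < 2 * m := by linarith
  set ι := (j : Fin m) × Fin (n j) with hι
  set D : ι → ι → ℂ := fun x y =>
    if x = y then ((((n x.1 : ℝ) ^ (-((1 - p) / p)) : ℝ) : ℂ)) else 0 with hD_def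
  have hιne : Nonempty ι := ⟨⟨⟨0, hm⟩, ⟨0, hn ⟨0, hm⟩⟩⟩⟩
  -- Part 1: nonemptiness of the set of representation values
  have hne : (tensorReprVals p D).Nonempty := by
    set C := Fintype.card ι with hC
    set eqv : Fin C ≃ ι := (Fintype.equivFin ι).symm with heqv
    set xx : ℕ → ι → ℂ := fun k i =>
      if h : k < C then (if i = eqv ⟨k, h⟩ then D i i else 0) else 0 with hxx
    set yy : ℕ → ι → ℂ := fun k i =>
      if h : k < C then (if i = eqv ⟨k, h⟩ then 1 else 0) else 0 with hyy
    have hzero : ∀ k, C ≤ k → (supNorm (xx k) ^ p * supNorm (yy k) ^ p = 0) := by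
      intro k hk
      have hx0 : supNorm (xx k) = 0 := by
        have hfun : xx k = fun _ => 0 := by
          funext i; simp only [hxx]; rw [dif_neg (by omega)]
        rw [hfun]; unfold supNorm; simp
      rw [hx0, Real.zero_rpow (ne_of_gt hp0), zero_mul]
    refine ⟨(∑' n, supNorm (xx n) ^ p * supNorm (yy n) ^ p) ^ (1 / p), xx, yy, ?_, ?_, ?_, ?_, rfl⟩
    · intro k; exact (Set.finite_range _).bddAbove
    · intro k; exact (Set.finite_range _).bddAbove
    · exact summable_of_ne_finset_zero (s := Finset.range C)
        (fun k hk => hzero k (by simpa using hk))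
    · intro i i'
      by_cases hii : i = i'
      · subst hii
        set k₀ : Fin C := (Fintype.equivFin ι) i with hk₀
        have hlt : (k₀ : ℕ) < C := k₀.isLt
        have hei : i = eqv ⟨(k₀ : ℕ), hlt⟩ := by
          simp only [heqv, Fin.eta, hk₀, Equiv.symm_apply_apply]
        have hvan : ∀ (k : ℕ), k ≠ (k₀ : ℕ) → xx k i * yy k i = 0 := by
          intro k hk
          by_cases hkC : k < C
          · have hne2 : ¬ (i = eqv ⟨k, hkC⟩) := by
              intro hcon
              apply hk
              have h3 : (Fintype.equivFin ι) i = ⟨k, hkC⟩ := by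
                rw [hcon, heqv]; simp
              have h4 := congrArg Fin.val (hk₀.symm.trans h3)
              rw [hk₀]
              exact h4.symm.trans rfl
            simp only [hxx, hyy]
            rw [dif_pos hkC, dif_pos hkC, if_neg hne2, zero_mul]
          · simp only [hxx]
            rw [dif_neg hkC, zero_mul]
        have h := hasSum_single (f := fun k => xx k i * yy k i) ((k₀ : ℕ)) hvan
        have hval : xx (k₀ : ℕ) i * yy (k₀ : ℕ) i = D i i := by
          simp only [hxx, hyy]
          rw [dif_pos hlt, dif_pos hlt, if_pos hei, if_pos hei, mul_one]
        convert h using 1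
        simpa using hval.symm
      · have hall : ∀ (k:ℕ), xx k i * yy k i' = 0 := by
          intro k
          by_cases hkC : k < C
          · simp only [hxx, hyy]
            rw [dif_pos hkC, dif_pos hkC]
            by_cases h1 : i = eqv ⟨k, hkC⟩
            · have h2 : ¬ (i' = eqv ⟨k, hkC⟩) := fun h2 => hii (h1.trans h2.symm)
              rw [if_neg h2, mul_zero]
            · rw [if_neg h1, zero_mul]
          · simp only [hxx]; rw [dif_neg hkC, zero_mul]
        rw [show D i i' = 0 by rw [hD_def]; exact if_neg hii]
        have : (fun k => xx k i * yy k i') = fun _ => 0 := funext hall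
        rw [this]
        exact hasSum_zero
  -- Part 2: every element of the set is at least (m/2)^(1/p)
  have hlow : ∀ c ∈ tensorReprVals p D, ((m:ℝ)/2) ^ ((1:ℝ)/p) ≤ c := by
    rintro c ⟨x, y, hbx, hby, hsumA, hrep, hc⟩
    set A : ℕ → ℝ := fun k => supNorm (x k) ^ p * supNorm (y k) ^ p with hA_def
    set a : ℕ → ℝ := fun k => supNorm (x k) * supNorm (y k) with ha_def
    have hxle : ∀ (k : ℕ) (i : ι), ‖x k i‖ ≤ supNorm (x k) := fun k i =>
      le_ciSup (hbx k) i
    have hyle : ∀ (k : ℕ) (i : ι), ‖y k i‖ ≤ supNorm (y k) := fun k i =>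
      le_ciSup (hby k) i
    obtain ⟨i₀⟩ := hιne
    have hsx0 : ∀ k, 0 ≤ supNorm (x k) := fun k => (norm_nonneg _).trans (hxle k i₀)
    have hsy0 : ∀ k, 0 ≤ supNorm (y k) := fun k => (norm_nonneg _).trans (hyle k i₀)
    have ha0 : ∀ k, 0 ≤ a k := fun k => mul_nonneg (hsx0 k) (hsy0 k)
    have hA_eq : ∀ k, A k = a k ^ p := fun k => (Real.mul_rpow (hsx0 k) (hsy0 k)).symm
    have hA0 : ∀ k, 0 ≤ A k := fun k => (hA_eq k) ▸ Real.rpow_nonneg (ha0 k) p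
    have hAsum : Summable A := hsumA
    set s := ∑' k, A k with hs_def
    have hs0 : 0 ≤ s := tsum_nonneg hA0
    have key : (m:ℝ)/2 ≤ s := by
      by_contra hcon
      push_neg at hcon
      -- thresholds
      set Q : ℝ := 4 * ((2 * m : ℝ) ^ ((1:ℝ)/(1-p))) with hQ_def
      have h2mr1 : (1:ℝ) ≤ (2*m:ℝ) ^ ((1:ℝ)/(1-p)) :=
        Real.one_le_rpow (le_of_lt h2m) (by positivity)
      have hQ4 : (4:ℝ) ≤ Q := by nlinarith
      have hQ0 : (0:ℝ) < Q := by linarith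
      have hνr : ∀ j : Fin m, (0:ℝ) < ((n j : ℕ) : ℝ) := fun j => by exact_mod_cast hn j
      set d : Fin m → ℝ := fun j => ((n j : ℕ) : ℝ) ^ (-((1-p)/p)) with hd2_def
      set u : Fin m → ℝ := fun j => ((n j : ℕ) : ℝ) ^ (-(1/p)) with hu_def
      set κ : ℝ := (2*m:ℝ) ^ (-(1/(1-p))) with hκ_def
      set t : Fin m → ℝ := fun j => κ * u j with ht_def
      have hκ0 : 0 < κ := Real.rpow_pos_of_pos h2m0 _
      have hκ1 : κ < 1 := Real.rpow_lt_one_of_one_lt_of_neg h2m (by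
        rw [neg_lt, neg_zero]; positivity)
      have hd0 : ∀ j, 0 < d j := fun j => Real.rpow_pos_of_pos (hνr j) _
      have hu0 : ∀ j, 0 < u j := fun j => Real.rpow_pos_of_pos (hνr j) _
      have ht0 : ∀ j, 0 < t j := fun j => mul_pos hκ0 (hu0 j)
      have htu : ∀ j, t j < u j := fun j => by
        have := mul_lt_of_lt_one_left (hu0 j) hκ1
        simpa [ht_def] using this
      -- rpow identities
      have hu1p : ∀ j, u j ^ (1-p) = d j := by
        intro j
        simp only [hu_def, hd2_def]
        rw [← Real.rpow_mul (le_of_lt (hνr j))]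
        congr 1
        field_simp
      have hup : ∀ j, u j ^ p = (((n j : ℕ) : ℝ))⁻¹ := by
        intro j
        simp only [hu_def]
        rw [← Real.rpow_mul (le_of_lt (hνr j)), show -(1/p) * p = -1 by field_simp,
          Real.rpow_neg_one]
      have hκ1p : κ ^ (1-p) = (2*(m:ℝ))⁻¹ := by
        simp only [hκ_def]
        rw [← Real.rpow_mul (le_of_lt h2m0), show -(1/(1-p))*(1-p) = -1 by field_simp,
          Real.rpow_neg_one]
      have ht1p : ∀ j, t j ^ (1-p) = d j / (2*m) := by
        intro j
        simp only [ht_def]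
        rw [Real.mul_rpow hκ0.le (hu0 j).le, hκ1p, hu1p]
        ring
      have hκp : κ ^ p = ((2*m:ℝ) ^ (p/(1-p)))⁻¹ := by
        simp only [hκ_def]
        rw [← Real.rpow_mul (le_of_lt h2m0), show -(1/(1-p))*p = -(p/(1-p)) by ring,
          Real.rpow_neg (le_of_lt h2m0)]
      have htp : ∀ j, t j ^ p = ((2*m:ℝ) ^ (p/(1-p)))⁻¹ * (((n j : ℕ) : ℝ))⁻¹ := by
        intro j
        simp only [ht_def]
        rw [Real.mul_rpow hκ0.le (hu0 j).le, hκp, hup]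
      have hee1 : (1:ℝ) ≤ (2*m:ℝ) ^ (p/(1-p)) :=
        Real.one_le_rpow (le_of_lt h2m) (by positivity)
      -- chain growth and geometric sums
      have hQn : ∀ (j j' : Fin m), (j:ℕ) < (j':ℕ) → Q * ((n j : ℕ) : ℝ) ≤ ((n j' : ℕ) : ℝ) := by
        apply chain_growth Q (by linarith) (fun j => ((n j : ℕ) : ℝ)) hνr
        intro j j' hjj
        exact hgrow j j' hjj
      have hgeo : ∀ j : Fin m,
          (∑ j' ∈ Finset.univ.filter (fun j' : Fin m => (j':ℕ) < (j:ℕ)), ((n j' : ℕ) : ℝ))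
            ≤ (2/Q) * ((n j : ℕ) : ℝ) :=
        geom_sum_blocks Q (by linarith) (fun j => ((n j : ℕ) : ℝ)) hνr hQn
      -- u j' ≤ t j for j < j'
      have anti : ∀ {X Y : ℝ}, 0 < X → X ≤ Y → Y ^ (-(1/p)) ≤ X ^ (-(1/p)) := by
        intro X Y hX hXY
        rw [Real.rpow_neg hX.le, Real.rpow_neg (le_trans hX.le hXY)]
        exact inv_anti₀ (Real.rpow_pos_of_pos hX _)
          (Real.rpow_le_rpow hX.le hXY (by positivity))
      have hut : ∀ (j j' : Fin m), (j:ℕ) < (j':ℕ) → u j' ≤ t j := by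
        intro j j' hjj
        have hcleQ : (2*m:ℝ) ^ (p/(1-p)) ≤ Q := by
          have h1 : (2*m:ℝ) ^ (p/(1-p)) ≤ (2*m:ℝ) ^ ((1:ℝ)/(1-p)) := by
            apply Real.rpow_le_rpow_of_exponent_le (le_of_lt h2m)
            rw [div_le_div_iff₀ hp' hp']
            nlinarith
          nlinarith [h2mr1]
        have hc2 : (2*m:ℝ) ^ (p/(1-p)) * ((n j : ℕ) : ℝ) ≤ ((n j' : ℕ) : ℝ) :=
          le_trans (mul_le_mul_of_nonneg_right hcleQ (hνr j).le) (hQn j j' hjj)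
        have h3 : u j' ≤ ((2*m:ℝ) ^ (p/(1-p)) * ((n j : ℕ) : ℝ)) ^ (-(1/p)) := by
          simp only [hu_def]
          exact anti (mul_pos (Real.rpow_pos_of_pos h2m0 _) (hνr j)) hc2
        have h4 : ((2*m:ℝ) ^ (p/(1-p)) * ((n j : ℕ) : ℝ)) ^ (-(1/p)) = t j := by
          rw [Real.mul_rpow (by positivity) (hνr j).le]
          simp only [ht_def, hκ_def, hu_def]
          congr 1
          rw [← Real.rpow_mul (le_of_lt h2m0)]
          congr 1
          field_simp
        rw [h4] at h3
        exact h3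
      -- the sets M and G
      set M : Fin m → Set ℕ := fun j => {k | t j < a k ∧ a k ≤ u j} with hM_def
      set G : Fin m → Set ℕ := fun j =>
        {k | u j < a k ∧ ∀ j' : Fin m, (j':ℕ) < (j:ℕ) → a k ≤ t j'} with hG_def
      have hMmem : ∀ j k, k ∈ M j ↔ (t j < a k ∧ a k ≤ u j) := fun j k => Iff.rfl
      have hGmem : ∀ j k, k ∈ G j ↔
          (u j < a k ∧ ∀ j' : Fin m, (j':ℕ) < (j:ℕ) → a k ≤ t j') := fun j k => Iff.rfl
      have hfin : ∀ ε : ℝ, 0 < ε → {k | ε < a k}.Finite := by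
        intro ε hε
        refine (finite_ge_of_summable hAsum (ε := ε ^ p)
          (Real.rpow_pos_of_pos hε p)).subset ?_
        intro k hk
        have hk' : ε < a k := hk
        have h1 := Real.rpow_le_rpow hε.le (le_of_lt hk') hp0.le
        show ε ^ p ≤ A k
        rw [hA_eq k]
        exact h1
      have hMfin : ∀ j, (M j).Finite := fun j =>
        (hfin (t j) (ht0 j)).subset (fun k hk => ((hMmem j k).mp hk).1)
      have hGfin : ∀ j, (G j).Finite := fun j =>
        (hfin (u j) (hu0 j)).subset (fun k hk => ((hGmem j k).mp hk).1)
      have hHfin : ∀ j, {k | u j < a k}.Finite := fun j => hfin (u j) (hu0 j)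
      set sM : Fin m → ℝ := fun j => ∑' k, Set.indicator (M j) A k with hsM_def
      set sG : Fin m → ℝ := fun j => ∑' k, Set.indicator (G j) A k with hsG_def
      have hind0 : ∀ (S : Set ℕ) (k : ℕ), 0 ≤ Set.indicator S A k := fun S k =>
        Set.indicator_apply_nonneg (fun _ => hA0 k)
      have hind_le : ∀ (S : Set ℕ) (k : ℕ), Set.indicator S A k ≤ A k := by
        intro S k
        by_cases h : k ∈ S
        · rw [Set.indicator_of_mem h]
        · rw [Set.indicator_of_notMem h]; exact hA0 k
      have hind_sum : ∀ (S : Set ℕ), Summable (Set.indicator S A) := fun S =>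
        hAsum.indicator S
      have hsM_le : ∀ j, sM j ≤ s := fun j => Summable.tsum_le_tsum (hind_le (M j)) (hind_sum _) hAsum
      have hsG_le : ∀ j, sG j ≤ s := fun j => Summable.tsum_le_tsum (hind_le (G j)) (hind_sum _) hAsum
      have hsM0 : ∀ j, 0 ≤ sM j := fun j => tsum_nonneg (hind0 (M j))
      have hsG0 : ∀ j, 0 ≤ sG j := fun j => tsum_nonneg (hind0 (G j))
      -- cardinality bounds
      have cardS : ∀ (S : Set ℕ) (hS : S.Finite) (ε : ℝ), (∀ k ∈ S, ε ≤ A k) →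
          (hS.toFinset.card : ℝ) * ε ≤ ∑' k, Set.indicator S A k := by
        intro S hS ε hε
        have h1 : ∑ k ∈ hS.toFinset, ε ≤ ∑ k ∈ hS.toFinset, Set.indicator S A k := by
          apply Finset.sum_le_sum
          intro k hk
          have hkS := hS.mem_toFinset.mp hk
          rw [Set.indicator_of_mem hkS]
          exact hε k hkS
        have h2 : ∑ k ∈ hS.toFinset, Set.indicator S A k ≤ ∑' k, Set.indicator S A k :=
          Summable.sum_le_tsum _ (fun k _ => hind0 S k) (hind_sum S)
        have h3 : (∑ _k ∈ hS.toFinset, ε) = (hS.toFinset.card : ℝ) * ε := by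
          rw [Finset.sum_const, nsmul_eq_mul]
        linarith
      have cardM : ∀ j, ((hMfin j).toFinset.card : ℝ) * (t j ^ p) ≤ sM j := by
        intro j
        apply cardS
        intro k hk
        rw [hA_eq k]
        exact Real.rpow_le_rpow (ht0 j).le (le_of_lt ((hMmem j k).mp hk).1) hp0.le
      have cardG : ∀ j, ((hGfin j).toFinset.card : ℝ) * (u j ^ p) ≤ sG j := by
        intro j
        apply cardS
        intro k hk
        rw [hA_eq k]
        exact Real.rpow_le_rpow (hu0 j).le (le_of_lt ((hGmem j k).mp hk).1) hp0.le
      have hMreal : ∀ j, ((hMfin j).toFinset.card : ℝ)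
          ≤ sM j * ((2*m:ℝ)^(p/(1-p)) * ((n j : ℕ) : ℝ)) := by
        intro j
        have hprod : t j ^ p * ((2*m:ℝ)^(p/(1-p)) * ((n j : ℕ) : ℝ)) = 1 := by
          rw [htp j]
          have h1 : ((2*m:ℝ)^(p/(1-p))) ≠ 0 := by positivity
          have h2 : (((n j : ℕ) : ℝ)) ≠ 0 := (hνr j).ne'
          field_simp
        have hpos : (0:ℝ) < (2*m:ℝ)^(p/(1-p)) * ((n j : ℕ) : ℝ) :=
          mul_pos (Real.rpow_pos_of_pos h2m0 _) (hνr j)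
        have h2 := mul_le_mul_of_nonneg_right (cardM j) hpos.le
        rw [mul_assoc, hprod, mul_one] at h2
        exact h2
      have hGreal : ∀ j, ((hGfin j).toFinset.card : ℝ) ≤ sG j * ((n j : ℕ) : ℝ) := by
        intro j
        have hprod : u j ^ p * ((n j : ℕ) : ℝ) = 1 := by
          rw [hup j]
          exact inv_mul_cancel₀ (hνr j).ne'
        have h2 := mul_le_mul_of_nonneg_right (cardG j) (hνr j).le
        rw [mul_assoc, hprod, mul_one] at h2
        exact h2
      -- coverage
      have hcover : ∀ (j : Fin m) (k : ℕ), u j < a k →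
          k ∈ G j ∨ ∃ j' : Fin m, (j':ℕ) < (j:ℕ) ∧ (k ∈ M j' ∨ k ∈ G j') := by
        intro j k hk
        by_cases hall : ∀ j' : Fin m, (j':ℕ) < (j:ℕ) → a k ≤ t j'
        · exact Or.inl ((hGmem j k).mpr ⟨hk, hall⟩)
        · push_neg at hall
          obtain ⟨j₁, hj₁, hj₁t⟩ := hall
          have hSne : (Finset.univ.filter
              (fun j' : Fin m => (j':ℕ) < (j:ℕ) ∧ t j' < a k)).Nonempty :=
            ⟨j₁, Finset.mem_filter.mpr ⟨Finset.mem_univ _, hj₁, hj₁t⟩⟩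
          obtain ⟨j₀, hj₀S, hj₀min⟩ := Finset.exists_min_image _ (fun j' : Fin m => (j':ℕ)) hSne
          have hj₀lt : (j₀:ℕ) < (j:ℕ) := (Finset.mem_filter.mp hj₀S).2.1
          have hj₀t : t j₀ < a k := (Finset.mem_filter.mp hj₀S).2.2
          have hless : ∀ j'' : Fin m, (j'':ℕ) < (j₀:ℕ) → a k ≤ t j'' := by
            intro j'' h''
            by_contra hcc
            push_neg at hcc
            have hmem : j'' ∈ Finset.univ.filter
                (fun j' : Fin m => (j':ℕ) < (j:ℕ) ∧ t j' < a k) :=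
              Finset.mem_filter.mpr ⟨Finset.mem_univ _, lt_trans h'' hj₀lt, hcc⟩
            have := hj₀min j'' hmem
            omega
          by_cases hMu : a k ≤ u j₀
          · exact Or.inr ⟨j₀, hj₀lt, Or.inl ((hMmem j₀ k).mpr ⟨hj₀t, hMu⟩)⟩
          · exact Or.inr ⟨j₀, hj₀lt, Or.inr ((hGmem j₀ k).mpr ⟨not_le.mp hMu, hless⟩)⟩
      -- count bound
      have countb : ∀ j : Fin m,
          (((hHfin j).toFinset.card : ℕ) : ℝ) ≤ (sG j + 1/4) * ((n j : ℕ) : ℝ) := by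
        intro j
        have hsub : (hHfin j).toFinset ⊆ (hGfin j).toFinset ∪
            (Finset.univ.filter (fun j' : Fin m => (j':ℕ) < (j:ℕ))).biUnion
              (fun j' => (hMfin j').toFinset ∪ (hGfin j').toFinset) := by
          intro k hk
          have hk' : u j < a k := by
            have := (hHfin j).mem_toFinset.mp hk
            exact this
          rcases hcover j k hk' with h | ⟨j', hj', h⟩
          · exact Finset.mem_union_left _ ((hGfin j).mem_toFinset.mpr h)
          · apply Finset.mem_union_right
            apply Finset.mem_biUnion.mpr
            refine ⟨j', Finset.mem_filter.mpr ⟨Finset.mem_univ _, hj'⟩, ?_⟩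
            rcases h with h | h
            · exact Finset.mem_union_left _ ((hMfin j').mem_toFinset.mpr h)
            · exact Finset.mem_union_right _ ((hGfin j').mem_toFinset.mpr h)
        have hcard1 : ((hHfin j).toFinset.card : ℝ) ≤ ((hGfin j).toFinset.card : ℝ)
            + ∑ j' ∈ Finset.univ.filter (fun j' : Fin m => (j':ℕ) < (j:ℕ)),
                (((hMfin j').toFinset.card : ℝ) + ((hGfin j').toFinset.card : ℝ)) := by
          have h1 := Finset.card_le_card hsub
          have h2 := Finset.card_union_le (hGfin j).toFinset
            ((Finset.univ.filter (fun j' : Fin m => (j':ℕ) < (j:ℕ))).biUnion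
              (fun j' => (hMfin j').toFinset ∪ (hGfin j').toFinset))
          have h3 := Finset.card_biUnion_le
            (s := Finset.univ.filter (fun j' : Fin m => (j':ℕ) < (j:ℕ)))
            (t := fun j' => (hMfin j').toFinset ∪ (hGfin j').toFinset)
          have h5 : ∀ j' ∈ Finset.univ.filter (fun j' : Fin m => (j':ℕ) < (j:ℕ)),
              ((hMfin j').toFinset ∪ (hGfin j').toFinset).card
                ≤ (hMfin j').toFinset.card + (hGfin j').toFinset.card :=
            fun j' _ => Finset.card_union_le _ _
          have h6 := Finset.sum_le_sum h5
          have h7 : (hHfin j).toFinset.card ≤ (hGfin j).toFinset.card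
              + ∑ j' ∈ Finset.univ.filter (fun j' : Fin m => (j':ℕ) < (j:ℕ)),
                  ((hMfin j').toFinset.card + (hGfin j').toFinset.card) := by
            omega
          calc ((hHfin j).toFinset.card : ℝ)
              ≤ (((hGfin j).toFinset.card
                + ∑ j' ∈ Finset.univ.filter (fun j' : Fin m => (j':ℕ) < (j:ℕ)),
                    ((hMfin j').toFinset.card + (hGfin j').toFinset.card) : ℕ) : ℝ) := by
                exact_mod_cast h7
            _ = ((hGfin j).toFinset.card : ℝ)
                + ∑ j' ∈ Finset.univ.filter (fun j' : Fin m => (j':ℕ) < (j:ℕ)),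
                    (((hMfin j').toFinset.card : ℝ) + ((hGfin j').toFinset.card : ℝ)) := by
                push_cast
                ring
        have hterm : ∀ j' ∈ Finset.univ.filter (fun j' : Fin m => (j':ℕ) < (j:ℕ)),
            ((hMfin j').toFinset.card : ℝ) + ((hGfin j').toFinset.card : ℝ)
              ≤ ((2*m:ℝ)^(p/(1-p)) * m) * ((n j' : ℕ) : ℝ) := by
          intro j' _
          have h1 := hMreal j'
          have h2 := hGreal j'
          have h3 : sM j' ≤ (m:ℝ)/2 := le_trans (hsM_le j') (le_of_lt hcon)
          have h4 : sG j' ≤ (m:ℝ)/2 := le_trans (hsG_le j') (le_of_lt hcon)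
          have hν' := hνr j'
          have hE0 : (0:ℝ) < (2*m:ℝ)^(p/(1-p)) := Real.rpow_pos_of_pos h2m0 _
          have s1 : sM j' * ((2*m:ℝ)^(p/(1-p)) * ((n j' : ℕ) : ℝ))
              ≤ ((m:ℝ)/2) * ((2*m:ℝ)^(p/(1-p)) * ((n j' : ℕ) : ℝ)) :=
            mul_le_mul_of_nonneg_right h3 (le_of_lt (mul_pos hE0 hν'))
          have s2 : sG j' * ((n j' : ℕ) : ℝ) ≤ ((m:ℝ)/2) * ((n j' : ℕ) : ℝ) :=
            mul_le_mul_of_nonneg_right h4 hν'.le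
          have s3 : ((m:ℝ)/2) * ((n j' : ℕ) : ℝ)
              ≤ ((m:ℝ)/2) * ((2*m:ℝ)^(p/(1-p)) * ((n j' : ℕ) : ℝ)) := by
            have h5 : ((n j' : ℕ) : ℝ) ≤ (2*m:ℝ)^(p/(1-p)) * ((n j' : ℕ) : ℝ) :=
              le_mul_of_one_le_left hν'.le hee1
            apply mul_le_mul_of_nonneg_left h5
            linarith
          have s4 : ((m:ℝ)/2) * ((2*m:ℝ)^(p/(1-p)) * ((n j' : ℕ) : ℝ))
              + ((m:ℝ)/2) * ((2*m:ℝ)^(p/(1-p)) * ((n j' : ℕ) : ℝ))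
              = ((2*m:ℝ)^(p/(1-p)) * m) * ((n j' : ℕ) : ℝ) := by ring
          linarith
        have hsum2 : (∑ j' ∈ Finset.univ.filter (fun j' : Fin m => (j':ℕ) < (j:ℕ)),
            (((hMfin j').toFinset.card : ℝ) + ((hGfin j').toFinset.card : ℝ)))
              ≤ ((2*m:ℝ)^(p/(1-p)) * m)
                * ∑ j' ∈ Finset.univ.filter (fun j' : Fin m => (j':ℕ) < (j:ℕ)),
                    ((n j' : ℕ) : ℝ) := by
          rw [Finset.mul_sum]
          apply Finset.sum_le_sum
          intro j' hj'
          exact hterm j' hj'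
        have hgeo' := hgeo j
        have hE0 : (0:ℝ) < (2*m:ℝ)^(p/(1-p)) * m := by positivity
        have hquarter : ((2*m:ℝ)^(p/(1-p)) * m) * ((2/Q) * ((n j : ℕ) : ℝ))
            = (1/4) * ((n j : ℕ) : ℝ) := by
          have e2 : p/(1-p) + 1 = 1/(1-p) := by field_simp; ring
          have hZ : (2*m:ℝ)^(p/(1-p)) * (2*m) = (2*m:ℝ)^((1:ℝ)/(1-p)) := by
            rw [← e2, Real.rpow_add h2m0, Real.rpow_one]
          have hZ0 : (0:ℝ) < (2*m:ℝ)^((1:ℝ)/(1-p)) := Real.rpow_pos_of_pos h2m0 _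
          rw [hQ_def]
          rw [show ((2*m:ℝ)^(p/(1-p)) * m) * ((2/(4 * (2*m:ℝ)^((1:ℝ)/(1-p)))) * ((n j : ℕ) : ℝ))
              = ((2*m:ℝ)^(p/(1-p)) * (2*m)) * (((n j : ℕ) : ℝ)/(4 * (2*m:ℝ)^((1:ℝ)/(1-p))))
              by ring]
          rw [hZ]
          field_simp
        have hfinal2 : ((2*m:ℝ)^(p/(1-p)) * m)
            * (∑ j' ∈ Finset.univ.filter (fun j' : Fin m => (j':ℕ) < (j:ℕ)),
                ((n j' : ℕ) : ℝ)) ≤ (1/4) * ((n j : ℕ) : ℝ) := by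
          rw [← hquarter]
          exact mul_le_mul_of_nonneg_left hgeo' hE0.le
        have hGr := hGreal j
        have hfinal3 : ((hHfin j).toFinset.card : ℝ)
            ≤ sG j * ((n j : ℕ) : ℝ) + (1/4) * ((n j : ℕ) : ℝ) := by
          linarith
        have hexp2 : (sG j + 1/4) * ((n j : ℕ) : ℝ)
            = sG j * ((n j : ℕ) : ℝ) + (1/4) * ((n j : ℕ) : ℝ) := by ring
        rw [hexp2]
        exact hfinal3
      -- per-block inequality from the pairing lemma
      have block : ∀ j : Fin m, ((n j : ℕ) : ℝ) - (((hHfin j).toFinset.card : ℕ) : ℝ)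
          ≤ ((n j : ℕ) : ℝ) * (s/(2*m) + sM j) := by
        intro j
        set F : ℕ → ℝ := fun k => if a k ≤ u j then a k else 0 with hF_def
        have hF0 : ∀ k, 0 ≤ F k := by
          intro k
          simp only [hF_def]
          split_ifs
          · exact ha0 k
          · exact le_refl 0
        have hFleA : ∀ k, F k ≤ u j ^ (1-p) * A k := by
          intro k
          simp only [hF_def]
          split_ifs with h
          · have h1 := le_rpow_mul_rpow hp0 hp1 (ha0 k) h
            rw [hA_eq k, mul_comm]
            exact h1
          · exact mul_nonneg (Real.rpow_nonneg (hu0 j).le _) (hA0 k)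
        have hFs : Summable F := Summable.of_nonneg_of_le hF0 hFleA (hAsum.mul_left _)
        have hXY : ∀ (k : ℕ) (i i' : Fin (n j)),
            ‖x k ⟨j, i⟩‖ * ‖y k ⟨j, i'⟩‖ ≤ a k := by
          intro k i i'
          exact mul_le_mul (hxle k _) (hyle k _) (norm_nonneg _) (hsx0 k)
        have hDj : ∀ i i' : Fin (n j), HasSum (fun k => x k ⟨j, i⟩ * y k ⟨j, i'⟩)
            (if i = i' then ((d j : ℝ) : ℂ) else 0) := by
          intro i i'
          have h := hrep ⟨j, i⟩ ⟨j, i'⟩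
          have hval : D ⟨j, i⟩ ⟨j, i'⟩ = (if i = i' then ((d j : ℝ) : ℂ) else 0) := by
            by_cases hii : i = i'
            · subst hii
              rw [if_pos rfl]
              show (if _ = _ then _ else _) = _
              rw [if_pos rfl]
            · have hne2 : (⟨j, i⟩ : ι) ≠ ⟨j, i'⟩ := by
                intro hcon2
                exact hii (eq_of_heq (Sigma.mk.inj_iff.mp hcon2).2)
              rw [if_neg hii]
              show (if _ then _ else _) = _
              rw [if_neg hne2]
          rw [hval] at h
          exact h
        have R := core_pairing (n j) (d j) (u j) (hd0 j).le
          (fun k i => x k ⟨j, i⟩) (fun k i => y k ⟨j, i⟩) a ha0 hXY hDj (hHfin j) F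
          (fun k => rfl) hFs
        have htsumF : (∑' k, F k) ≤ t j ^ (1-p) * s + u j ^ (1-p) * sM j := by
          have hpt : ∀ k, F k ≤ t j ^ (1-p) * A k
              + u j ^ (1-p) * Set.indicator (M j) A k := by
            intro k
            have hAk : A k = a k ^ p := hA_eq k
            rcases le_or_gt (a k) (t j) with h | h
            · have hFk : F k = a k := by
                simp only [hF_def]
                exact if_pos (le_trans h (htu j).le)
              have h1 : a k ≤ a k ^ p * t j ^ (1-p) := le_rpow_mul_rpow hp0 hp1 (ha0 k) h
              have h2 : 0 ≤ u j ^ (1-p) * Set.indicator (M j) A k :=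
                mul_nonneg (Real.rpow_nonneg (hu0 j).le _) (hind0 (M j) k)
              rw [hFk, hAk]
              nlinarith [h1, h2]
            · rcases le_or_gt (a k) (u j) with h2 | h2
              · have hFk : F k = a k := by
                  simp only [hF_def]
                  exact if_pos h2
                have hkM : k ∈ M j := (hMmem j k).mpr ⟨h, h2⟩
                have h1 : a k ≤ a k ^ p * u j ^ (1-p) := le_rpow_mul_rpow hp0 hp1 (ha0 k) h2
                have h3 : 0 ≤ t j ^ (1-p) * A k :=
                  mul_nonneg (Real.rpow_nonneg (ht0 j).le _) (hA0 k)
                rw [hFk, Set.indicator_of_mem hkM, hAk]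
                rw [hAk] at h3
                nlinarith [h1, h3]
              · have hFk : F k = 0 := by
                  simp only [hF_def]
                  exact if_neg (not_le.mpr h2)
                rw [hFk]
                exact add_nonneg (mul_nonneg (Real.rpow_nonneg (ht0 j).le _) (hA0 k))
                  (mul_nonneg (Real.rpow_nonneg (hu0 j).le _) (hind0 (M j) k))
          have hsum2 : Summable (fun k => t j ^ (1-p) * A k
              + u j ^ (1-p) * Set.indicator (M j) A k) :=
            (hAsum.mul_left _).add ((hind_sum (M j)).mul_left _)
          have h4 := Summable.tsum_le_tsum hpt hFs hsum2
          rwa [Summable.tsum_add (hAsum.mul_left _) ((hind_sum (M j)).mul_left _),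
            tsum_mul_left, tsum_mul_left] at h4
        have e1 : ((n j : ℕ) : ℝ) * (t j ^ (1-p) * s + u j ^ (1-p) * sM j)
            = d j * (((n j : ℕ) : ℝ) * (s/(2*m) + sM j)) := by
          rw [ht1p j, hu1p j]
          field_simp
        have h5 : d j * (((n j : ℕ) : ℝ) - (((hHfin j).toFinset.card : ℕ) : ℝ))
            ≤ d j * (((n j : ℕ) : ℝ) * (s/(2*m) + sM j)) := by
          calc d j * (((n j : ℕ) : ℝ) - (((hHfin j).toFinset.card : ℕ) : ℝ))
              ≤ ((n j : ℕ) : ℝ) * (∑' k, F k) := R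
            _ ≤ ((n j : ℕ) : ℝ) * (t j ^ (1-p) * s + u j ^ (1-p) * sM j) :=
                mul_le_mul_of_nonneg_left htsumF (hνr j).le
            _ = d j * (((n j : ℕ) : ℝ) * (s/(2*m) + sM j)) := e1
        exact le_of_mul_le_mul_left h5 (hd0 j)
      -- combine per block
      have perblock : ∀ j : Fin m, 1/2 ≤ sM j + sG j := by
        intro j
        have h1 := block j
        have h2 := countb j
        have hν' := hνr j
        have h3 : s/(2*m) ≤ 1/4 := by
          rw [div_le_iff₀ h2m0]
          linarith
        have h4 : ((n j : ℕ) : ℝ) ≤ ((n j : ℕ) : ℝ) * (s/(2*m) + sM j)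
            + (sG j + 1/4) * ((n j : ℕ) : ℝ) := by linarith
        have h5 : ((n j : ℕ) : ℝ) * 1 ≤ ((n j : ℕ) : ℝ) * (s/(2*m) + sM j + sG j + 1/4) := by
          calc ((n j : ℕ) : ℝ) * 1 = ((n j : ℕ) : ℝ) := mul_one _
            _ ≤ ((n j : ℕ) : ℝ) * (s/(2*m) + sM j) + (sG j + 1/4) * ((n j : ℕ) : ℝ) := h4
            _ = ((n j : ℕ) : ℝ) * (s/(2*m) + sM j + sG j + 1/4) := by ring
        have h6 : (1:ℝ) ≤ s/(2*m) + sM j + sG j + 1/4 := le_of_mul_le_mul_left h5 hν'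
        linarith
      -- disjointness of the shells
      have hdisj : ∀ (j j' : Fin m), (j:ℕ) < (j':ℕ) → ∀ k,
          (k ∈ M j ∨ k ∈ G j) → (k ∈ M j' ∨ k ∈ G j') → False := by
        intro j j' hjj k h1 h2
        have hlow2 : t j < a k := by
          rcases h1 with h | h
          · exact ((hMmem j k).mp h).1
          · exact lt_trans (htu j) ((hGmem j k).mp h).1
        have hup2 : a k ≤ t j := by
          rcases h2 with h | h
          · exact le_trans ((hMmem j' k).mp h).2 (hut j j' hjj)
          · exact ((hGmem j' k).mp h).2 j hjj
        exact absurd hup2 (not_le.mpr hlow2)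
      have honek : ∀ k, (∑ j : Fin m,
          (Set.indicator (M j) A k + Set.indicator (G j) A k)) ≤ A k := by
        intro k
        by_cases hex : ∃ j : Fin m, k ∈ M j ∨ k ∈ G j
        · obtain ⟨j₀, hj₀⟩ := hex
          have hz : ∀ j ∈ Finset.univ, j ≠ j₀ →
              Set.indicator (M j) A k + Set.indicator (G j) A k = 0 := by
            intro j _ hne2
            have hnotMG : ¬ (k ∈ M j ∨ k ∈ G j) := by
              intro hmem
              have hvne : (j:ℕ) ≠ (j₀:ℕ) := fun h => hne2 (Fin.ext h)
              rcases lt_or_gt_of_ne hvne with h | h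
              · exact hdisj j j₀ h k hmem hj₀
              · exact hdisj j₀ j h k hj₀ hmem
            push_neg at hnotMG
            rw [Set.indicator_of_notMem hnotMG.1, Set.indicator_of_notMem hnotMG.2,
              add_zero]
          rw [Finset.sum_eq_single_of_mem j₀ (Finset.mem_univ j₀) hz]
          rcases hj₀ with h | h
          · have hnG : k ∉ G j₀ := fun hG2 =>
              absurd ((hMmem j₀ k).mp h).2 (not_le.mpr ((hGmem j₀ k).mp hG2).1)
            rw [Set.indicator_of_mem h, Set.indicator_of_notMem hnG, add_zero]
          · have hnM : k ∉ M j₀ := fun hM2 =>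
              absurd ((hMmem j₀ k).mp hM2).2 (not_le.mpr ((hGmem j₀ k).mp h).1)
            rw [Set.indicator_of_notMem hnM, Set.indicator_of_mem h, zero_add]
        · push_neg at hex
          have hallz : ∀ j ∈ Finset.univ, (fun j : Fin m =>
              Set.indicator (M j) A k + Set.indicator (G j) A k) j = 0 := by
            intro j _
            have h1 : k ∉ M j := (hex j).1
            have h2 : k ∉ G j := (hex j).2
            show Set.indicator (M j) A k + Set.indicator (G j) A k = 0
            rw [Set.indicator_of_notMem h1, Set.indicator_of_notMem h2, add_zero]
          rw [Finset.sum_eq_zero hallz]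
          exact hA0 k
      -- final contradiction
      have hsMG_sum : ∀ j : Fin m, sM j + sG j
          = ∑' k, (Set.indicator (M j) A k + Set.indicator (G j) A k) :=
        fun j => (Summable.tsum_add (hind_sum _) (hind_sum _)).symm
      have hfin2 : (∑ j : Fin m, (sM j + sG j))
          = ∑' k, ∑ j : Fin m, (Set.indicator (M j) A k + Set.indicator (G j) A k) := by
        rw [Finset.sum_congr rfl (fun j _ => hsMG_sum j)]
        exact (Summable.tsum_finsetSum (fun j _ => ((hind_sum (M j)).add (hind_sum (G j))))).symm
      have hlast : (∑ j : Fin m, (sM j + sG j)) ≤ s := by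
        rw [hfin2]
        apply Summable.tsum_le_tsum honek ?_ hAsum
        exact summable_sum (fun j _ => ((hind_sum (M j)).add (hind_sum (G j))))
      have hhalf : (m:ℝ) * (1/2) ≤ ∑ j : Fin m, (sM j + sG j) := by
        have h1 : (∑ _j : Fin m, (1/2 : ℝ)) ≤ ∑ j : Fin m, (sM j + sG j) :=
          Finset.sum_le_sum (fun j _ => perblock j)
        rw [Finset.sum_const, nsmul_eq_mul, Finset.card_univ, Fintype.card_fin] at h1
        exact h1
      linarith
    rw [hc]
    exact Real.rpow_le_rpow (by positivity) key (by positivity)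
  -- conclude
  have hInf : ((m:ℝ)/2) ^ ((1:ℝ)/p) ≤ sInf (tensorReprVals p D) := le_csInf hne hlow
  have hm2 : (0:ℝ) ≤ (m:ℝ)/2 := by positivity
  have h1 : (((m:ℝ)/2) ^ ((1:ℝ)/p)) ^ p ≤ sInf (tensorReprVals p D) ^ p :=
    Real.rpow_le_rpow (Real.rpow_nonneg hm2 _) hInf (le_of_lt hp0)
  have h2 : (((m:ℝ)/2) ^ ((1:ℝ)/p)) ^ p = (m:ℝ)/2 := by
    rw [← Real.rpow_mul hm2, one_div_mul_cancel (ne_of_gt hp0), Real.rpow_one]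
  rw [h2] at h1
  exact h1
end

section
/- Let 0 < p < 1. Then there exists a sequence μ : ℕ → [0,∞) with ∑_{j≥0} μ_j^{p/(1−p)} < ∞ such that sup_{n≥0} ‖M_n‖_{ℓ∞⊗_pℓ∞} = ∞, where M_n is the (n+1)×(n+1) diagonal matrix with diagonal entries μ_0, …, μ_n. (Hence the space ℓ∞⊗_p^c ℓ∞ does not contain all diagonal matrices whose diagonal lies in ℓ^{p♯}, and consequently ℓ∞⊗_p^c ℓ∞ ≠ 𝔐_p.) -/
open scoped BigOperators

namespace Stmt9


open Filter Finset

lemma supNorm_nonneg {ι : Type*} (x : ι → ℂ) : 0 ≤ supNorm x :=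
  Real.iSup_nonneg fun i => norm_nonneg _

lemma abs_le_supNorm {ι : Type*} {x : ι → ℂ}
    (h : BddAbove (Set.range fun i => ‖x i‖)) (i : ι) :
    ‖x i‖ ≤ supNorm x := le_ciSup h i

lemma supNorm_eq_zero {ι : Type*} {x : ι → ℂ} (hx : ∀ i, x i = 0) : supNorm x = 0 := by
  refine le_antisymm (Real.iSup_le (fun i => by simp [hx i]) le_rfl) (supNorm_nonneg x)

variable {p : ℝ}

lemma summable_rpow_shrink (hp0 : 0 < p) (hp1 : p < 1) {a : ℕ → ℝ} (ha : ∀ n, 0 ≤ a n)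
    (h : Summable fun n => a n ^ p) : Summable a := by
  have h0 : Filter.Tendsto (fun n => a n ^ p) atTop (nhds 0) := h.tendsto_atTop_zero
  have h1 : ∀ᶠ n in atTop, a n ^ p < 1 := h0.eventually_lt_const one_pos
  obtain ⟨N₀, hN₀⟩ := eventually_atTop.mp h1
  have key : ∀ n, N₀ ≤ n → a n ≤ a n ^ p := by
    intro n hn
    rcases eq_or_lt_of_le (ha n) with h' | h'
    · rw [← h', Real.zero_rpow (ne_of_gt hp0)]
    · have ha1 : a n ≤ 1 := by
        by_contra hgt
        push_neg at hgt
        have := (Real.one_lt_rpow_iff_of_pos h').mpr (Or.inl ⟨hgt, hp0⟩)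
        linarith [hN₀ n hn]
      calc a n = a n ^ (1 : ℝ) := (Real.rpow_one _).symm
        _ ≤ a n ^ p := Real.rpow_le_rpow_of_exponent_ge h' ha1 (le_of_lt hp1)
  have h2 : Summable fun n => a (n + N₀) :=
    Summable.of_nonneg_of_le (fun n => ha _) (fun n => key _ (Nat.le_add_left _ _))
      ((summable_nat_add_iff N₀).mpr h)
  exact (summable_nat_add_iff N₀).mp h2


set_option maxHeartbeats 1000000 in
lemma core (hp0 : 0 < p) (hp1 : p < 1) {N : ℕ}
    (μ : Fin N → ℝ) (x y : ℕ → Fin N → ℂ)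
    (hbx : ∀ n, BddAbove (Set.range fun i => ‖x n i‖))
    (hby : ∀ n, BddAbove (Set.range fun i => ‖y n i‖))
    (hsum : ∀ i j, HasSum (fun n => x n i * y n j) (if i = j then (μ i : ℂ) else 0))
    (hA : Summable fun n => supNorm (x n) ^ p * supNorm (y n) ^ p)
    (B : Finset (Fin N)) {s : ℕ} (hs : 0 < s) (hcard : B.card = s)
    {t τ β : ℝ} (ht : 0 < t) (hβ0 : 0 < β) (hββ : β < t / s) (hττ : t / s < τ)
    (hμB : ∀ i ∈ B, μ i = t)
    (hcount : (∑' n, supNorm (x n) ^ p * supNorm (y n) ^ p) < s * τ ^ p / 2) :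
    (s : ℝ) ^ (1 - p) * t ^ p / 8 ≤
        (∑' n, if β < supNorm (x n) * supNorm (y n) ∧ supNorm (x n) * supNorm (y n) ≤ τ
          then (supNorm (x n) * supNorm (y n)) ^ p else 0)
      ∨ t / 8 ≤ ∑' n,
          (if supNorm (x n) * supNorm (y n) ≤ β then supNorm (x n) * supNorm (y n) else 0) := by
  classical
  set a : ℕ → ℝ := fun n => supNorm (x n) * supNorm (y n) with ha_def
  have ha0 : ∀ n, 0 ≤ a n := fun n => mul_nonneg (supNorm_nonneg _) (supNorm_nonneg _)
  have hap : ∀ n, supNorm (x n) ^ p * supNorm (y n) ^ p = a n ^ p := fun n =>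
    (Real.mul_rpow (supNorm_nonneg _) (supNorm_nonneg _)).symm
  have hApsum : Summable (fun n => a n ^ p) := hA.congr hap
  have hAa : Summable a := summable_rpow_shrink hp0 hp1 ha0 hApsum
  set A : ℝ := ∑' n, a n ^ p with hA_def
  have hAeq : (∑' n, supNorm (x n) ^ p * supNorm (y n) ^ p) = A := tsum_congr hap
  rw [hAeq] at hcount
  have hs' : (0 : ℝ) < s := by exact_mod_cast hs
  have hts : 0 < t / s := div_pos ht hs'
  have hτ0 : 0 < τ := lt_trans hts hττ
  -- the finite set of "large" terms
  have hFfin : {n | t / s < a n}.Finite := by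
    have h1 : ∀ᶠ n in atTop, a n < t / s := hAa.tendsto_atTop_zero.eventually_lt_const hts
    obtain ⟨N₀, hN₀⟩ := eventually_atTop.mp h1
    refine Set.Finite.subset (Set.finite_Iio N₀) ?_
    intro n hn
    simp only [Set.mem_setOf_eq] at hn
    by_contra hge
    simp only [Set.mem_Iio, not_lt] at hge
    exact absurd (hN₀ n hge) (not_lt.mpr (le_of_lt hn))
  set F : Finset ℕ := hFfin.toFinset with hF_def
  have hmemF : ∀ n, n ∈ F ↔ t / s < a n := fun n => by simp [hF_def]
  set U : Finset ℕ := F.filter (fun n => a n ≤ τ) with hU_def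
  set wfn : ℕ → ℝ := fun n => if β < a n ∧ a n ≤ τ then a n ^ p else 0 with hwfn_def
  set sfn : ℕ → ℝ := fun n => if a n ≤ β then a n else 0 with hsfn_def
  have hwfn_nonneg : ∀ n, 0 ≤ wfn n := by
    intro n; simp only [hwfn_def]; split
    · exact Real.rpow_nonneg (ha0 n) p
    · exact le_rfl
  have hwfn_le : ∀ n, wfn n ≤ a n ^ p := by
    intro n; simp only [hwfn_def]; split
    · exact le_rfl
    · exact Real.rpow_nonneg (ha0 n) p
  have hsfn_nonneg : ∀ n, 0 ≤ sfn n := by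
    intro n; simp only [hsfn_def]; split
    · exact ha0 n
    · exact le_rfl
  have hsfn_le : ∀ n, sfn n ≤ a n := by
    intro n; simp only [hsfn_def]; split
    · exact le_rfl
    · exact ha0 n
  have hwfn_sum : Summable wfn := Summable.of_nonneg_of_le hwfn_nonneg hwfn_le hApsum
  have hsfn_sum : Summable sfn := Summable.of_nonneg_of_le hsfn_nonneg hsfn_le hAa
  have htp0 : (0 : ℝ) < t ^ p := Real.rpow_pos_of_pos ht p
  have hsp0 : (0 : ℝ) < (s : ℝ) ^ p := Real.rpow_pos_of_pos hs' p
  by_cases hUbig : (s : ℝ) ≤ 4 * U.card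
  · -- many medium terms
    left
    have h1 : ∀ n ∈ U, (t / s) ^ p ≤ wfn n := by
      intro n hn
      have h2 : t / s < a n := (hmemF n).mp (Finset.mem_of_mem_filter n hn)
      have h3 : a n ≤ τ := (Finset.mem_filter.mp hn).2
      have h4 : wfn n = a n ^ p := if_pos ⟨lt_trans hββ h2, h3⟩
      rw [h4]
      exact Real.rpow_le_rpow hts.le h2.le hp0.le
    have h4 : (U.card : ℝ) * (t / s) ^ p ≤ ∑ n ∈ U, wfn n := by
      have := Finset.card_nsmul_le_sum U wfn ((t / s) ^ p) h1
      simpa [nsmul_eq_mul] using this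
    have h5 : ∑ n ∈ U, wfn n ≤ ∑' n, wfn n :=
      Summable.sum_le_tsum U (fun n _ => hwfn_nonneg n) hwfn_sum
    have harith : (s : ℝ) ^ (1 - p) * t ^ p / 8 ≤ (U.card : ℝ) * (t / s) ^ p := by
      have hdiv : (t / s : ℝ) ^ p = t ^ p / (s : ℝ) ^ p := Real.div_rpow ht.le hs'.le p
      have hsp : (s : ℝ) ^ (1 - p) = s / (s : ℝ) ^ p := by
        rw [Real.rpow_sub hs', Real.rpow_one]
      rw [hdiv, hsp]
      have h8 : (s : ℝ) / 4 ≤ U.card := by linarith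
      have e1 : (s : ℝ) / (s : ℝ) ^ p * t ^ p / 8 = t ^ p / (s : ℝ) ^ p * ((s : ℝ) / 8) := by
        ring
      rw [e1]
      have e2 : (U.card : ℝ) * (t ^ p / (s : ℝ) ^ p) = t ^ p / (s : ℝ) ^ p * (U.card : ℝ) := by
        ring
      rw [e2]
      have : (s : ℝ) / 8 ≤ (U.card : ℝ) := by linarith
      exact mul_le_mul_of_nonneg_left this (le_of_lt (div_pos htp0 hsp0))
    calc (s : ℝ) ^ (1 - p) * t ^ p / 8 ≤ (U.card : ℝ) * (t / s) ^ p := harith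
      _ ≤ ∑ n ∈ U, wfn n := h4
      _ ≤ ∑' n, wfn n := h5
  · push_neg at hUbig
    -- subspace construction
    set E' := EuclideanSpace ℂ (Fin N) with hE'_def
    let pii : E' →ₗ[ℂ] (Fin N → ℂ) := (WithLp.linearEquiv 2 ℂ (Fin N → ℂ)).toLinearMap
    have hpii : ∀ u : E', pii u = u := fun u => rfl
    let L1 : E' →ₗ[ℂ] ({ i : Fin N // i ∉ B } → ℂ) :=
      LinearMap.pi (fun i => (LinearMap.proj i.1).comp pii)
    let L2 : E' →ₗ[ℂ] ({ n // n ∈ F } → ℂ) :=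
      LinearMap.pi (fun m => ((∑ j : Fin N, y m.1 j • LinearMap.proj j)).comp pii)
    let L := L1.prod L2
    set W := LinearMap.ker L with hW_def
    have hBcard_le : s ≤ N := by
      have h1 := Finset.card_le_univ B
      rw [hcard] at h1
      simpa using h1
    have hEdim : Module.finrank ℂ E' = N := finrank_euclideanSpace_fin
    have hcompl : Fintype.card { i : Fin N // i ∉ B } = N - s := by
      have h1 := Fintype.card_subtype_compl (fun i : Fin N => i ∈ B)
      rw [Fintype.card_fin] at h1
      rw [show Fintype.card { x : Fin N // x ∈ B } = s from by rw [Fintype.card_coe, hcard]] at h1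
      exact h1
    have hrange_le : Module.finrank ℂ ↥(LinearMap.range L) ≤ (N - s) + F.card := by
      refine le_trans (Submodule.finrank_le _) ?_
      rw [Module.finrank_prod, Module.finrank_pi, Module.finrank_pi, hcompl, Fintype.card_coe]
    have hnull := LinearMap.finrank_range_add_finrank_ker L
    rw [hEdim] at hnull
    set d := Module.finrank ℂ ↥W with hd_def
    have hdN : s ≤ F.card + d := by omega
    -- cardinality bounds
    set H : Finset ℕ := F.filter (fun n => ¬ a n ≤ τ) with hH_def
    have hFUH : U.card + H.card = F.card :=
      Finset.card_filter_add_card_filter_not (fun n => a n ≤ τ)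
    have hHbound : (H.card : ℝ) * τ ^ p ≤ A := by
      have h1 : ∀ n ∈ H, τ ^ p ≤ a n ^ p := by
        intro n hn
        have h2 := (Finset.mem_filter.mp hn).2
        exact Real.rpow_le_rpow hτ0.le (le_of_lt (not_le.mp h2)) hp0.le
      have h2 := Finset.card_nsmul_le_sum H (fun n => a n ^ p) (τ ^ p) h1
      have h3 : ∑ n ∈ H, a n ^ p ≤ A :=
        Summable.sum_le_tsum H (fun n _ => Real.rpow_nonneg (ha0 n) p) hApsum
      simp only [nsmul_eq_mul] at h2
      linarith
    have hτp0 : (0 : ℝ) < τ ^ p := Real.rpow_pos_of_pos hτ0 p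
    have hHlt : (H.card : ℝ) < (s : ℝ) / 2 := by nlinarith
    have hdlow : (s : ℝ) / 4 < (d : ℝ) := by
      have hFc : (F.card : ℝ) = (U.card : ℝ) + H.card := by exact_mod_cast hFUH.symm
      have hdR : (s : ℝ) ≤ (F.card : ℝ) + d := by exact_mod_cast hdN
      linarith
    -- orthonormal basis of W
    let onb := stdOrthonormalBasis ℂ ↥W
    let v : Fin d → E' := fun r => ((onb r : ↥W) : E')
    have hv_orth : Orthonormal ℂ v := by
      rw [orthonormal_iff_ite]
      intro r q
      have h1 := orthonormal_iff_ite.mp onb.orthonormal r q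
      rwa [Submodule.coe_inner] at h1
    have hvW : ∀ r, v r ∈ W := fun r => SetLike.coe_mem (onb r)
    have hv_supp : ∀ (r) (i : Fin N), i ∉ B → v r i = 0 := by
      intro r i hi
      have h1 : L (v r) = 0 := LinearMap.mem_ker.mp (hvW r)
      have h2 : L1 (v r) = 0 := by
        have h3 := congrArg Prod.fst h1
        simpa [L, LinearMap.prod_apply] using h3
      have h3 := congrFun h2 ⟨i, hi⟩
      simpa [L1, LinearMap.pi_apply, hpii] using h3
    have hv_func : ∀ (r) (n), n ∈ F → (∑ j, v r j * y n j) = 0 := by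
      intro r n hn
      have h1 : L (v r) = 0 := LinearMap.mem_ker.mp (hvW r)
      have h2 : L2 (v r) = 0 := by
        have h3 := congrArg Prod.snd h1
        simpa [L, LinearMap.prod_apply] using h3
      have h3 := congrFun h2 ⟨n, hn⟩
      simp only [L2, LinearMap.pi_apply, LinearMap.comp_apply, LinearMap.sum_apply,
        LinearMap.smul_apply, LinearMap.proj_apply, smul_eq_mul, Pi.zero_apply] at h3
      rw [show (∑ j, v r j * y n j) = ∑ j, y n j * (pii (v r)) j from
        Finset.sum_congr rfl (fun j _ => by rw [hpii]; ring)]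
      exact h3
    -- the building blocks
    set al : ℕ → Fin d → ℂ := fun n r => ∑ i, (starRingEnd ℂ) (v r i) * x n i with hal_def
    set be : ℕ → Fin d → ℂ := fun n r => ∑ j, v r j * y n j with hbe_def
    have hHasr : ∀ r, HasSum (fun n => al n r * be n r) ((t : ℝ) : ℂ) := by
      intro r
      have h1 : ∀ ij : Fin N × Fin N,
          HasSum (fun n => ((starRingEnd ℂ) (v r ij.1) * v r ij.2) * (x n ij.1 * y n ij.2))
            (((starRingEnd ℂ) (v r ij.1) * v r ij.2) * (if ij.1 = ij.2 then (μ ij.1 : ℂ) else 0)) :=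
        fun ij => (hsum ij.1 ij.2).mul_left _
      have h2 := hasSum_sum (s := (Finset.univ : Finset (Fin N × Fin N))) (fun ij _ => h1 ij)
      have h3 : (fun n => ∑ ij : Fin N × Fin N,
          ((starRingEnd ℂ) (v r ij.1) * v r ij.2) * (x n ij.1 * y n ij.2))
          = fun n => al n r * be n r := by
        funext n
        rw [hal_def, hbe_def, Finset.sum_mul_sum, Fintype.sum_prod_type]
        exact Finset.sum_congr rfl (fun i _ => Finset.sum_congr rfl (fun j _ => by ring))
      have h4 : (∑ ij : Fin N × Fin N, ((starRingEnd ℂ) (v r ij.1) * v r ij.2) *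
          (if ij.1 = ij.2 then (μ ij.1 : ℂ) else 0)) = ((t : ℝ) : ℂ) := by
        rw [Fintype.sum_prod_type]
        have h5 : ∀ i : Fin N,
            (∑ j : Fin N, ((starRingEnd ℂ) (v r i) * v r j) * (if i = j then (μ i : ℂ) else 0))
            = (starRingEnd ℂ) (v r i) * v r i * (μ i : ℂ) := by
          intro i
          have h5a : ∀ j ∈ Finset.univ, j ≠ i →
              ((starRingEnd ℂ) (v r i) * v r j) * (if i = j then (μ i : ℂ) else 0) = 0 := by
            intro j _ hj
            rw [if_neg (fun h => hj h.symm), mul_zero]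
          rw [Finset.sum_eq_single i h5a (fun h => absurd (Finset.mem_univ i) h)]
          simp
        rw [Finset.sum_congr rfl (fun i _ => h5 i)]
        have h6 : ∀ i : Fin N, (starRingEnd ℂ) (v r i) * v r i * (μ i : ℂ)
            = ((t : ℝ) : ℂ) * ((starRingEnd ℂ) (v r i) * v r i) := by
          intro i
          by_cases hiB : i ∈ B
          · rw [hμB i hiB]; ring
          · rw [hv_supp r i hiB]; simp
        rw [Finset.sum_congr rfl (fun i _ => h6 i), ← Finset.mul_sum]
        have h7 : (∑ i, (starRingEnd ℂ) (v r i) * v r i) = 1 := by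
          have h8 : (inner ℂ (v r) (v r) : ℂ) = ∑ i, (starRingEnd ℂ) (v r i) * v r i := by
            rw [PiLp.inner_apply]
            exact Finset.sum_congr rfl (fun i _ => by rw [RCLike.inner_apply'])
          have h9 : (inner ℂ (v r) (v r) : ℂ) = ((‖v r‖ : ℝ) : ℂ) ^ 2 := inner_self_eq_norm_sq_to_K _
          rw [← h8, h9, hv_orth.1 r]
          norm_num
        rw [h7, mul_one]
      rw [← h3, ← h4]
      exact h2
    have hgsum : HasSum (fun n => ∑ r : Fin d, al n r * be n r) ((d : ℂ) * ((t:ℝ):ℂ)) := by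
      have h1 := hasSum_sum (s := (Finset.univ : Finset (Fin d))) (fun r (_ : r ∈ Finset.univ) => hHasr r)
      have h2 : (∑ _r : Fin d, ((t:ℝ):ℂ)) = (d : ℂ) * ((t:ℝ):ℂ) := by
        rw [Finset.sum_const, Finset.card_univ, Fintype.card_fin, nsmul_eq_mul]
      rwa [h2] at h1
    -- projections onto the block
    set Px : ℕ → E' := fun n =>
      (WithLp.equiv 2 (Fin N → ℂ)).symm (fun i => if i ∈ B then x n i else 0) with hPx_def
    set Py : ℕ → E' := fun n =>
      (WithLp.equiv 2 (Fin N → ℂ)).symm (fun i => if i ∈ B then y n i else 0) with hPy_def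
    have hPx_apply : ∀ n i, Px n i = if i ∈ B then x n i else 0 := fun n i => rfl
    have hPy_apply : ∀ n i, Py n i = if i ∈ B then y n i else 0 := fun n i => rfl
    have hnormP : ∀ (z : ℕ → Fin N → ℂ) (hz : ∀ n, BddAbove (Set.range fun i => ‖z n i‖))
        (P : ℕ → E') (hP : ∀ n i, P n i = if i ∈ B then z n i else 0) (n : ℕ),
        ‖P n‖ ^ 2 ≤ (s : ℝ) * supNorm (z n) ^ 2 := by
      intro z hz P hP n
      rw [EuclideanSpace.norm_eq, Real.sq_sqrt (Finset.sum_nonneg fun i _ => sq_nonneg _)]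
      have h1 : ∀ i : Fin N, ‖P n i‖ ^ 2 ≤ (if i ∈ B then supNorm (z n) ^ 2 else 0) := by
        intro i
        rw [hP]
        by_cases hiB : i ∈ B
        · rw [if_pos hiB, if_pos hiB]
          have h2 := abs_le_supNorm (hz n) i
          exact pow_le_pow_left₀ (norm_nonneg _) h2 2
        · simp [hiB]
      calc ∑ i, ‖P n i‖ ^ 2 ≤ ∑ i, (if i ∈ B then supNorm (z n) ^ 2 else 0) :=
            Finset.sum_le_sum (fun i _ => h1 i)
        _ = ∑ i ∈ Finset.univ ∩ B, supNorm (z n) ^ 2 := Finset.sum_ite_mem _ _ _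
        _ = (s : ℝ) * supNorm (z n) ^ 2 := by
            rw [Finset.univ_inter, Finset.sum_const, hcard, nsmul_eq_mul]
    have hal_inner : ∀ n r, al n r = inner ℂ (v r) (Px n) := by
      intro n r
      rw [hal_def, PiLp.inner_apply]
      refine Finset.sum_congr rfl (fun i _ => ?_)
      rw [RCLike.inner_apply', hPx_apply]
      by_cases hiB : i ∈ B
      · rw [if_pos hiB]
      · rw [if_neg hiB, hv_supp r i hiB]; simp
    set w : Fin d → E' := fun r =>
      (WithLp.equiv 2 (Fin N → ℂ)).symm (fun i => (starRingEnd ℂ) (v r i)) with hw_def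
    have hw_apply : ∀ r i, w r i = (starRingEnd ℂ) (v r i) := fun r i => rfl
    have hw_orth : Orthonormal ℂ w := by
      rw [orthonormal_iff_ite]
      intro r q
      have h1 : (inner ℂ (w r) (w q) : ℂ) = (starRingEnd ℂ) (inner ℂ (v r) (v q) : ℂ) := by
        rw [PiLp.inner_apply, PiLp.inner_apply, map_sum]
        refine Finset.sum_congr rfl (fun i _ => ?_)
        rw [RCLike.inner_apply', RCLike.inner_apply', hw_apply, hw_apply, map_mul]
      rw [h1, orthonormal_iff_ite.mp hv_orth r q]
      split <;> simp
    have hbe_inner : ∀ n r, be n r = inner ℂ (w r) (Py n) := by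
      intro n r
      rw [hbe_def, PiLp.inner_apply]
      refine Finset.sum_congr rfl (fun i _ => ?_)
      rw [RCLike.inner_apply', hw_apply, hPy_apply, Complex.conj_conj]
      by_cases hiB : i ∈ B
      · rw [if_pos hiB]
      · rw [if_neg hiB, hv_supp r i hiB]; simp
    -- pointwise bound
    set cfn : ℕ → ℝ := fun n => if a n ≤ t / s then (s : ℝ) * a n else 0 with hcfn_def
    have hcfn_nonneg : ∀ n, 0 ≤ cfn n := by
      intro n; simp only [hcfn_def]; split
      · exact mul_nonneg hs'.le (ha0 n)
      · exact le_rfl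
    have hcfn_le : ∀ n, cfn n ≤ (s : ℝ) * a n := by
      intro n; simp only [hcfn_def]; split
      · exact le_rfl
      · exact mul_nonneg hs'.le (ha0 n)
    have hcS : Summable cfn := Summable.of_nonneg_of_le hcfn_nonneg hcfn_le (hAa.mul_left _)
    have hgle : ∀ n, ‖∑ r : Fin d, al n r * be n r‖ ≤ cfn n := by
      intro n
      by_cases hn : n ∈ F
      · have h1 : ∀ r, be n r = 0 := fun r => hv_func r n hn
        have h2 : (∑ r : Fin d, al n r * be n r) = 0 := by simp [h1]
        rw [h2, norm_zero]
        exact hcfn_nonneg n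
      · have hnle : a n ≤ t / s := not_lt.mp (fun h => hn ((hmemF n).mpr h))
        have hcfv : cfn n = (s : ℝ) * a n := if_pos hnle
        rw [hcfv]
        have h3 : ‖∑ r : Fin d, al n r * be n r‖ ≤ ∑ r : Fin d, ‖al n r‖ * ‖be n r‖ := by
          calc ‖∑ r : Fin d, al n r * be n r‖ ≤ ∑ r : Fin d, ‖al n r * be n r‖ :=
                norm_sum_le _ _
            _ = ∑ r : Fin d, ‖al n r‖ * ‖be n r‖ := by simp [norm_mul]
        have h4 : (∑ r : Fin d, ‖al n r‖ * ‖be n r‖) ^ 2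
            ≤ (∑ r : Fin d, ‖al n r‖ ^ 2) * (∑ r : Fin d, ‖be n r‖ ^ 2) :=
          Finset.sum_mul_sq_le_sq_mul_sq _ _ _
        have h5 : ∑ r : Fin d, ‖al n r‖ ^ 2 ≤ (s : ℝ) * supNorm (x n) ^ 2 := by
          refine le_trans ?_ (hnormP x hbx Px hPx_apply n)
          rw [Finset.sum_congr rfl (fun r _ => by rw [hal_inner n r])]
          exact hv_orth.sum_inner_products_le (Px n)
        have h6 : ∑ r : Fin d, ‖be n r‖ ^ 2 ≤ (s : ℝ) * supNorm (y n) ^ 2 := by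
          refine le_trans ?_ (hnormP y hby Py hPy_apply n)
          rw [Finset.sum_congr rfl (fun r _ => by rw [hbe_inner n r])]
          exact hw_orth.sum_inner_products_le (Py n)
        have h7 : (0:ℝ) ≤ ∑ r : Fin d, ‖al n r‖ * ‖be n r‖ :=
          Finset.sum_nonneg fun r _ => mul_nonneg (norm_nonneg _) (norm_nonneg _)
        have h8 : (0:ℝ) ≤ ∑ r : Fin d, ‖be n r‖ ^ 2 :=
          Finset.sum_nonneg fun r _ => sq_nonneg _
        have h9 : (0:ℝ) ≤ (s : ℝ) * supNorm (x n) ^ 2 :=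
          mul_nonneg hs'.le (sq_nonneg _)
        have h10 : (∑ r : Fin d, ‖al n r‖ * ‖be n r‖) ^ 2 ≤ ((s:ℝ) * a n) ^ 2 := by
          have h11 : (∑ r : Fin d, ‖al n r‖ ^ 2) * (∑ r : Fin d, ‖be n r‖ ^ 2)
              ≤ ((s : ℝ) * supNorm (x n) ^ 2) * ((s : ℝ) * supNorm (y n) ^ 2) :=
            mul_le_mul h5 h6 h8 h9
          have h12 : ((s : ℝ) * supNorm (x n) ^ 2) * ((s : ℝ) * supNorm (y n) ^ 2)
              = ((s:ℝ) * a n) ^ 2 := by rw [ha_def]; ring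
          linarith
        have h13 : (0:ℝ) ≤ (s:ℝ) * a n := mul_nonneg hs'.le (ha0 n)
        have h14 : (∑ r : Fin d, ‖al n r‖ * ‖be n r‖) ≤ (s:ℝ) * a n := by
          rw [← Real.sqrt_sq h7, ← Real.sqrt_sq h13]
          exact Real.sqrt_le_sqrt h10
        exact le_trans h3 h14
    have hgnorm_sum : Summable (fun n => ‖∑ r : Fin d, al n r * be n r‖) :=
      Summable.of_nonneg_of_le (fun n => norm_nonneg _) hgle hcS
    have htrace : (d : ℝ) * t ≤ ∑' n, cfn n := by
      have h1 : ‖((d : ℂ) * ((t:ℝ):ℂ))‖ = (d : ℝ) * t := by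
        rw [norm_mul, Complex.norm_natCast, Complex.norm_real, Real.norm_eq_abs, abs_of_pos ht]
      calc (d : ℝ) * t = ‖((d : ℂ) * ((t:ℝ):ℂ))‖ := h1.symm
        _ = ‖∑' n, ∑ r : Fin d, al n r * be n r‖ := by rw [hgsum.tsum_eq]
        _ ≤ ∑' n, ‖∑ r : Fin d, al n r * be n r‖ := norm_tsum_le_tsum_norm hgnorm_sum
        _ ≤ ∑' n, cfn n := Summable.tsum_le_tsum hgle hgnorm_sum hcS
    -- split small terms
    have h2main : ∑' n, cfn n
        ≤ (s:ℝ) * ((t/s)^(1-p) * (∑' n, wfn n) + (∑' n, sfn n)) := by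
      have hpt : ∀ n, cfn n ≤ (s:ℝ) * ((t/s)^(1-p) * wfn n) + (s:ℝ) * sfn n := by
        intro n
        by_cases h1' : a n ≤ β
        · have hww : wfn n = 0 := by
            rw [hwfn_def]
            exact if_neg (fun h => absurd h1' (not_le.mpr h.1))
          have hsf : sfn n = a n := if_pos h1'
          have hcf : cfn n = (s:ℝ) * a n := if_pos (le_trans h1' hββ.le)
          rw [hww, hsf, hcf, mul_zero, mul_zero, zero_add]
        · by_cases h2' : a n ≤ t / s
          · have hsf : sfn n = 0 := if_neg h1'
            have hww : wfn n = a n ^ p := if_pos ⟨not_le.mp h1', le_trans h2' hττ.le⟩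
            have hcf : cfn n = (s:ℝ) * a n := if_pos h2'
            rw [hcf, hww, hsf, mul_zero, add_zero]
            have ha' : 0 < a n := lt_trans hβ0 (not_le.mp h1')
            have key : a n ≤ (t/s)^(1-p) * a n ^ p := by
              have e1 : a n = a n ^ p * a n ^ (1-p) := by
                rw [← Real.rpow_add ha']
                norm_num
              have e2 : a n ^ (1-p) ≤ (t/s)^(1-p) :=
                Real.rpow_le_rpow ha'.le h2' (by linarith)
              calc a n = a n ^ p * a n ^ (1-p) := e1
                _ ≤ a n ^ p * (t/s)^(1-p) :=
                    mul_le_mul_of_nonneg_left e2 (Real.rpow_nonneg ha'.le p)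
                _ = (t/s)^(1-p) * a n ^ p := mul_comm _ _
            exact mul_le_mul_of_nonneg_left key hs'.le
          · have hcf : cfn n = 0 := if_neg h2'
            rw [hcf]
            have : (0:ℝ) ≤ (s:ℝ) * ((t/s)^(1-p) * wfn n) + (s:ℝ) * sfn n := by
              have := hwfn_nonneg n
              have := hsfn_nonneg n
              positivity
            exact this
      calc ∑' n, cfn n ≤ ∑' n, ((s:ℝ) * ((t/s)^(1-p) * wfn n) + (s:ℝ) * sfn n) :=
            Summable.tsum_le_tsum hpt hcS (Summable.add ((hwfn_sum.mul_left _).mul_left _) (hsfn_sum.mul_left _))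
        _ = (s:ℝ) * ((t/s)^(1-p) * (∑' n, wfn n) + (∑' n, sfn n)) := by
            rw [Summable.tsum_add ((hwfn_sum.mul_left _).mul_left _) (hsfn_sum.mul_left _),
              tsum_mul_left, tsum_mul_left, tsum_mul_left]
            ring
    have hq0 : (0:ℝ) < (t/s)^(1-p) := Real.rpow_pos_of_pos hts _
    have hWsum0 : 0 ≤ ∑' n, wfn n := tsum_nonneg hwfn_nonneg
    have hSsum0 : 0 ≤ ∑' n, sfn n := tsum_nonneg hsfn_nonneg
    have hfin : t / 4 ≤ (t/s)^(1-p) * (∑' n, wfn n) + (∑' n, sfn n) := by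
      have h3 : (s:ℝ)/4 * t ≤ (d:ℝ) * t := by nlinarith
      have h4 : (d:ℝ) * t ≤ (s:ℝ) * ((t/s)^(1-p) * (∑' n, wfn n) + (∑' n, sfn n)) :=
        le_trans htrace h2main
      nlinarith
    by_cases hSbig : t / 8 ≤ ∑' n, sfn n
    · right; exact hSbig
    · left
      push_neg at hSbig
      have h5 : t/8 ≤ (t/s)^(1-p) * (∑' n, wfn n) := by linarith
      have h7 : (t/8) / ((t/s)^(1-p)) ≤ ∑' n, wfn n := by
        rw [div_le_iff₀ hq0]
        linarith [h5, mul_comm ((t/s)^(1-p)) (∑' n, wfn n)]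
      refine le_trans ?_ h7
      rw [le_div_iff₀ hq0]
      have e1 : t ^ p * t ^ (1-p) = t := by
        rw [← Real.rpow_add ht]; norm_num
      have e2 : (0:ℝ) < (s:ℝ)^(1-p) := Real.rpow_pos_of_pos hs' _
      have e3 : (s:ℝ)^(1-p) * t^p / 8 * ((t/s)^(1-p)) = (t^p * t^(1-p))/8 := by
        rw [Real.div_rpow ht.le hs'.le]
        field_simp
      rw [e3, e1]


variable (p : ℝ)

/-- block weights `γ_k = (k+1)^{p/2-1}` -/
noncomputable def gam (k : ℕ) : ℝ := ((k : ℝ) + 1) ^ (p / 2 - 1)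

/-- block sizes, chosen recursively large enough -/
noncomputable def sseq : ℕ → ℕ
  | 0 => 1
  | k + 1 =>
    sseq k + 1 +
      ⌈(2 * ((k : ℝ) + 2) ^ 2) *
        ((8 * ((k : ℝ) + 2) ^ 2 /
          ((gam p k * ((sseq k : ℝ)) ^ (p - 1)) ^ (1 / p))) ^ (p / (1 - p)))⌉₊

/-- block heights -/
noncomputable def tk (k : ℕ) : ℝ := (gam p k * ((sseq p k : ℝ)) ^ (p - 1)) ^ (1 / p)

/-- block boundaries -/
noncomputable def Nseq : ℕ → ℕ
  | 0 => 0
  | k + 1 => Nseq k + sseq p k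

/-- index of the block containing `j` -/
noncomputable def blockOf (j : ℕ) : ℕ := Nat.findGreatest (fun k => Nseq p k ≤ j) j

/-- the diagonal sequence -/
noncomputable def mu (j : ℕ) : ℝ := tk p (blockOf p j)

noncomputable def Lam (K : ℕ) : ℝ := (∑ k ∈ Finset.Ioc (Nat.sqrt K) K, gam p k) / 8

variable {p}

section basic
variable (hp0 : 0 < p) (hp1 : p < 1)
include hp0 hp1

lemma gam_pos (k : ℕ) : 0 < gam p k :=
  Real.rpow_pos_of_pos (by positivity) _

lemma gam_le_one (k : ℕ) : gam p k ≤ 1 :=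
  Real.rpow_le_one_of_one_le_of_nonpos (by push_cast; linarith) (by linarith)

lemma rpow_anti_base {x y e : ℝ} (hx : 0 < x) (hxy : x ≤ y) (he : e ≤ 0) :
    y ^ e ≤ x ^ e := by
  have hy : 0 < y := lt_of_lt_of_le hx hxy
  rw [show e = -(-e) by ring, Real.rpow_neg hy.le, Real.rpow_neg hx.le]
  have h1 : x ^ (-e) ≤ y ^ (-e) := Real.rpow_le_rpow hx.le hxy (by linarith)
  have h2 : 0 < x ^ (-e) := Real.rpow_pos_of_pos hx _
  exact inv_anti₀ h2 h1

lemma gam_anti {k k' : ℕ} (h : k ≤ k') : gam p k' ≤ gam p k := by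
  unfold gam
  have h1 : ((k : ℝ) + 1) ≤ (k' : ℝ) + 1 := by
    have := (Nat.cast_le (α := ℝ)).mpr h
    linarith
  exact rpow_anti_base hp0 hp1 (by positivity) h1 (by linarith)

lemma sseq_pos (k : ℕ) : 0 < sseq p k := by
  cases k with
  | zero => simp [sseq]
  | succ k => simp only [sseq]; omega

lemma sseq_one_le (k : ℕ) : (1 : ℝ) ≤ (sseq p k : ℝ) := by
  exact_mod_cast sseq_pos hp0 hp1 k

lemma sseq_succ_gt (k : ℕ) : sseq p k < sseq p (k + 1) := by
  simp only [sseq]; omega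

lemma sseq_mono : Monotone (sseq p) :=
  monotone_nat_of_le_succ fun k => (sseq_succ_gt hp0 hp1 k).le

lemma tk_pos (k : ℕ) : 0 < tk p k := by
  apply Real.rpow_pos_of_pos
  have := gam_pos hp0 hp1 (p := p) k
  have h2 : (0:ℝ) < ((sseq p k : ℝ)) ^ (p - 1) :=
    Real.rpow_pos_of_pos (by exact_mod_cast sseq_pos hp0 hp1 k) _
  positivity

lemma tk_le_one (k : ℕ) : tk p k ≤ 1 := by
  apply Real.rpow_le_one _ _ (by positivity)
  · have h2 : (0:ℝ) < ((sseq p k : ℝ)) ^ (p - 1) :=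
      Real.rpow_pos_of_pos (by exact_mod_cast sseq_pos hp0 hp1 k) _
    have := (gam_pos hp0 hp1 (p := p) k).le
    positivity
  · have h1 : ((sseq p k : ℝ)) ^ (p - 1) ≤ 1 :=
      Real.rpow_le_one_of_one_le_of_nonpos (sseq_one_le hp0 hp1 k) (by linarith)
    have h2 := gam_le_one hp0 hp1 (p := p) k
    have h3 := (gam_pos hp0 hp1 (p := p) k).le
    have h4 : (0:ℝ) ≤ ((sseq p k : ℝ)) ^ (p - 1) := by positivity
    nlinarith

lemma tk_rpow_p (k : ℕ) : tk p k ^ p = gam p k * ((sseq p k : ℝ)) ^ (p - 1) := by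
  unfold tk
  have hbase : (0:ℝ) ≤ gam p k * ((sseq p k : ℝ)) ^ (p - 1) := by
    have := (gam_pos hp0 hp1 (p := p) k).le
    have : (0:ℝ) ≤ ((sseq p k : ℝ)) ^ (p - 1) := by positivity
    positivity
  rw [← Real.rpow_mul hbase, one_div, inv_mul_cancel₀ (ne_of_gt hp0), Real.rpow_one]

lemma gam_eq_s_t (k : ℕ) : ((sseq p k : ℝ)) ^ (1 - p) * tk p k ^ p = gam p k := by
  rw [tk_rpow_p hp0 hp1]
  have hs : (0:ℝ) < (sseq p k : ℝ) := by exact_mod_cast sseq_pos hp0 hp1 k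
  rw [show ((sseq p k : ℝ)) ^ (1-p) * (gam p k * ((sseq p k : ℝ)) ^ (p-1))
      = gam p k * (((sseq p k : ℝ)) ^ (1-p) * ((sseq p k : ℝ)) ^ (p-1)) from by ring]
  rw [← Real.rpow_add hs, show (1 - p) + (p - 1) = 0 from by ring, Real.rpow_zero, mul_one]

lemma sseq_succ_ge (k : ℕ) :
    (2 * ((k : ℝ) + 2) ^ 2) * ((8 * ((k : ℝ) + 2) ^ 2 / tk p k) ^ (p / (1 - p)))
      ≤ (sseq p (k + 1) : ℝ) := by
  have h1 : sseq p (k+1) = sseq p k + 1 +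
      ⌈(2 * ((k : ℝ) + 2) ^ 2) *
        ((8 * ((k : ℝ) + 2) ^ 2 /
          ((gam p k * ((sseq p k : ℝ)) ^ (p - 1)) ^ (1 / p))) ^ (p / (1 - p)))⌉₊ := rfl
  rw [h1]
  push_cast
  have h2 := Nat.le_ceil ((2 * ((k : ℝ) + 2) ^ 2) *
      ((8 * ((k : ℝ) + 2) ^ 2 /
        ((gam p k * ((sseq p k : ℝ)) ^ (p - 1)) ^ (1 / p))) ^ (p / (1 - p))))
  have h3 : tk p k = (gam p k * ((sseq p k : ℝ)) ^ (p - 1)) ^ (1 / p) := rfl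
  rw [h3]
  have h4 : (0:ℝ) ≤ (sseq p k : ℝ) + 1 := by positivity
  linarith

lemma Nseq_mono : Monotone (Nseq p) := by
  apply monotone_nat_of_le_succ
  intro k
  simp only [Nseq]
  omega

lemma Nseq_ge (k : ℕ) : k ≤ Nseq p k := by
  induction k with
  | zero => simp [Nseq]
  | succ k ih =>
    have := sseq_pos (p := p) hp0 hp1 k
    simp only [Nseq]
    omega

lemma blockOf_le (j : ℕ) : blockOf p j ≤ j := Nat.findGreatest_le j

lemma blockOf_spec1 (j : ℕ) : Nseq p (blockOf p j) ≤ j := by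
  unfold blockOf
  exact Nat.findGreatest_spec (P := fun k => Nseq p k ≤ j) (m := 0) (n := j)
    (Nat.zero_le j) (Nat.zero_le j)

lemma blockOf_spec2 (j : ℕ) : j < Nseq p (blockOf p j + 1) := by
  by_cases h : blockOf p j + 1 ≤ j
  · have h2 : ¬ ((fun k => Nseq p k ≤ j) (blockOf p j + 1)) :=
      Nat.findGreatest_is_greatest (P := fun k => Nseq p k ≤ j) (n := j)
        (Nat.lt_succ_self _) h
    have h3 : ¬ Nseq p (blockOf p j + 1) ≤ j := h2
    omega
  · push_neg at h
    calc j < blockOf p j + 1 := h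
      _ ≤ Nseq p (blockOf p j + 1) := Nseq_ge hp0 hp1 _

lemma blockOf_eq {k j : ℕ} (h1 : Nseq p k ≤ j) (h2 : j < Nseq p (k + 1)) :
    blockOf p j = k := by
  rcases lt_trichotomy (blockOf p j) k with h | h | h
  · exfalso
    have h3 : blockOf p j + 1 ≤ k := h
    have h4 := Nseq_mono (p := p) hp0 hp1 h3
    have h5 := blockOf_spec2 hp0 hp1 (p := p) j
    omega
  · exact h
  · exfalso
    have h3 : k + 1 ≤ blockOf p j := h
    have h4 := Nseq_mono (p := p) hp0 hp1 h3
    have h5 := blockOf_spec1 hp0 hp1 (p := p) j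
    omega

lemma mu_nonneg (j : ℕ) : 0 ≤ mu p j := (tk_pos hp0 hp1 _).le

lemma mu_on_block {k j : ℕ} (h1 : Nseq p k ≤ j) (h2 : j < Nseq p (k + 1)) :
    mu p j = tk p k := by
  unfold mu
  rw [blockOf_eq hp0 hp1 h1 h2]

lemma tk_psharp (k : ℕ) :
    tk p k ^ (p / (1 - p)) = gam p k ^ (1 / (1 - p)) * ((sseq p k : ℝ))⁻¹ := by
  have hs : (0:ℝ) < (sseq p k : ℝ) := by exact_mod_cast sseq_pos hp0 hp1 k
  have hg := (gam_pos hp0 hp1 (p := p) k).le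
  have hsp : (0:ℝ) ≤ ((sseq p k : ℝ)) ^ (p - 1) := by positivity
  have h1 : tk p k ^ (p / (1 - p)) = (tk p k ^ p) ^ (1 / (1 - p)) := by
    rw [← Real.rpow_mul (tk_pos hp0 hp1 k).le, mul_one_div]
  rw [h1, tk_rpow_p hp0 hp1, Real.mul_rpow hg hsp, ← Real.rpow_mul hs.le]
  congr 1
  have h2 : (p - 1) * (1 / (1 - p)) = -1 := by
    rw [mul_one_div, div_eq_iff (show (1:ℝ) - p ≠ 0 from by linarith)]
    ring
  rw [h2, Real.rpow_neg_one]

lemma mu_summable : Summable fun j => mu p j ^ (p / (1 - p)) := by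
  set r : ℝ := (1 - p / 2) / (1 - p) with hr_def
  have hr : 1 < r := by
    rw [hr_def]
    rw [lt_div_iff₀ (by linarith)]
    linarith
  have hsumG : Summable (fun k : ℕ => ((k : ℝ) + 1) ^ (-r)) := by
    have h1 := Real.summable_one_div_nat_rpow.mpr hr
    have h2 := (summable_nat_add_iff 1).mpr h1
    refine h2.congr fun n => ?_
    push_cast
    rw [Real.rpow_neg (by positivity), one_div]
  have hgamr : ∀ b : ℕ, gam p b ^ (1 / (1 - p)) = ((b : ℝ) + 1) ^ (-r) := by
    intro b
    unfold gam
    rw [← Real.rpow_mul (by positivity)]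
    congr 1
    rw [hr_def, mul_one_div, show p / 2 - 1 = -(1 - p / 2) from by ring, neg_div]
  apply summable_of_sum_range_le
    (c := ∑' k : ℕ, ((k : ℝ) + 1) ^ (-r))
  · intro n
    exact Real.rpow_nonneg (mu_nonneg hp0 hp1 n) _
  · intro M
    have key : ∀ j : ℕ, mu p j ^ (p / (1 - p))
        = gam p (blockOf p j) ^ (1 / (1 - p)) * ((sseq p (blockOf p j) : ℝ))⁻¹ := by
      intro j
      unfold mu
      rw [tk_psharp hp0 hp1]
    set gfun : ℕ → ℝ := fun b => gam p b ^ (1 / (1 - p)) * ((sseq p b : ℝ))⁻¹ with hgfun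
    have hgfun_nonneg : ∀ b, 0 ≤ gfun b := by
      intro b
      have := (gam_pos hp0 hp1 (p := p) b).le
      have : (0:ℝ) ≤ ((sseq p b : ℝ))⁻¹ := by
        have : (0:ℝ) < (sseq p b : ℝ) := by exact_mod_cast sseq_pos hp0 hp1 b
        positivity
      positivity
    calc ∑ j ∈ Finset.range M, mu p j ^ (p / (1 - p))
        = ∑ j ∈ Finset.range M, gfun (blockOf p j) := by
          exact Finset.sum_congr rfl fun j _ => key j
      _ = ∑ b ∈ (Finset.range M).image (blockOf p),
            ((Finset.range M).filter fun j => blockOf p j = b).card • gfun b :=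
          Finset.sum_comp gfun (blockOf p)
      _ ≤ ∑ b ∈ (Finset.range M).image (blockOf p), gam p b ^ (1 / (1 - p)) := by
          apply Finset.sum_le_sum
          intro b _
          rw [nsmul_eq_mul]
          have hcardle : ((Finset.range M).filter fun j => blockOf p j = b).card ≤ sseq p b := by
            have hsub : ((Finset.range M).filter fun j => blockOf p j = b)
                ⊆ Finset.Ico (Nseq p b) (Nseq p b + sseq p b) := by
              intro j hj
              have hbj := (Finset.mem_filter.mp hj).2
              rw [Finset.mem_Ico]
              constructor
              · have := blockOf_spec1 hp0 hp1 (p := p) j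
                rwa [hbj] at this
              · have := blockOf_spec2 hp0 hp1 (p := p) j
                rw [hbj] at this
                simpa [Nseq] using this
            calc ((Finset.range M).filter fun j => blockOf p j = b).card
                ≤ (Finset.Ico (Nseq p b) (Nseq p b + sseq p b)).card :=
                  Finset.card_le_card hsub
              _ = sseq p b := by rw [Nat.card_Ico]; omega
          have hs : (0:ℝ) < (sseq p b : ℝ) := by exact_mod_cast sseq_pos hp0 hp1 b
          have hg : (0:ℝ) ≤ gam p b ^ (1 / (1 - p)) :=
            Real.rpow_nonneg (gam_pos hp0 hp1 (p := p) b).le _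
          calc (((Finset.range M).filter fun j => blockOf p j = b).card : ℝ) * gfun b
              ≤ (sseq p b : ℝ) * gfun b := by
                apply mul_le_mul_of_nonneg_right _ (hgfun_nonneg b)
                exact_mod_cast hcardle
            _ = gam p b ^ (1 / (1 - p)) := by
                rw [hgfun]
                field_simp
      _ = ∑ b ∈ (Finset.range M).image (blockOf p), ((b : ℝ) + 1) ^ (-r) := by
          exact Finset.sum_congr rfl fun b _ => hgamr b
      _ ≤ ∑' k : ℕ, ((k : ℝ) + 1) ^ (-r) := by
          apply Summable.sum_le_tsum
          · intro b _
            positivity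
          · exact hsumG

end basic

section outer
variable {p : ℝ}

lemma rpow_one_div_cancel {z q : ℝ} (hz : 0 ≤ z) (hq : q ≠ 0) : (z ^ (1 / q)) ^ q = z := by
  rw [← Real.rpow_mul hz, one_div, inv_mul_cancel₀ hq, Real.rpow_one]

lemma rpow_cancel_one_div {z q : ℝ} (hz : 0 ≤ z) (hq : q ≠ 0) : (z ^ q) ^ (1 / q) = z := by
  rw [← Real.rpow_mul hz, one_div, mul_inv_cancel₀ hq, Real.rpow_one]

variable (hp0 : 0 < p) (hp1 : p < 1)
include hp0 hp1

lemma Lam_nonneg (K : ℕ) : 0 ≤ Lam p K := by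
  unfold Lam
  have h : (0:ℝ) ≤ ∑ k ∈ Finset.Ioc (Nat.sqrt K) K, gam p k :=
    Finset.sum_nonneg fun k _ => (gam_pos hp0 hp1 (p := p) k).le
  linarith

lemma Lam_le_K (K : ℕ) : Lam p K ≤ (K : ℝ) := by
  unfold Lam
  have h1 : ∑ k ∈ Finset.Ioc (Nat.sqrt K) K, gam p k
      ≤ (Finset.Ioc (Nat.sqrt K) K).card • (1:ℝ) :=
    Finset.sum_le_card_nsmul _ _ _ (fun k _ => gam_le_one hp0 hp1 k)
  rw [nsmul_eq_mul, mul_one] at h1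
  have h2 : ((Finset.Ioc (Nat.sqrt K) K).card : ℝ) ≤ K := by
    rw [Nat.card_Ioc]
    exact_mod_cast Nat.sub_le K _
  have h3 : (0:ℝ) ≤ (K:ℝ) := Nat.cast_nonneg K
  linarith

lemma Lam_lower {K : ℕ} (hK : 16 ≤ K) :
    (1 / 32) * ((K : ℝ) + 1) ^ (p / 2) ≤ Lam p K := by
  unfold Lam
  have hcard : (Finset.Ioc (Nat.sqrt K) K).card = K - Nat.sqrt K := Nat.card_Ioc _ _
  have h1 : (Finset.Ioc (Nat.sqrt K) K).card • gam p K
      ≤ ∑ k ∈ Finset.Ioc (Nat.sqrt K) K, gam p k :=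
    Finset.card_nsmul_le_sum _ _ _ (fun k hk => gam_anti hp0 hp1 (Finset.mem_Ioc.mp hk).2)
  have hs4 : 4 ≤ Nat.sqrt K := Nat.le_sqrt.mpr (by omega)
  have hsq : 2 * Nat.sqrt K ≤ K := by
    have h2 : Nat.sqrt K ^ 2 ≤ K := Nat.sqrt_le' K
    nlinarith
  have hgamK : gam p K = ((K:ℝ)+1) ^ (p/2) / ((K:ℝ)+1) := by
    unfold gam
    rw [Real.rpow_sub (by positivity), Real.rpow_one]
  set X : ℝ := ((K:ℝ)+1) ^ (p/2) with hX_def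
  have hSS0 : (0:ℝ) < X := Real.rpow_pos_of_pos (by positivity) _
  have hcardR : ((K:ℝ) / 2) ≤ ((Finset.Ioc (Nat.sqrt K) K).card : ℝ) := by
    rw [hcard]
    have hsub : ((K - Nat.sqrt K : ℕ) : ℝ) = (K:ℝ) - Nat.sqrt K :=
      Nat.cast_sub (Nat.sqrt_le_self K)
    rw [hsub]
    have h5 : ((Nat.sqrt K : ℝ)) ≤ (K:ℝ)/2 := by
      have h6 := (Nat.cast_le (α := ℝ)).mpr hsq
      push_cast at h6
      linarith
    linarith
  rw [nsmul_eq_mul] at h1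
  have hK1 : (1:ℝ) ≤ (K:ℝ) := by exact_mod_cast (by omega : 1 ≤ K)
  have hgampos := gam_pos hp0 hp1 (p := p) K
  have h7 : ((K:ℝ)/2) * gam p K ≤ ∑ k ∈ Finset.Ioc (Nat.sqrt K) K, gam p k := by
    calc ((K:ℝ)/2) * gam p K ≤ ((Finset.Ioc (Nat.sqrt K) K).card : ℝ) * gam p K :=
          mul_le_mul_of_nonneg_right hcardR hgampos.le
      _ ≤ _ := h1
  have h8 : (1/4) * X ≤ ((K:ℝ)/2) * gam p K := by
    rw [hgamK]
    have hKp : (0:ℝ) < (K:ℝ) + 1 := by positivity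
    have e : ((K:ℝ)/2) * (X / ((K:ℝ)+1)) = X * ((K:ℝ) / (2 * ((K:ℝ)+1))) := by
      field_simp
    rw [e]
    have h9 : (1/4 : ℝ) ≤ (K:ℝ) / (2 * ((K:ℝ)+1)) := by
      rw [div_le_div_iff₀ (by norm_num) (by positivity)]
      linarith
    calc (1/4) * X = X * (1/4) := by ring
      _ ≤ X * ((K:ℝ) / (2*((K:ℝ)+1))) := mul_le_mul_of_nonneg_left h9 hSS0.le
  linarith

set_option maxHeartbeats 1000000 in
lemma main_lb {K NN : ℕ} (hLam1 : 1 ≤ Lam p K)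
    (hNN : Nseq p (K + 1) ≤ NN) {c : ℝ}
    (hc : c ∈ tensorReprVals p fun j k : Fin NN => if j = k then (mu p (j : ℕ) : ℂ) else 0) :
    Lam p K ^ (1 / p) ≤ c := by
  classical
  obtain ⟨x, y, hbx, hby, hsumm, hhs, hceq⟩ := hc
  set a : ℕ → ℝ := fun n => supNorm (x n) * supNorm (y n) with ha_def
  have ha0 : ∀ n, 0 ≤ a n :=
    fun n => mul_nonneg (supNorm_nonneg _) (supNorm_nonneg _)
  have hap : ∀ n, supNorm (x n) ^ p * supNorm (y n) ^ p = a n ^ p := fun n =>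
    (Real.mul_rpow (supNorm_nonneg _) (supNorm_nonneg _)).symm
  have hApsum : Summable (fun n => a n ^ p) := hsumm.congr hap
  set A : ℝ := ∑' n, supNorm (x n) ^ p * supNorm (y n) ^ p with hA_def
  have hAeq : A = ∑' n, a n ^ p := tsum_congr hap
  have hA0 : 0 ≤ A := hAeq ▸ tsum_nonneg (fun n => Real.rpow_nonneg (ha0 n) p)
  suffices hfinal : Lam p K ≤ A by
    rw [hceq]
    exact Real.rpow_le_rpow (by linarith) hfinal (one_div_pos.mpr hp0).le
  by_contra hAc
  push_neg at hAc
  set Λ : ℝ := Lam p K with hΛ_def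
  have hΛpos : (0:ℝ) < Λ := lt_of_lt_of_le one_pos hLam1
  set G := Finset.Ioc (Nat.sqrt K) K with hG_def
  set τf : ℕ → ℝ := fun k => (2 * Λ / (sseq p k : ℝ)) ^ (1 / p) with hτf_def
  set βf : ℕ → ℝ := fun k => (tk p k / (8 * Λ)) ^ (1 / (1 - p)) with hβf_def
  have hsk : ∀ k, (0:ℝ) < (sseq p k : ℝ) := fun k => by exact_mod_cast sseq_pos hp0 hp1 k
  have htkp : ∀ k, 0 < tk p k := fun k => tk_pos hp0 hp1 k
  have hτpos : ∀ k, 0 < τf k := fun k =>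
    Real.rpow_pos_of_pos (div_pos (by linarith) (hsk k)) _
  have hβpos : ∀ k, 0 < βf k := fun k =>
    Real.rpow_pos_of_pos (div_pos (htkp k) (by linarith)) _
  have hgam1 : ∀ k, gam p k ≤ 1 := fun k => gam_le_one hp0 hp1 k
  have hgam0 : ∀ k, 0 < gam p k := fun k => gam_pos hp0 hp1 k
  have h1p : (0:ℝ) < 1 - p := by linarith
  -- threshold inequalities
  have hmτ : ∀ k, tk p k / (sseq p k : ℝ) < τf k := by
    intro k
    have hts : 0 < tk p k / (sseq p k : ℝ) := div_pos (htkp k) (hsk k)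
    have h1 : (tk p k / (sseq p k : ℝ)) ^ p < 2 * Λ / (sseq p k : ℝ) := by
      rw [Real.div_rpow (htkp k).le (hsk k).le]
      rw [div_lt_div_iff₀ (Real.rpow_pos_of_pos (hsk k) p) (hsk k)]
      have e1 : (sseq p k : ℝ) = (sseq p k : ℝ) ^ (1-p) * (sseq p k : ℝ) ^ p := by
        rw [← Real.rpow_add (hsk k), show (1-p) + p = 1 from by ring, Real.rpow_one]
      calc tk p k ^ p * (sseq p k : ℝ)
          = ((sseq p k : ℝ) ^ (1-p) * tk p k ^ p) * (sseq p k : ℝ) ^ p := by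
            nth_rewrite 1 [e1]; ring
        _ = gam p k * (sseq p k : ℝ) ^ p := by rw [gam_eq_s_t hp0 hp1]
        _ < 2 * Λ * (sseq p k : ℝ) ^ p := by
            have h2 := Real.rpow_pos_of_pos (hsk k) p
            have h3 : gam p k < 2 * Λ := by nlinarith [hgam1 k, hLam1]
            exact mul_lt_mul_of_pos_right h3 h2
    have h2 := Real.rpow_lt_rpow (Real.rpow_nonneg hts.le p) h1 (one_div_pos.mpr hp0)
    rwa [rpow_cancel_one_div hts.le hp0.ne'] at h2
  have hβm : ∀ k, βf k < tk p k / (sseq p k : ℝ) := by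
    intro k
    have hts : 0 < tk p k / (sseq p k : ℝ) := div_pos (htkp k) (hsk k)
    have h1 : tk p k / (8 * Λ) < (tk p k / (sseq p k : ℝ)) ^ (1 - p) := by
      rw [Real.div_rpow (htkp k).le (hsk k).le]
      rw [div_lt_div_iff₀ (by linarith) (Real.rpow_pos_of_pos (hsk k) (1-p))]
      have e1 : tk p k = tk p k ^ (1-p) * tk p k ^ p := by
        rw [← Real.rpow_add (htkp k), show (1-p) + p = 1 from by ring, Real.rpow_one]
      calc tk p k * (sseq p k : ℝ) ^ (1-p)
          = tk p k ^ (1-p) * ((sseq p k : ℝ) ^ (1-p) * tk p k ^ p) := by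
            nth_rewrite 1 [e1]; ring
        _ = tk p k ^ (1-p) * gam p k := by rw [gam_eq_s_t hp0 hp1]
        _ < tk p k ^ (1-p) * (8 * Λ) := by
            have h2 : 0 < tk p k ^ (1-p) := Real.rpow_pos_of_pos (htkp k) _
            have h3 : gam p k < 8 * Λ := by nlinarith [hgam1 k, hLam1]
            exact mul_lt_mul_of_pos_left h3 h2
    have h2 := Real.rpow_lt_rpow (div_pos (htkp k) (by linarith)).le h1
      (one_div_pos.mpr h1p)
    rwa [rpow_cancel_one_div hts.le (ne_of_gt h1p)] at h2
  have hΛk : ∀ k ∈ G, Λ ≤ ((k:ℝ) + 2) ^ 2 := by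
    intro k hk
    obtain ⟨hk1, hk2⟩ := Finset.mem_Ioc.mp hk
    have hKk : K < k ^ 2 := Nat.sqrt_lt'.mp hk1
    have h1 : Λ ≤ (K : ℝ) := Lam_le_K hp0 hp1 K
    have h2 : (K:ℝ) < ((k:ℝ)) ^ 2 := by exact_mod_cast hKk
    have h3 : (0:ℝ) ≤ (k:ℝ) := Nat.cast_nonneg k
    nlinarith
  have hchain : ∀ k ∈ G, τf (k + 1) ≤ βf k := by
    intro k hk
    have hrec := sseq_succ_ge hp0 hp1 (p := p) k
    set Λb : ℝ := ((k:ℝ) + 2) ^ 2 with hΛb_def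
    have hΛbpos : (0:ℝ) < Λb := by positivity
    have hΛΛb : Λ ≤ Λb := hΛk k hk
    set z : ℝ := (8 * Λb / tk p k) ^ (p / (1 - p)) with hz_def
    have hz0 : 0 < z := Real.rpow_pos_of_pos (div_pos (by positivity) (htkp k)) _
    have hstep2 : 2 * Λ / (sseq p (k+1) : ℝ) ≤ 1 / z := by
      rw [div_le_div_iff₀ (hsk (k+1)) hz0]
      have h9 : 2 * Λ * z ≤ 2 * Λb * z := by nlinarith
      linarith
    have hinv : 1 / z = (tk p k / (8 * Λb)) ^ (p / (1 - p)) := by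
      rw [show tk p k / (8 * Λb) = (8 * Λb / tk p k)⁻¹ from by rw [inv_div]]
      rw [Real.inv_rpow (div_pos (by positivity) (htkp k)).le, one_div, hz_def]
    have hstep3 : (tk p k / (8 * Λb)) ^ (p / (1 - p))
        ≤ (tk p k / (8 * Λ)) ^ (p / (1 - p)) := by
      apply Real.rpow_le_rpow (div_pos (htkp k) (by positivity)).le ?_
        (div_nonneg hp0.le h1p.le)
      exact div_le_div_of_nonneg_left (htkp k).le (by linarith) (by linarith)
    have h4 : 2 * Λ / (sseq p (k+1) : ℝ) ≤ (tk p k / (8 * Λ)) ^ (p / (1 - p)) := by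
      calc 2 * Λ / (sseq p (k+1) : ℝ) ≤ 1 / z := hstep2
        _ = (tk p k / (8 * Λb)) ^ (p / (1 - p)) := hinv
        _ ≤ _ := hstep3
    have h5 := Real.rpow_le_rpow (div_pos (by linarith) (hsk (k+1))).le h4
      (one_div_pos.mpr hp0).le
    refine le_trans h5 ?_
    rw [← Real.rpow_mul (div_pos (htkp k) (by linarith)).le]
    rw [show p / (1-p) * (1/p) = 1/(1-p) from by
      rw [div_mul_div_comm, mul_one, mul_comm (1-p) p, ← div_div, div_self hp0.ne']]
  have hτanti : ∀ {k k' : ℕ}, k ≤ k' → τf k' ≤ τf k := by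
    intro k k' hkk
    apply Real.rpow_le_rpow (div_pos (by linarith) (hsk k')).le ?_
      (one_div_pos.mpr hp0).le
    apply div_le_div_of_nonneg_left (by linarith) (hsk k) ?_
    exact_mod_cast sseq_mono hp0 hp1 hkk
  set wfn : ℕ → ℕ → ℝ := fun k n =>
    if βf k < a n ∧ a n ≤ τf k then a n ^ p else 0 with hwfn_def
  have hwfn_nonneg : ∀ k n, 0 ≤ wfn k n := by
    intro k n
    simp only [hwfn_def]
    split
    · exact Real.rpow_nonneg (ha0 n) p
    · exact le_rfl
  have hwfn_le : ∀ k n, wfn k n ≤ a n ^ p := by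
    intro k n
    simp only [hwfn_def]
    split
    · exact le_rfl
    · exact Real.rpow_nonneg (ha0 n) p
  have hwfn_sum : ∀ k, Summable (wfn k) := fun k =>
    Summable.of_nonneg_of_le (hwfn_nonneg k) (hwfn_le k) hApsum
  have hcoreL : ∀ k ∈ G, gam p k / 8 ≤ ∑' n, wfn k n := by
    intro k hk
    obtain ⟨hk1, hk2⟩ := Finset.mem_Ioc.mp hk
    have hblock_lt : ∀ m ∈ Finset.Ico (Nseq p k) (Nseq p (k+1)), m < NN := by
      intro m hm
      have h1 := (Finset.mem_Ico.mp hm).2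
      have h2 : Nseq p (k+1) ≤ Nseq p (K+1) := Nseq_mono hp0 hp1 (by omega)
      omega
    have hcardB : ((Finset.Ico (Nseq p k) (Nseq p (k+1))).attachFin hblock_lt).card
        = sseq p k := by
      rw [Finset.card_attachFin, Nat.card_Ico]
      have he : Nseq p (k+1) = Nseq p k + sseq p k := rfl
      omega
    have hμB : ∀ i ∈ (Finset.Ico (Nseq p k) (Nseq p (k+1))).attachFin hblock_lt,
        (fun i : Fin NN => mu p (i : ℕ)) i = tk p k := by
      intro i hi
      rw [Finset.mem_attachFin] at hi
      obtain ⟨h1, h2⟩ := Finset.mem_Ico.mp hi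
      exact mu_on_block hp0 hp1 h1 h2
    have hcount : A < (sseq p k : ℝ) * τf k ^ p / 2 := by
      have hτp : τf k ^ p = 2 * Λ / (sseq p k : ℝ) :=
        rpow_one_div_cancel (div_pos (by linarith) (hsk k)).le hp0.ne'
      rw [hτp]
      have hs0 : (sseq p k : ℝ) ≠ 0 := ne_of_gt (hsk k)
      rw [show (sseq p k : ℝ) * (2 * Λ / (sseq p k : ℝ)) / 2 = Λ from by
        rw [← mul_div_assoc, mul_div_cancel_left₀ _ hs0]; ring]
      exact hAc
    have hdich := core hp0 hp1 (fun i : Fin NN => mu p (i:ℕ)) x y hbx hby hhs hsumm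
      ((Finset.Ico (Nseq p k) (Nseq p (k+1))).attachFin hblock_lt)
      (sseq_pos hp0 hp1 k) hcardB (htkp k) (hβpos k) (hβm k) (hmτ k) hμB hcount
    rcases hdich with hL | hR
    · have hge := gam_eq_s_t hp0 hp1 (p := p) k
      calc gam p k / 8 = (sseq p k : ℝ) ^ (1-p) * tk p k ^ p / 8 := by rw [hge]
        _ ≤ ∑' n, wfn k n := hL
    · exfalso
      have hβq : βf k ^ (1 - p) = tk p k / (8 * Λ) :=
        rpow_one_div_cancel (div_pos (htkp k) (by linarith)).le (ne_of_gt h1p)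
      have h1 : ∀ n, (if a n ≤ βf k then a n else 0) ≤ βf k ^ (1-p) * a n ^ p := by
        intro n
        by_cases hn : a n ≤ βf k
        · rw [if_pos hn]
          rcases eq_or_lt_of_le (ha0 n) with h0 | h0
          · rw [← h0, Real.zero_rpow hp0.ne', mul_zero]
          · have e1 : a n = a n ^ p * a n ^ (1-p) := by
              rw [← Real.rpow_add h0, show p + (1-p) = 1 from by ring, Real.rpow_one]
            have e2 : a n ^ (1-p) ≤ βf k ^ (1-p) :=
              Real.rpow_le_rpow h0.le hn (by linarith)
            have e3 : 0 ≤ a n ^ p := Real.rpow_nonneg h0.le p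
            calc a n = a n ^ p * a n ^ (1-p) := e1
              _ ≤ a n ^ p * βf k ^ (1-p) := mul_le_mul_of_nonneg_left e2 e3
              _ = βf k ^ (1-p) * a n ^ p := mul_comm _ _
        · rw [if_neg hn]
          exact mul_nonneg (Real.rpow_nonneg (hβpos k).le _) (Real.rpow_nonneg (ha0 n) _)
      have hsum_ite : Summable (fun n => if a n ≤ βf k then a n else 0) := by
        apply Summable.of_nonneg_of_le (fun n => ?_) (fun n => ?_)
          (summable_rpow_shrink hp0 hp1 ha0 hApsum)
        · split
          · exact ha0 n
          · exact le_rfl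
        · split
          · exact le_rfl
          · exact ha0 n
      have h2 : (∑' n, if a n ≤ βf k then a n else 0) ≤ βf k ^ (1-p) * A := by
        rw [hAeq]
        calc (∑' n, if a n ≤ βf k then a n else 0)
            ≤ ∑' n, βf k ^ (1-p) * a n ^ p := Summable.tsum_le_tsum h1 hsum_ite (hApsum.mul_left _)
          _ = βf k ^ (1-p) * ∑' n, a n ^ p := tsum_mul_left
      rw [hβq] at h2
      have h3 : tk p k / 8 ≤ tk p k / (8*Λ) * A := le_trans hR h2
      have h4 : Λ ≤ A := by
        rw [show tk p k / (8*Λ) * A = tk p k * A / (8*Λ) from by ring] at h3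
        rw [div_le_div_iff₀ (by norm_num) (by linarith)] at h3
        nlinarith [htkp k]
      exact absurd h4 (not_le.mpr hAc)
  have honew : ∀ n, ∑ k ∈ G, wfn k n ≤ a n ^ p := by
    intro n
    have h1 : ∑ k ∈ G, wfn k n
        = ∑ k ∈ G.filter (fun k => βf k < a n ∧ a n ≤ τf k), a n ^ p := by
      rw [Finset.sum_filter]
    rw [h1, Finset.sum_const, nsmul_eq_mul]
    have h2 : (G.filter (fun k => βf k < a n ∧ a n ≤ τf k)).card ≤ 1 := by
      rw [Finset.card_le_one]
      intro k hk k' hk'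
      obtain ⟨hkG, hkP⟩ := Finset.mem_filter.mp hk
      obtain ⟨hk'G, hk'P⟩ := Finset.mem_filter.mp hk'
      by_contra hne
      rcases Nat.lt_or_ge k k' with hlt | hge
      · have h3 : τf k' ≤ βf k := le_trans (hτanti (by omega)) (hchain k hkG)
        linarith [hkP.1, hk'P.2]
      · have hlt' : k' < k := by omega
        have h3 : τf k ≤ βf k' := le_trans (hτanti (by omega)) (hchain k' hk'G)
        linarith [hk'P.1, hkP.2]
    have h3 : (0:ℝ) ≤ a n ^ p := Real.rpow_nonneg (ha0 n) p
    calc ((G.filter (fun k => βf k < a n ∧ a n ≤ τf k)).card : ℝ) * a n ^ p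
        ≤ 1 * a n ^ p := by
          apply mul_le_mul_of_nonneg_right _ h3
          exact_mod_cast h2
      _ = a n ^ p := one_mul _
  have hfinal2 : Λ ≤ A := by
    have h1 : ∑ k ∈ G, gam p k / 8 ≤ ∑ k ∈ G, ∑' n, wfn k n :=
      Finset.sum_le_sum hcoreL
    have h2 : ∑ k ∈ G, ∑' n, wfn k n = ∑' n, ∑ k ∈ G, wfn k n :=
      (Summable.tsum_finsetSum (fun k _ => hwfn_sum k)).symm
    have h3 : ∑' n, ∑ k ∈ G, wfn k n ≤ ∑' n, a n ^ p :=
      Summable.tsum_le_tsum honew (summable_sum fun k _ => hwfn_sum k) hApsum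
    have h4 : ∑ k ∈ G, gam p k / 8 = Λ := by
      rw [← Finset.sum_div, hΛ_def, hG_def]
      rfl
    rw [hAeq]
    linarith
  exact absurd hfinal2 (not_le.mpr hAc)

end outer

lemma repr_nonempty (p : ℝ) (hp0 : 0 < p) {NN : ℕ} (μ : ℕ → ℝ) :
    (tensorReprVals p fun j k : Fin NN => if j = k then (μ (j : ℕ) : ℂ) else 0).Nonempty := by
  classical
  set x : ℕ → Fin NN → ℂ := fun m i => if (i : ℕ) = m then (μ m : ℂ) else 0 with hx
  set y : ℕ → Fin NN → ℂ := fun m i => if (i : ℕ) = m then 1 else 0 with hy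
  refine ⟨_, x, y, ?_, ?_, ?_, ?_, rfl⟩
  · intro n; exact (Set.finite_range _).bddAbove
  · intro n; exact (Set.finite_range _).bddAbove
  · apply (summable_nat_add_iff NN).mp
    have hz : ∀ m : ℕ, supNorm (x (m + NN)) = 0 := by
      intro m
      apply supNorm_eq_zero
      intro i
      simp only [hx]
      exact if_neg (by have := i.isLt; omega)
    have he : (fun m => supNorm (x (m + NN)) ^ p * supNorm (y (m + NN)) ^ p)
        = fun _ => (0:ℝ) := by
      funext m
      rw [hz m, Real.zero_rpow hp0.ne', zero_mul]
    rw [he]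
    exact summable_zero
  · intro i j
    have hv : ∀ m : ℕ, m ≠ (j : ℕ) → x m i * y m j = 0 := by
      intro m hm
      have hyy : y m j = 0 := by
        simp only [hy]
        exact if_neg (fun h => hm h.symm)
      rw [hyy, mul_zero]
    have h1 := hasSum_single (f := fun m => x m i * y m j) ((j : ℕ)) hv
    have h2 : x ((j : ℕ)) i * y ((j : ℕ)) j = (if i = j then (μ (i : ℕ) : ℂ) else 0) := by
      by_cases hij : i = j
      · subst hij
        simp [hx, hy]
      · have h3 : ((i : ℕ)) ≠ ((j : ℕ)) := fun h => hij (Fin.ext h)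
        simp [hx, hy, h3, hij]
    rwa [h2] at h1

end Stmt9

/-- For `0 < p < 1` there is a nonnegative sequence `μ ∈ ℓ^{p/(1-p)}` such that the
`ℓ∞ ⊗_p ℓ∞` norms of the finite diagonal truncations `M_n = diag(μ_0, …, μ_n)` are
unbounded; hence `ℓ∞ ⊗_p^c ℓ∞ ≠ 𝔐_p`. -/
theorem stmt9 (p : ℝ) (hp0 : 0 < p) (hp1 : p < 1) :
    ∃ μ : ℕ → ℝ, (∀ j, 0 ≤ μ j) ∧
      (Summable fun j => μ j ^ (p / (1 - p))) ∧
      ¬ BddAbove (Set.range fun n : ℕ =>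
        sInf (tensorReprVals p fun j k : Fin (n + 1) =>
          if j = k then (μ j : ℂ) else 0)) := by
  refine ⟨Stmt9.mu p, fun j => Stmt9.mu_nonneg hp0 hp1 j, Stmt9.mu_summable hp0 hp1, ?_⟩
  rintro ⟨C, hC⟩
  have hpne : p ≠ 0 := hp0.ne'
  set C' : ℝ := max C 0 with hC'
  have hC'0 : (0:ℝ) ≤ C' := le_max_right C 0
  set R : ℝ := 32 * max 1 ((C' + 1) ^ p) with hR
  have hmax1 : (1:ℝ) ≤ max 1 ((C' + 1) ^ p) := le_max_left _ _
  have hR1 : (1:ℝ) ≤ R := by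
    rw [hR]; linarith
  have hR0 : (0:ℝ) ≤ R := by linarith
  set K : ℕ := max 16 (⌈R ^ (2 / p)⌉₊) with hK
  have hK16 : 16 ≤ K := le_max_left _ _
  have hKR : R ^ (2 / p) ≤ (K : ℝ) + 1 := by
    have h1 : R ^ (2 / p) ≤ (⌈R ^ (2 / p)⌉₊ : ℝ) := Nat.le_ceil _
    have h2 : ((⌈R ^ (2 / p)⌉₊ : ℕ) : ℝ) ≤ (K : ℝ) := by
      exact_mod_cast le_max_right 16 _
    linarith
  have hRK : R ≤ ((K : ℝ) + 1) ^ (p / 2) := by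
    have e7 : (2 / p) * (p / 2) = 1 := by
      rw [div_mul_div_comm, mul_comm p 2,
        div_self (show (2 * p : ℝ) ≠ 0 from by positivity)]
    have h1 : R = (R ^ (2 / p)) ^ (p / 2) := by
      rw [← Real.rpow_mul hR0, e7, Real.rpow_one]
    rw [h1]
    exact Real.rpow_le_rpow (Real.rpow_nonneg hR0 _) hKR
      (div_nonneg hp0.le (by norm_num))
  have hLam_big : max 1 ((C' + 1) ^ p) ≤ Stmt9.Lam p K := by
    have h1 := Stmt9.Lam_lower hp0 hp1 hK16
    have h3 : (1 / 32 : ℝ) * R = max 1 ((C' + 1) ^ p) := by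
      rw [hR]; ring
    nlinarith [hRK]
  have hLam1 : (1:ℝ) ≤ Stmt9.Lam p K := le_trans (le_max_left _ _) hLam_big
  set n₀ : ℕ := Stmt9.Nseq p (K + 1) - 1 with hn₀
  have hNpos : 1 ≤ Stmt9.Nseq p (K + 1) :=
    le_trans (by omega) (Stmt9.Nseq_ge hp0 hp1 (K + 1))
  have hn₀1 : n₀ + 1 = Stmt9.Nseq p (K + 1) := by omega
  have hval : C' + 1 ≤ sInf (tensorReprVals p fun j k : Fin (n₀ + 1) =>
      if j = k then (Stmt9.mu p (j : ℕ) : ℂ) else 0) := by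
    apply le_csInf (Stmt9.repr_nonempty p hp0 _)
    intro b hb
    have hml := Stmt9.main_lb hp0 hp1 (K := K) (NN := n₀ + 1) hLam1 hn₀1.ge hb
    have h4 : ((C' + 1) ^ p) ≤ Stmt9.Lam p K := le_trans (le_max_right _ _) hLam_big
    have h5 : C' + 1 ≤ Stmt9.Lam p K ^ (1 / p) := by
      have h6 : C' + 1 = ((C' + 1) ^ p) ^ (1 / p) := by
        rw [← Real.rpow_mul (by linarith : (0:ℝ) ≤ C' + 1),
          show p * (1 / p) = 1 from by rw [mul_one_div, div_self hpne], Real.rpow_one]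
      rw [h6]
      exact Real.rpow_le_rpow (Real.rpow_nonneg (by linarith) _) h4
        (one_div_pos.mpr hp0).le
    linarith
  have hmem := hC (Set.mem_range_self n₀)
  have hCC' : C ≤ C' := le_max_left C 0
  have : C' + 1 ≤ C := le_trans hval hmem
  linarith
end
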